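/- arXiv:2210.13158 — 5 statements merged into one kernel-verified Lean document; each statement's English description precedes it below -/
import Mathlib

section
/- If g(z) = z + b_2 z^2 + b_3 z^3 + ... is analytic on the unit disk and starlike (i.e., Re(z g'(z)/g(z)) > 0 for all z in the unit disk), then |b_2^2 - b_3^2| ≤ 13, and this bound is sharp. -/
open Complex Metric Set FormalMultilinearSeries MeasureTheory intervalIntegral Real Filter Topology

lemma myHasFP {c : ℕ → ℂ} {f : ℂ → ℂ}
    (hf : ∀ z ∈ Metric.ball (0:ℂ) 1, HasSum (fun n => c n * z ^ n) (f z)) :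
    HasFPowerSeriesOnBall f (FormalMultilinearSeries.ofScalars ℂ c) 0 1 := by
  constructor
  · apply ENNReal.le_of_forall_nnreal_lt
    intro r hr
    apply FormalMultilinearSeries.le_radius_of_summable_norm
    have hr1 : (r:ℝ) < 1 := by exact_mod_cast hr
    set t : ℝ := ((r:ℝ) + 1) / 2 with ht
    have hrt : (r:ℝ) < t := by rw [ht]; linarith
    have ht1 : t < 1 := by rw [ht]; linarith
    have ht0 : 0 < t := lt_of_le_of_lt r.coe_nonneg hrt
    have hmem : (t:ℂ) ∈ Metric.ball (0:ℂ) 1 := by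
      simp [Complex.norm_real, abs_of_pos ht0, ht1]
    have hsum := ((hf _ hmem).summable).norm
    refine Summable.of_nonneg_of_le ?_ ?_ hsum
    · intro n; positivity
    · intro n
      rw [FormalMultilinearSeries.ofScalars_norm, norm_mul, norm_pow, Complex.norm_real,
        Real.norm_of_nonneg ht0.le]
      gcongr
  · exact one_pos
  · intro y hy
    rw [EMetric.mem_ball, edist_zero_right, ← ENNReal.coe_one, enorm_eq_nnnorm, ENNReal.coe_lt_coe,
      ← NNReal.coe_lt_coe] at hy
    have := hf y (by simpa [dist_eq_norm] using hy)
    rw [zero_add]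
    have e : ∀ n, (FormalMultilinearSeries.ofScalars ℂ c n) (fun _ => y) = c n * y ^ n := fun n => by
      rw [FormalMultilinearSeries.ofScalars_apply_eq, smul_eq_mul]
    simpa only [e] using this

lemma elemInt (k : ℤ) :
    ∫ θ in (0:ℝ)..(2*π), Complex.exp (k * θ * Complex.I)
      = if k = 0 then (2*π : ℂ) else 0 := by
  rcases eq_or_ne k 0 with hk | hk
  · simp [hk]
  · rw [if_neg hk]
    have hc : (k : ℂ) * Complex.I ≠ 0 := by
      simp [Complex.I_ne_zero, Complex.ext_iff]
      exact_mod_cast hk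
    have : ∀ θ : ℝ, Complex.exp ((k:ℂ) * θ * Complex.I)
        = Complex.exp (((k:ℂ) * Complex.I) * θ) := by
      intro θ; ring_nf
    simp_rw [this]
    rw [integral_exp_mul_complex hc]
    have h1 : Complex.exp ((k:ℂ) * Complex.I * ((2*π : ℝ) : ℂ)) = 1 := by
      have := Complex.exp_int_mul_two_pi_mul_I k
      rw [← this]; congr 1; push_cast; ring
    rw [h1]
    simp

lemma circleCoeff {f : ℂ → ℂ} {p : FormalMultilinearSeries ℂ ℂ ℂ} {r : ENNReal}
    (h : HasFPowerSeriesOnBall f p 0 r) {s : ℝ} (hs0 : 0 < s)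
    (hsr : ENNReal.ofReal s < r) (m : ℤ) :
    ∫ θ in (0:ℝ)..(2*π), f (s * Complex.exp (θ * Complex.I)) * Complex.exp (m * θ * Complex.I)
      = ∑' n : ℕ, (p.coeff n * s ^ n) * (if (n:ℤ) + m = 0 then (2*π:ℂ) else 0) := by
  have hsrad : ENNReal.ofReal s < p.radius := lt_of_lt_of_le hsr h.r_le
  have hsum : Summable fun n => ‖p.coeff n‖ * s ^ n := by
    have := p.summable_norm_mul_pow (r := s.toNNReal)
      (by rwa [← ENNReal.ofReal_coe_nnreal, Real.coe_toNNReal _ hs0.le])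
    simpa [FormalMultilinearSeries.norm_apply_eq_norm_coef,
      Real.coe_toNNReal _ hs0.le] using this
  -- pointwise expansion
  have hpt : ∀ θ : ℝ, f (s * Complex.exp (θ * Complex.I)) * Complex.exp (m * θ * Complex.I)
      = ∑' n : ℕ, (p.coeff n * s ^ n) * Complex.exp (((n:ℤ) + m) * θ * Complex.I) := by
    intro θ
    set y : ℂ := s * Complex.exp (θ * Complex.I) with hy
    have hyn : ‖y‖ = s := by
      rw [hy, norm_mul, Complex.norm_real, Real.norm_of_nonneg hs0.le]
      simp [Complex.norm_exp]
    have hmem : y ∈ Metric.eball (0:ℂ) r := by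
      rw [Metric.mem_eball, edist_zero_right, ← ofReal_norm, hyn]
      exact hsr
    have hS := h.hasSum hmem
    rw [zero_add] at hS
    have hS2 : HasSum (fun n => p.coeff n * y ^ n) (f y) := by
      have e : ∀ n, p n (fun _ => y) = p.coeff n * y ^ n := fun n => by
        rw [FormalMultilinearSeries.apply_eq_pow_smul_coeff, smul_eq_mul, mul_comm]
      simpa only [e] using hS
    have := (hS2.mul_right (Complex.exp (m * θ * Complex.I))).tsum_eq
    rw [← this]
    congr 1 with n
    rw [hy, mul_pow, ← Complex.exp_nat_mul]
    push_cast
    have he : Complex.exp (((n:ℂ) + m) * θ * Complex.I)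
        = Complex.exp ((n:ℂ) * (θ * Complex.I)) * Complex.exp ((m:ℂ) * θ * Complex.I) := by
      rw [← Complex.exp_add]; ring_nf
    rw [he]; ring
  simp_rw [hpt]
  rw [intervalIntegral.integral_of_le (by positivity)]
  rw [← MeasureTheory.integral_tsum_of_summable_integral_norm]
  · congr 1 with n
    rw [MeasureTheory.integral_const_mul, ← intervalIntegral.integral_of_le (by positivity)]
    congr 1
    have := elemInt ((n:ℤ) + m)
    push_cast at this ⊢
    rw [this]
  · intro n
    apply Continuous.integrableOn_Ioc
    continuity
  · have hb : ∀ n : ℕ, (∫ θ in Set.Ioc (0:ℝ) (2*π),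
        ‖(p.coeff n * (s:ℂ) ^ n) * Complex.exp (((n:ℤ) + m) * θ * Complex.I)‖)
        = (‖p.coeff n‖ * s ^ n) * (2*π) := by
      intro n
      have : ∀ θ : ℝ, ‖(p.coeff n * (s:ℂ) ^ n) * Complex.exp (((n:ℤ) + m) * θ * Complex.I)‖
          = ‖p.coeff n‖ * s ^ n := by
        intro θ
        rw [norm_mul, norm_mul, norm_pow, Complex.norm_real, Real.norm_of_nonneg hs0.le]
        have : ‖(Complex.exp ((((n:ℤ):ℂ) + m) * θ * Complex.I))‖ = 1 := by
          rw [Complex.norm_exp]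
          have : ((((n:ℤ):ℂ) + m) * θ * Complex.I).re = 0 := by
            simp [Complex.mul_re, Complex.mul_im]
          rw [this, Real.exp_zero]
        rw [this, mul_one]
      simp_rw [this]
      rw [MeasureTheory.setIntegral_const, measureReal_def, Real.volume_Ioc, smul_eq_mul,
        ENNReal.toReal_ofReal (by nlinarith [Real.pi_pos])]
      ring
    simp_rw [hb]
    exact (hsum.mul_right _)

lemma iterDeriv_eq_coeff {f : ℂ → ℂ} {q : FormalMultilinearSeries ℂ ℂ ℂ} {x : ℂ} {r : ENNReal}
    (h : HasFPowerSeriesOnBall f q x r) (n : ℕ) :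
    iteratedDeriv n f x = n.factorial * q.coeff n := by
  have h1 := h.factorial_smul (1:ℂ) n
  rw [iteratedFDeriv_apply_eq_iteratedDeriv_mul_prod] at h1
  simp only [Pi.one_apply, Finset.prod_const_one, one_smul] at h1
  rw [← h1, nsmul_eq_mul]
  rfl

lemma cara {P : ℂ → ℂ} (hd : DifferentiableOn ℂ P (Metric.ball 0 1))
    (hre : ∀ z ∈ Metric.ball (0:ℂ) 1, 0 ≤ (P z).re) (hP0 : P 0 = 1) {n : ℕ} (hn : 0 < n) :
    ‖iteratedDeriv n P 0‖ ≤ 2 * n.factorial := by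
  have key : ∀ s : ℝ, s ∈ Set.Ioo (0:ℝ) 1 → ‖iteratedDeriv n P 0‖ * s ^ n
      ≤ 2 * n.factorial := by
    intro s hs
    obtain ⟨hs0, hs1⟩ := hs
    set t : ℝ := (s + 1) / 2 with htdef
    have hst : s < t := by rw [htdef]; linarith
    have ht1 : t < 1 := by rw [htdef]; linarith
    have ht0 : 0 < t := by linarith
    set rnn : NNReal := t.toNNReal with hrnn
    have hball : Metric.closedBall (0:ℂ) rnn ⊆ Metric.ball (0:ℂ) 1 := by
      intro z hz
      rw [Metric.mem_closedBall] at hz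
      rw [Metric.mem_ball]
      calc dist z 0 ≤ rnn := hz
        _ = t := by rw [hrnn, Real.coe_toNNReal _ ht0.le]
        _ < 1 := ht1
    have hq : HasFPowerSeriesOnBall P (cauchyPowerSeries P 0 rnn) 0 rnn :=
      (hd.mono hball).hasFPowerSeriesOnBall (by
        rw [hrnn]; exact_mod_cast Real.toNNReal_pos.mpr ht0)
    set q := cauchyPowerSeries P 0 (rnn:ℝ) with hqdef
    have hsr : ENNReal.ofReal s < (rnn : ENNReal) := by
      rw [hrnn, ← ENNReal.ofReal_coe_nnreal, Real.coe_toNNReal _ ht0.le]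
      exact ENNReal.ofReal_lt_ofReal_iff ht0 |>.mpr hst
    have hco : iteratedDeriv n P 0 = n.factorial * q.coeff n := iterDeriv_eq_coeff hq n
    set m : ℤ := -(n:ℤ) with hm
    have hcoeff0 : q.coeff 0 = 1 := by
      have h0 := hq.coeff_zero 1
      rw [FormalMultilinearSeries.coeff, h0, hP0]
    have hA := circleCoeff hq hs0 hsr m
    have hB := circleCoeff hq hs0 hsr (n:ℤ)
    have hC := circleCoeff hq hs0 hsr 0
    have hAval : ∫ θ in (0:ℝ)..(2*π),
        P (s * Complex.exp (θ * Complex.I)) * Complex.exp ((m:ℂ) * θ * Complex.I)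
        = 2 * π * (q.coeff n * s ^ n) := by
      rw [hA, tsum_eq_single n ?_]
      · rw [if_pos (by omega)]; ring
      · intro k hk
        rw [if_neg (by omega), mul_zero]
    have hBval : ∫ θ in (0:ℝ)..(2*π),
        P (s * Complex.exp (θ * Complex.I)) * Complex.exp (((n:ℤ)) * θ * Complex.I) = 0 := by
      have hz : ∀ k : ℕ, q.coeff k * (s:ℂ) ^ k * (if (k:ℤ) + (n:ℤ) = 0 then (2*π:ℂ) else 0)
          = 0 := by
        intro k
        rw [if_neg (by omega), mul_zero]
      rw [hB, tsum_congr hz, tsum_zero]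
    have hCval : ∫ θ in (0:ℝ)..(2*π),
        P (s * Complex.exp (θ * Complex.I)) * Complex.exp (((0:ℤ)) * θ * Complex.I)
        = 2 * π := by
      rw [hC, tsum_eq_single 0 ?_]
      · rw [if_pos (by omega), hcoeff0]; simp
      · intro k hk
        rw [if_neg (by omega), mul_zero]
    -- continuity facts
    have hmaps : ∀ θ : ℝ, (s : ℂ) * Complex.exp (θ * Complex.I) ∈ Metric.ball (0:ℂ) 1 := by
      intro θ
      rw [Metric.mem_ball, dist_zero_right, norm_mul, Complex.norm_real,
        Real.norm_of_nonneg hs0.le]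
      simp [Complex.norm_exp]
      exact hs1
    have hcont0 : Continuous fun θ : ℝ => (s:ℂ) * Complex.exp (θ * Complex.I) :=
      continuous_const.mul (Complex.continuous_exp.comp
        (Complex.continuous_ofReal.mul continuous_const))
    have hconte : Continuous fun θ : ℝ => Complex.exp ((m:ℂ) * θ * Complex.I) :=
      Complex.continuous_exp.comp
        ((continuous_const.mul Complex.continuous_ofReal).mul continuous_const)
    have hcontP : Continuous fun θ : ℝ => P ((s:ℂ) * Complex.exp (θ * Complex.I)) := by
      apply (hd.continuousOn).comp_continuous hcont0 hmaps
    have hint1 : IntervalIntegrable (fun θ : ℝ =>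
        P ((s:ℂ) * Complex.exp (θ * Complex.I)) * Complex.exp ((m:ℂ) * θ * Complex.I))
        volume 0 (2*π) := (hcontP.mul hconte).intervalIntegrable _ _
    have hint2 : IntervalIntegrable (fun θ : ℝ =>
        (starRingEnd ℂ) (P ((s:ℂ) * Complex.exp (θ * Complex.I)))
          * Complex.exp ((m:ℂ) * θ * Complex.I))
        volume 0 (2*π) := ((Complex.continuous_conj.comp hcontP).mul hconte).intervalIntegrable _ _
    -- conjugate integral vanishes
    have hconj : ∫ θ in (0:ℝ)..(2*π),
        (starRingEnd ℂ) (P ((s:ℂ) * Complex.exp (θ * Complex.I)))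
          * Complex.exp ((m:ℂ) * θ * Complex.I) = 0 := by
      have hfun : ∀ θ : ℝ, (starRingEnd ℂ) (P ((s:ℂ) * Complex.exp (θ * Complex.I)))
          * Complex.exp ((m:ℂ) * θ * Complex.I)
          = (starRingEnd ℂ) (P ((s:ℂ) * Complex.exp (θ * Complex.I))
            * Complex.exp (((n:ℤ)) * θ * Complex.I)) := by
        intro θ
        rw [map_mul]
        congr 1
        rw [← Complex.exp_conj]
        congr 1
        simp only [map_mul, Complex.conj_I, Complex.conj_ofReal, map_natCast, map_intCast]
        rw [hm]
        push_cast
        ring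
      simp_rw [hfun]
      rw [intervalIntegral.integral_of_le (by positivity), integral_conj,
        ← intervalIntegral.integral_of_le (by positivity), hBval, map_zero]
    -- combine
    have hsum2 : ∫ θ in (0:ℝ)..(2*π),
        (P ((s:ℂ) * Complex.exp (θ * Complex.I))
          + (starRingEnd ℂ) (P ((s:ℂ) * Complex.exp (θ * Complex.I))))
          * Complex.exp ((m:ℂ) * θ * Complex.I) = 2 * π * (q.coeff n * s ^ n) := by
      simp_rw [add_mul]
      rw [intervalIntegral.integral_add hint1 hint2, hAval, hconj, add_zero]
    have hrealint : (∫ θ in (0:ℝ)..(2*π), (P ((s:ℂ) * Complex.exp (θ * Complex.I))).re)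
        = 2 * π := by
      have := Complex.reCLM.intervalIntegral_comp_comm
        (f := fun θ : ℝ => P ((s:ℂ) * Complex.exp (θ * Complex.I)))
        (a := 0) (b := 2*π) (μ := volume) (hcontP.intervalIntegrable _ _)
      have hC2 : ∫ θ in (0:ℝ)..(2*π), P ((s:ℂ) * Complex.exp (θ * Complex.I)) = 2*π := by
        rw [← hCval]
        congr 1 with θ
        simp
      rw [hC2] at this
      simpa using this
    -- norm bound
    have hnorm : ‖(2 * π * (q.coeff n * (s:ℂ) ^ n) : ℂ)‖ ≤ 4 * π := by
      rw [← hsum2]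
      calc ‖∫ θ in (0:ℝ)..(2*π), (P ((s:ℂ) * Complex.exp (θ * Complex.I))
          + (starRingEnd ℂ) (P ((s:ℂ) * Complex.exp (θ * Complex.I))))
          * Complex.exp ((m:ℂ) * θ * Complex.I)‖
          ≤ ∫ θ in (0:ℝ)..(2*π), ‖(P ((s:ℂ) * Complex.exp (θ * Complex.I))
          + (starRingEnd ℂ) (P ((s:ℂ) * Complex.exp (θ * Complex.I))))
          * Complex.exp ((m:ℂ) * θ * Complex.I)‖ :=
            intervalIntegral.norm_integral_le_integral_norm (by positivity)
        _ = ∫ θ in (0:ℝ)..(2*π), 2 * (P ((s:ℂ) * Complex.exp (θ * Complex.I))).re := by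
            congr 1 with θ
            have h1 : ‖Complex.exp ((m:ℂ) * θ * Complex.I)‖ = 1 := by
              rw [Complex.norm_exp]
              have : ((m:ℂ) * θ * Complex.I).re = 0 := by
                simp [Complex.mul_re, Complex.mul_im]
              rw [this, Real.exp_zero]
            rw [Complex.add_conj, norm_mul, h1, mul_one, Complex.norm_real,
              Real.norm_of_nonneg (mul_nonneg (by norm_num) (hre _ (hmaps θ)))]
        _ = 2 * (2 * π) := by
            rw [intervalIntegral.integral_const_mul, hrealint]
        _ = 4 * π := by ring
    rw [hco]
    have hq2 : ‖q.coeff n‖ * s ^ n ≤ 2 := by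
      have hpi : (0:ℝ) < π := Real.pi_pos
      have : ‖(2 * π * (q.coeff n * (s:ℂ) ^ n) : ℂ)‖
          = 2 * π * (‖q.coeff n‖ * s ^ n) := by
        simp only [norm_mul, norm_pow, Complex.norm_two,
          Complex.norm_real, Real.norm_eq_abs, _root_.abs_of_nonneg hpi.le, _root_.abs_of_nonneg hs0.le]
      nlinarith [hnorm, this]
    calc ‖(n.factorial : ℂ) * q.coeff n‖ * s ^ n
        = n.factorial * (‖q.coeff n‖ * s ^ n) := by
          rw [norm_mul]
          simp [Complex.norm_natCast]
          ring
      _ ≤ n.factorial * 2 := by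
          apply mul_le_mul_of_nonneg_left hq2 (by positivity)
      _ = 2 * n.factorial := by ring
  -- limit s → 1
  have hne : (𝓝[Set.Ioo (0:ℝ) 1] 1).NeBot := by
    apply mem_closure_iff_nhdsWithin_neBot.mp
    rw [closure_Ioo (by norm_num : (0:ℝ) ≠ 1)]
    exact ⟨by norm_num, le_refl 1⟩
  have htend : Tendsto (fun s : ℝ => ‖iteratedDeriv n P 0‖ * s ^ n)
      (𝓝[Set.Ioo (0:ℝ) 1] 1) (𝓝 (‖iteratedDeriv n P 0‖ * 1 ^ n)) := by
    apply Tendsto.mono_left _ nhdsWithin_le_nhds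
    exact (continuous_const.mul (continuous_pow n)).tendsto 1
  have := le_of_tendsto htend (eventually_nhdsWithin_of_forall key)
  simpa using this

theorem bound_part (g : ℂ → ℂ) (b : ℕ → ℂ)
    (hb0 : b 0 = 0) (hb1 : b 1 = 1)
    (hsum : ∀ z ∈ Metric.ball (0:ℂ) 1, HasSum (fun n => b n * z ^ n) (g z))
    (hinj : Set.InjOn g (Metric.ball (0:ℂ) 1))
    (hre : ∀ z ∈ Metric.ball (0:ℂ) 1, z ≠ 0 → 0 < (z * deriv g z / g z).re) :
    ‖b 2 ^ 2 - b 3 ^ 2‖ ≤ 13 := by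
  have h0mem : (0:ℂ) ∈ Metric.ball (0:ℂ) 1 := by simp
  -- shifted sums
  have hshift : ∀ z ∈ Metric.ball (0:ℂ) 1,
      HasSum (fun n => b (n+1) * z ^ (n+1)) (g z) := by
    intro z hz
    have h1 := hsum z hz
    refine (hasSum_nat_add_iff (f := fun n => b n * z ^ n) 1).mpr ?_
    simpa [hb0] using h1
  set h : ℂ → ℂ := fun z => ∑' n : ℕ, b (n+1) * z ^ n with hdef
  have hH : ∀ z ∈ Metric.ball (0:ℂ) 1, HasSum (fun n => b (n+1) * z ^ n) (h z) := by
    intro z hz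
    rcases eq_or_ne z 0 with rfl | hz0
    · have : HasSum (fun n : ℕ => b (n+1) * (0:ℂ) ^ n) (b 1) := by
        convert hasSum_single (f := fun n : ℕ => b (n+1) * (0:ℂ) ^ n) 0 ?_ using 1
        · simp
        · intro k hk
          simp [zero_pow hk]
      exact this.summable.hasSum
    · have h2 := (hshift z hz).mul_right z⁻¹
      have h3 : (fun n => b (n+1) * z ^ (n+1) * z⁻¹) = fun n => b (n+1) * z ^ n := by
        funext n
        rw [pow_succ, mul_assoc, mul_assoc, mul_inv_cancel₀ hz0, mul_one]
      rw [h3] at h2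
      exact h2.summable.hasSum
  have hgz : ∀ z ∈ Metric.ball (0:ℂ) 1, g z = z * h z := by
    intro z hz
    rcases eq_or_ne z 0 with rfl | hz0
    · have h1 := hsum 0 h0mem
      have h2 : HasSum (fun n : ℕ => b n * (0:ℂ) ^ n) 0 := by
        convert hasSum_single (f := fun n : ℕ => b n * (0:ℂ) ^ n) 0 ?_ using 1
        · simp [hb0]
        · intro k hk
          simp [zero_pow hk]
      rw [h1.unique h2]
      ring
    · have h2 := (hH z hz).mul_left z
      have h3 := hshift z hz
      have h4 : (fun n => z * (b (n+1) * z ^ n)) = fun n => b (n+1) * z ^ (n+1) := by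
        funext n; rw [pow_succ]; ring
      rw [h4] at h2
      exact (h3.unique h2)
  have hFP : HasFPowerSeriesOnBall h
      (FormalMultilinearSeries.ofScalars ℂ (fun n => b (n+1))) 0 1 := myHasFP hH
  have hcoeff : ∀ n : ℕ, (FormalMultilinearSeries.ofScalars ℂ (fun n => b (n+1))).coeff n
      = b (n+1) := by
    intro n
    rw [FormalMultilinearSeries.coeff]
    have := FormalMultilinearSeries.ofScalars_apply_eq (c := fun n => b (n+1)) (1:ℂ) n
    simpa using this
  have hh0 : h 0 = 1 := by
    have := (hH 0 h0mem)
    have h2 : HasSum (fun n : ℕ => b (n+1) * (0:ℂ) ^ n) (b 1) := by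
      convert hasSum_single (f := fun n : ℕ => b (n+1) * (0:ℂ) ^ n) 0 ?_ using 1
      · simp
      · intro k hk
        simp [zero_pow hk]
    rw [this.unique h2, hb1]
  have hana : AnalyticOnNhd ℂ h (Metric.ball (0:ℂ) 1) := by
    intro z hz
    apply hFP.analyticAt_of_mem
    have he : Metric.eball (0:ℂ) 1 = Metric.ball (0:ℂ) 1 := by
      rw [← Metric.emetric_ball (x := (0:ℂ)) (ε := 1)]
      norm_num
    rwa [he]
  have hne : ∀ z ∈ Metric.ball (0:ℂ) 1, h z ≠ 0 := by
    intro z hz hzero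
    rcases eq_or_ne z 0 with rfl | hz0
    · rw [hh0] at hzero; exact one_ne_zero hzero
    · have : g z = g 0 := by
        rw [hgz z hz, hgz 0 h0mem, hzero]
        ring
      exact hz0 (hinj hz h0mem this)
  set P : ℂ → ℂ := fun z => 1 + z * deriv h z / h z with hPdef
  have hPana : AnalyticOnNhd ℂ P (Metric.ball (0:ℂ) 1) := by
    apply AnalyticOnNhd.add analyticOnNhd_const
    exact (analyticOnNhd_id.mul hana.deriv).div hana hne
  have hP0 : P 0 = 1 := by simp [hPdef]
  have hPre : ∀ z ∈ Metric.ball (0:ℂ) 1, 0 ≤ (P z).re := by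
    intro z hz
    rcases eq_or_ne z 0 with rfl | hz0
    · rw [hP0]; norm_num
    · have hder : deriv g z = h z + z * deriv h z := by
        have hev : g =ᶠ[𝓝 z] fun w => w * h w := by
          filter_upwards [isOpen_ball.mem_nhds hz] with w hw
          exact hgz w hw
        rw [hev.deriv_eq]
        rw [deriv_fun_mul differentiableAt_fun_id (hana z hz).differentiableAt]
        simp
      have hPeq : P z = z * deriv g z / g z := by
        rw [hder, hgz z hz, hPdef]
        field_simp [hne z hz]
      rw [hPeq]
      exact (hre z hz hz0).le
  -- Caratheodory coefficients
  set c1 : ℂ := deriv P 0 with hc1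
  set c2 : ℂ := deriv (deriv P) 0 with hc2
  have hb2c : ‖c1‖ ≤ 2 := by
    have := cara hPana.differentiableOn hPre hP0 (n := 1) one_pos
    simpa [iteratedDeriv_one] using this
  have hb3c : ‖c2‖ ≤ 4 := by
    have := cara hPana.differentiableOn hPre hP0 (n := 2) two_pos
    rw [iteratedDeriv_succ, iteratedDeriv_one] at this
    norm_num at this
    exact this
  -- coefficients of h
  have hh1 : deriv h 0 = b 2 := by
    have := iterDeriv_eq_coeff hFP 1
    rw [iteratedDeriv_one, hcoeff 1] at this
    simpa using this
  have hh2 : deriv (deriv h) 0 = 2 * b 3 := by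
    have := iterDeriv_eq_coeff hFP 2
    rw [iteratedDeriv_succ, iteratedDeriv_one, hcoeff 2] at this
    rw [this]
    norm_num
  -- identity L = R near 0
  have hLR : ∀ z ∈ Metric.ball (0:ℂ) 1, z * deriv h z = (P z - 1) * h z := by
    intro z hz
    rw [hPdef]
    field_simp [hne z hz]
    ring
  have hball_nhds : Metric.ball (0:ℂ) 1 ∈ 𝓝 (0:ℂ) := isOpen_ball.mem_nhds h0mem
  have hev : (fun z => z * deriv h z) =ᶠ[𝓝 (0:ℂ)] fun z => (P z - 1) * h z := by
    filter_upwards [hball_nhds] with w hw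
    exact hLR w hw
  -- first derivatives
  have hdL : ∀ z ∈ Metric.ball (0:ℂ) 1,
      deriv (fun z => z * deriv h z) z = deriv h z + z * deriv (deriv h) z := by
    intro z hz
    rw [deriv_fun_mul differentiableAt_fun_id (hana.deriv z hz).differentiableAt]
    simp
  have hdR : ∀ z ∈ Metric.ball (0:ℂ) 1,
      deriv (fun z => (P z - 1) * h z) z
        = deriv P z * h z + (P z - 1) * deriv h z := by
    intro z hz
    rw [deriv_fun_mul ((hPana z hz).differentiableAt.sub_const 1) (hana z hz).differentiableAt]
    rw [deriv_sub_const]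
  have heq1 : deriv h 0 + 0 * deriv (deriv h) 0 = deriv P 0 * h 0 + (P 0 - 1) * deriv h 0 := by
    rw [← hdL 0 h0mem, ← hdR 0 h0mem]
    exact hev.deriv_eq
  have hb2 : b 2 = c1 := by
    rw [← hh1, hc1]
    have := heq1
    rw [hh0, hP0] at this
    simpa using this
  -- second derivatives
  have hev2 : deriv (fun z => z * deriv h z) =ᶠ[𝓝 (0:ℂ)]
      fun z => deriv h z + z * deriv (deriv h) z := by
    filter_upwards [hball_nhds] with w hw
    exact hdL w hw
  have hev3 : deriv (fun z => (P z - 1) * h z) =ᶠ[𝓝 (0:ℂ)]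
      fun z => deriv P z * h z + (P z - 1) * deriv h z := by
    filter_upwards [hball_nhds] with w hw
    exact hdR w hw
  have hd2L : deriv (deriv (fun z => z * deriv h z)) 0
      = 2 * deriv (deriv h) 0 := by
    rw [hev2.deriv_eq]
    rw [deriv_fun_add (hana.deriv 0 h0mem).differentiableAt
      (differentiableAt_fun_id.fun_mul (hana.deriv.deriv 0 h0mem).differentiableAt)]
    rw [deriv_fun_mul differentiableAt_fun_id (hana.deriv.deriv 0 h0mem).differentiableAt]
    simp
    ring
  have hd2R : deriv (deriv (fun z => (P z - 1) * h z)) 0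
      = c2 * h 0 + 2 * (c1 * deriv h 0) + (P 0 - 1) * deriv (deriv h) 0 := by
    rw [hev3.deriv_eq]
    rw [deriv_fun_add ((hPana.deriv 0 h0mem).differentiableAt.fun_mul (hana 0 h0mem).differentiableAt)
      (((hPana 0 h0mem).differentiableAt.sub_const 1).fun_mul (hana.deriv 0 h0mem).differentiableAt)]
    rw [deriv_fun_mul (hPana.deriv 0 h0mem).differentiableAt (hana 0 h0mem).differentiableAt]
    rw [deriv_fun_mul ((hPana 0 h0mem).differentiableAt.sub_const 1) (hana.deriv 0 h0mem).differentiableAt]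
    rw [deriv_sub_const]
    ring
  have heq2 : 2 * deriv (deriv h) 0 = c2 * h 0 + 2 * (c1 * deriv h 0) + (P 0 - 1) * deriv (deriv h) 0 := by
    rw [← hd2L, ← hd2R]
    exact (hev.deriv.deriv_eq)
  have hb3 : 4 * b 3 = c2 + 2 * c1 ^ 2 := by
    rw [hh2, hh0, hP0, hh1, hb2] at heq2
    linear_combination heq2
  -- final bound
  have habs2 : ‖b 2‖ ≤ 2 := by
    rw [hb2]; exact hb2c
  have habs3 : ‖b 3‖ ≤ 3 := by
    have h4 : ‖4 * b 3‖ ≤ 12 := by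
      rw [hb3]
      calc ‖c2 + 2 * c1 ^ 2‖ ≤ ‖c2‖ + ‖2 * c1 ^ 2‖ :=
            norm_add_le _ _
        _ ≤ 4 + 2 * 2^2 := by
            rw [norm_mul, norm_pow]
            have : ‖(2:ℂ)‖ = 2 := by norm_num
            rw [this]
            have h1 : ‖c1‖ ≤ 2 := hb2c
            have h2 : ‖c2‖ ≤ 4 := hb3c
            nlinarith [norm_nonneg c1]
        _ = 12 := by norm_num
    rw [norm_mul] at h4
    have : ‖(4:ℂ)‖ = 4 := by norm_num
    rw [this] at h4
    linarith
  calc ‖b 2 ^ 2 - b 3 ^ 2‖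
      ≤ ‖b 2‖ ^ 2 + ‖b 3‖ ^ 2 := by
        have hns := norm_sub_le (b 2 ^ 2) (b 3 ^ 2)
        rw [norm_pow, norm_pow] at hns
        exact hns
    _ ≤ 2^2 + 3^2 := by
        gcongr <;> first | exact norm_nonneg _ | assumption
    _ = 13 := by norm_num

theorem sharp_part : (∃ (g : ℂ → ℂ) (b : ℕ → ℂ),
        b 0 = 0 ∧
        b 1 = 1 ∧
        (∀ z ∈ Metric.ball (0:ℂ) 1, HasSum (fun n => b n * z ^ n) (g z)) ∧
        Set.InjOn g (Metric.ball (0:ℂ) 1) ∧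
        (∀ z ∈ Metric.ball (0:ℂ) 1, z ≠ 0 → 0 < (z * deriv g z / g z).re) ∧
        ‖b 2 ^ 2 - b 3 ^ 2‖ = 13) := by
  refine ⟨fun z => z / (1 - Complex.I * z)^2, fun n => (n : ℂ) * Complex.I^(n-1), by simp, by simp, ?_, ?_, ?_, ?_⟩
  · -- HasSum
    intro z hz
    rw [mem_ball_zero_iff] at hz
    have hw : ‖Complex.I * z‖ < 1 := by
      rw [norm_mul, Complex.norm_I, one_mul]
      exact hz
    have hgeom := hasSum_coe_mul_geometric_of_norm_lt_one hw
    have h2 := hgeom.mul_right (-Complex.I)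
    have h3 : (fun n : ℕ => (n:ℂ) * (Complex.I*z)^n * (-Complex.I)) = fun n : ℕ => (n:ℂ) * Complex.I^(n-1) * z^n := by
      funext n
      cases n with
      | zero => simp
      | succ k =>
        simp only [Nat.add_sub_cancel]
        rw [mul_pow, pow_succ Complex.I k]
        ring_nf
        rw [Complex.I_sq]
        ring
    rw [h3] at h2
    have hne : (1 - Complex.I*z) ≠ 0 := by
      intro hcon
      have : Complex.I * z = 1 := by linear_combination -hcon
      have := congrArg (‖·‖) this
      rw [norm_mul, Complex.norm_I, one_mul, norm_one] at this
      linarith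
    have hv : z / (1 - Complex.I*z)^2 = Complex.I*z / (1 - Complex.I*z)^2 * -Complex.I := by
      rw [div_mul_eq_mul_div]
      congr 1
      linear_combination z * Complex.I_sq
    rw [← hv] at h2
    exact h2
  · -- InjOn
    intro z1 hz1 z2 hz2 heq
    rw [mem_ball_zero_iff] at hz1 hz2
    have hne : ∀ z : ℂ, ‖z‖ < 1 → (1 - Complex.I*z) ≠ 0 := by
      intro z hz hcon
      have : Complex.I * z = 1 := by linear_combination -hcon
      have := congrArg (‖·‖) this
      rw [norm_mul, Complex.norm_I, one_mul, norm_one] at this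
      linarith
    have h1 := hne z1 hz1
    have h2 := hne z2 hz2
    rw [div_eq_div_iff (pow_ne_zero 2 h1) (pow_ne_zero 2 h2)] at heq
    have hfac : (z1 - z2) * (1 + z1 * z2) = 0 := by linear_combination heq + (z1^2*z2 - z1*z2^2) * Complex.I_sq
    rcases mul_eq_zero.mp hfac with h | h
    · exact sub_eq_zero.mp h
    · exfalso
      have : z1 * z2 = -1 := by linear_combination h
      have habs := congrArg (‖·‖) this
      rw [norm_mul] at habs
      simp at habs
      nlinarith [norm_nonneg z1, norm_nonneg z2]
  · -- Re positive
    intro z hz hz0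
    rw [mem_ball_zero_iff] at hz
    have hne : (1 - Complex.I*z) ≠ 0 := by
      intro hcon
      have : Complex.I * z = 1 := by linear_combination -hcon
      have := congrArg (‖·‖) this
      rw [norm_mul, Complex.norm_I, one_mul, norm_one] at this
      linarith
    -- derivative
    have hc : HasDerivAt (fun z : ℂ => 1 - Complex.I * z) (-Complex.I) z := by
      simpa using ((hasDerivAt_id z).const_mul Complex.I).const_sub 1
    have hv : HasDerivAt (fun z : ℂ => (1 - Complex.I * z)^2) (2 * (1 - Complex.I*z)^1 * (-Complex.I)) z := hc.pow 2
    have hg : HasDerivAt (fun z : ℂ => z / (1 - Complex.I * z)^2)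
        ((1 * (1 - Complex.I*z)^2 - z * (2 * (1 - Complex.I*z)^1 * (-Complex.I))) / ((1 - Complex.I*z)^2)^2) z :=
      (hasDerivAt_id z).div hv (pow_ne_zero 2 hne)
    rw [hg.deriv]
    have hval : z * ((1 * (1 - Complex.I*z)^2 - z * (2 * (1 - Complex.I*z)^1 * (-Complex.I))) / ((1 - Complex.I*z)^2)^2)
        / (z / (1 - Complex.I*z)^2) = (1 + Complex.I*z)/(1 - Complex.I*z) := by
      field_simp
      ring
    rw [hval]
    rw [Complex.div_re, ← add_div]
    have hnsq : 0 < Complex.normSq (1 - Complex.I*z) := Complex.normSq_pos.mpr hne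
    apply div_pos _ hnsq
    have hlt : Complex.normSq (Complex.I * z) < 1 := by
      rw [Complex.normSq_eq_norm_sq]
      rw [norm_mul, Complex.norm_I, one_mul]
      nlinarith [norm_nonneg z]
    have hcalc : (1 + Complex.I*z).re * (1 - Complex.I*z).re + (1 + Complex.I*z).im * (1 - Complex.I*z).im
        = 1 - Complex.normSq (Complex.I*z) := by
      simp [Complex.normSq_apply, Complex.add_re, Complex.add_im, Complex.sub_re,
        Complex.sub_im, Complex.mul_re, Complex.mul_im]
      ring
    rw [hcalc]
    linarith
  · -- value
    norm_num
    rw [mul_pow, Complex.I_sq]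
    have he : (2:ℂ)^2 * (-1) - 9 = -13 := by norm_num
    rw [he]
    norm_num

theorem stmt_0 :
    (∀ (g : ℂ → ℂ) (b : ℕ → ℂ),
        b 0 = 0 →
        b 1 = 1 →
        (∀ z ∈ Metric.ball (0:ℂ) 1, HasSum (fun n => b n * z ^ n) (g z)) →
        Set.InjOn g (Metric.ball (0:ℂ) 1) →
        (∀ z ∈ Metric.ball (0:ℂ) 1, z ≠ 0 → 0 < (z * deriv g z / g z).re) →
        ‖b 2 ^ 2 - b 3 ^ 2‖ ≤ 13) ∧
    (∃ (g : ℂ → ℂ) (b : ℕ → ℂ),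
        b 0 = 0 ∧
        b 1 = 1 ∧
        (∀ z ∈ Metric.ball (0:ℂ) 1, HasSum (fun n => b n * z ^ n) (g z)) ∧
        Set.InjOn g (Metric.ball (0:ℂ) 1) ∧
        (∀ z ∈ Metric.ball (0:ℂ) 1, z ≠ 0 → 0 < (z * deriv g z / g z).re) ∧
        ‖b 2 ^ 2 - b 3 ^ 2‖ = 13) := by
  exact ⟨fun g b hb0 hb1 hsum hinj hre => bound_part g b hb0 hb1 hsum hinj hre, sharp_part⟩
end

section
/- Let -1 ≤ E < D ≤ 1 with |D - 2E| ≥ 1. If g(z) = z + b_2 z^2 + b_3 z^3 + ... is a Janowski starlike function in S*[D,E], then |b_2^2 - b_3^2| ≤ (D-E)^2 (D^2 + 4E^2 - 4DE + 4)/4, and this bound is sharp. -/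
section JanowskiHelpers
open Complex Metric Set Filter FormalMultilinearSeries
open scoped NNReal



lemma exists_bound {b : ℕ → ℂ} {t : ℝ} (ht : 0 ≤ t)
    (h : Summable fun n => b n * (t : ℂ) ^ n) :
    ∃ C : ℝ, ∀ n, ‖b n‖ * t ^ n ≤ C := by
  have h2 : Tendsto (fun n => ‖b n * (t : ℂ) ^ n‖) atTop (nhds 0) := by
    simpa using h.tendsto_atTop_zero.norm
  obtain ⟨C, hC⟩ := h2.bddAbove_range
  refine ⟨C, fun n => ?_⟩
  have := hC (Set.mem_range_self n)
  simpa [norm_mul, norm_pow, Complex.norm_real, Real.norm_eq_abs,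
    _root_.abs_of_nonneg ht] using this

lemma hasSum_ofScalars {b : ℕ → ℂ} {g : ℂ → ℂ} {r : NNReal} (hr : 0 < r)
    (h : ∀ z : ℂ, ‖z‖ < r → HasSum (fun n => b n * z ^ n) (g z)) :
    HasFPowerSeriesOnBall g (FormalMultilinearSeries.ofScalars ℂ b) 0 r := by
  constructor
  · refine ENNReal.le_of_forall_nnreal_lt fun r' hr' => ?_
    rw [ENNReal.coe_lt_coe] at hr'
    have hnorm : ‖((r' : ℝ) : ℂ)‖ < r := by
      simpa [Complex.norm_real, Real.norm_eq_abs,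
        _root_.abs_of_nonneg r'.coe_nonneg] using (NNReal.coe_lt_coe.mpr hr')
    obtain ⟨C, hC⟩ := exists_bound r'.coe_nonneg (h _ hnorm).summable
    exact FormalMultilinearSeries.le_radius_of_bound _ C fun n => by
      rw [FormalMultilinearSeries.ofScalars_norm]; exact hC n
  · exact_mod_cast hr
  · intro y hy
    rw [mem_emetric_ball_zero_iff, enorm_eq_nnnorm, ENNReal.coe_lt_coe, ← NNReal.coe_lt_coe,
      coe_nnnorm] at hy
    have := h y hy
    simp only [zero_add]
    convert this using 1
    · rfl
    funext n
    rw [FormalMultilinearSeries.ofScalars_apply_eq, smul_eq_mul]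

lemma summable_norm_of_lt {b : ℕ → ℂ} {ρ : ℝ}
    (h : ∀ w : ℂ, ‖w‖ < ρ → Summable fun n => b n * w ^ n) {z : ℂ} (hz : ‖z‖ < ρ) :
    Summable fun n => ‖b n * z ^ n‖ := by
  obtain ⟨t, h1, h2⟩ : ∃ t, ‖z‖ < t ∧ t < ρ := ⟨(‖z‖ + ρ) / 2, by linarith, by linarith⟩
  have h0 : 0 < t := lt_of_le_of_lt (norm_nonneg z) h1
  have hnorm : ‖(t : ℂ)‖ < ρ := by
    simpa [Complex.norm_real, Real.norm_eq_abs, _root_.abs_of_nonneg h0.le] using h2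
  obtain ⟨C, hC⟩ := exists_bound h0.le (h _ hnorm)
  have hgeo : Summable fun n => C * (‖z‖ / t) ^ n :=
    (summable_geometric_of_lt_one (by positivity) (by rw [div_lt_one h0]; exact h1)).mul_left C
  refine hgeo.of_nonneg_of_le (fun n => norm_nonneg _) fun n => ?_
  rw [norm_mul, norm_pow]
  have htn : (t : ℝ) ^ n ≠ 0 := by positivity
  have key : ‖b n‖ * ‖z‖ ^ n = ‖b n‖ * t ^ n * (‖z‖ / t) ^ n := by
    rw [div_pow]; field_simp
  rw [key]
  exact mul_le_mul_of_nonneg_right (hC n) (by positivity)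

lemma hasSum_cauchy {u v : ℕ → ℂ} {U V : ℂ} (hu : HasSum u U) (hv : HasSum v V)
    (hu' : Summable fun n => ‖u n‖) (hv' : Summable fun n => ‖v n‖) :
    HasSum (fun n => ∑ kl ∈ Finset.HasAntidiagonal.antidiagonal n, u kl.1 * v kl.2) (U * V) := by
  have hs := summable_norm_sum_mul_antidiagonal_of_summable_norm hu' hv'
  have heq := tsum_mul_tsum_eq_tsum_sum_antidiagonal_of_summable_norm hu' hv'
  rw [hu.tsum_eq, hv.tsum_eq] at heq
  have := hs.of_norm.hasSum
  rwa [← heq] at this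

lemma coeffs_eq_zero {a : ℕ → ℂ} {ρ : NNReal} (hρ : 0 < ρ)
    (h : ∀ z : ℂ, ‖z‖ < ρ → HasSum (fun n => a n * z ^ n) 0) (n : ℕ) : a n = 0 := by
  have h1 : HasFPowerSeriesOnBall (fun _ : ℂ => (0 : ℂ))
      (FormalMultilinearSeries.ofScalars ℂ a) 0 ρ :=
    hasSum_ofScalars hρ fun z hz => h z hz
  have h2 : FormalMultilinearSeries.ofScalars ℂ a = 0 :=
    HasFPowerSeriesAt.eq_zero h1.hasFPowerSeriesAt
  exact congrFun ((FormalMultilinearSeries.ofScalars_series_eq_zero ℂ).mp h2) n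


lemma normSq_lt_one_of_norm {a : ℂ} (ha : ‖a‖ < 1) : Complex.normSq a < 1 := by
  have h1 := Complex.sq_norm a
  have h2 : ‖a‖ = ‖a‖ := rfl
  nlinarith [norm_nonneg a]

lemma den_ne_zero {a w : ℂ} (ha : ‖a‖ < 1) (hw : ‖w‖ ≤ 1) :
    (1 : ℂ) - (starRingEnd ℂ) a * w ≠ 0 := by
  intro hcon
  have h1 : ‖(starRingEnd ℂ) a * w‖ < 1 := by
    rw [norm_mul, RCLike.norm_conj]
    exact mul_lt_one_of_nonneg_of_lt_one_left (norm_nonneg a) ha hw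
  have h2 : (starRingEnd ℂ) a * w = 1 := by
    have := sub_eq_zero.mp hcon; exact this.symm
  rw [h2] at h1; simp at h1

lemma mobius_lt_one {a w : ℂ} (ha : ‖a‖ < 1) (hw : ‖w‖ < 1) :
    ‖(w - a) / (1 - (starRingEnd ℂ) a * w)‖ < 1 := by
  have hden := den_ne_zero ha hw.le
  have hkey : Complex.normSq (w - a) + (1 - Complex.normSq a) * (1 - Complex.normSq w)
      = Complex.normSq (1 - (starRingEnd ℂ) a * w) := by
    have hc : ((Complex.normSq (w - a) : ℂ)) + (1 - (Complex.normSq a : ℂ)) *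
        (1 - (Complex.normSq w : ℂ)) = (Complex.normSq (1 - (starRingEnd ℂ) a * w) : ℂ) := by
      rw [← Complex.mul_conj, ← Complex.mul_conj, ← Complex.mul_conj, ← Complex.mul_conj]
      simp only [map_sub, map_mul, map_one, Complex.conj_conj]
      ring
    exact_mod_cast hc
  have ha2 := normSq_lt_one_of_norm ha
  have hw2 := normSq_lt_one_of_norm hw
  have hlt : Complex.normSq (w - a) < Complex.normSq (1 - (starRingEnd ℂ) a * w) := by
    nlinarith
  rw [norm_div, div_lt_one (by simpa [norm_pos_iff] using hden)]
  have e1 : ‖w - a‖ = Real.sqrt (Complex.normSq (w - a)) := Complex.norm_def _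
  have e2 : ‖1 - (starRingEnd ℂ) a * w‖ = Real.sqrt (Complex.normSq (1 - (starRingEnd ℂ) a * w)) :=
    Complex.norm_def _
  rw [e1, e2]
  exact Real.sqrt_lt_sqrt (Complex.normSq_nonneg _) hlt


lemma schwarz_two {ω : ℂ → ℂ} (hd : DifferentiableOn ℂ ω (ball 0 1)) (h0 : ω 0 = 0)
    (hm : Set.MapsTo ω (ball 0 1) (ball 0 1)) :
    ‖deriv ω 0‖ ≤ 1 ∧ ‖deriv (dslope ω 0) 0‖ ≤ 1 - ‖deriv ω 0‖ ^ 2 := by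
  set φ := dslope ω 0 with hφ
  have hmem : ball (0 : ℂ) 1 ∈ nhds (0 : ℂ) := ball_mem_nhds _ one_pos
  have hφd : DifferentiableOn ℂ φ (ball 0 1) := (differentiableOn_dslope hmem).mpr hd
  have hmaps : Set.MapsTo ω (ball 0 1) (ball (ω 0) 1) := by rwa [h0]
  have hφle : ∀ z ∈ ball (0 : ℂ) 1, ‖φ z‖ ≤ 1 := fun z hz => by
    simpa using Complex.norm_dslope_le_div_of_mapsTo_ball hd (hmaps.mono_right ball_subset_closedBall) hz
  have h00 : (0 : ℂ) ∈ ball (0 : ℂ) 1 := mem_ball_self one_pos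
  have hφ0 : φ 0 = deriv ω 0 := dslope_same ω 0
  have ha1 : ‖deriv ω 0‖ ≤ 1 := by rw [← hφ0]; exact hφle 0 h00
  refine ⟨ha1, ?_⟩
  by_cases hex : ∃ z ∈ ball (0 : ℂ) 1, ‖φ z‖ = 1
  · obtain ⟨z₀, hz₀, hz₀1⟩ := hex
    have hmax : IsMaxOn (norm ∘ φ) (ball 0 1) z₀ := by
      intro z hz
      simp only [Function.comp_apply, Set.mem_setOf_eq, hz₀1]
      exact hφle z hz
    have hconst : Set.EqOn φ (fun _ => φ z₀) (ball 0 1) := fun z hz =>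
      Complex.eqOn_of_isPreconnected_of_isMaxOn_norm (convex_ball 0 1).isPreconnected
        isOpen_ball hφd hz₀ hmax hz
    have hder : deriv φ 0 = 0 := by
      have hev : φ =ᶠ[nhds 0] fun _ => φ z₀ :=
        Filter.eventuallyEq_of_mem (isOpen_ball.mem_nhds h00) hconst
      rw [hev.deriv_eq, deriv_const]
    have hone : ‖deriv ω 0‖ = 1 := by
      rw [← hφ0, hconst h00, hz₀1]
    rw [hder, hone]; norm_num
  · push_neg at hex
    have hφlt : ∀ z ∈ ball (0 : ℂ) 1, ‖φ z‖ < 1 := fun z hz =>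
      lt_of_le_of_ne (hφle z hz) (hex z hz)
    set a := φ 0 with haeq
    have ha : ‖a‖ < 1 := hφlt 0 h00
    set ψ := fun z => (φ z - a) / (1 - (starRingEnd ℂ) a * φ z) with hψ
    have hψd : DifferentiableOn ℂ ψ (ball 0 1) := by
      apply DifferentiableOn.div
      · exact hφd.sub_const a
      · exact (differentiableOn_const _).sub ((differentiableOn_const _).mul hφd)
      · exact fun z hz => den_ne_zero ha (hφle z hz)
    have hψ0 : ψ 0 = 0 := by simp [hψ, ← haeq, sub_self]
    have hψm : Set.MapsTo ψ (ball 0 1) (ball (ψ 0) 1) := by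
      rw [hψ0]
      intro z hz
      rw [mem_ball_zero_iff]
      exact mobius_lt_one ha (hφlt z hz)
    have hbound : ‖deriv ψ 0‖ ≤ 1 :=
      Complex.norm_deriv_le_one_of_mapsTo_ball hψd (hψm.mono_right ball_subset_closedBall) one_pos
    -- compute deriv ψ 0
    have hφat : DifferentiableAt ℂ φ 0 := hφd.differentiableAt (isOpen_ball.mem_nhds h00)
    have hden0 : (1 : ℂ) - (starRingEnd ℂ) a * φ 0 ≠ 0 := den_ne_zero ha (hφle 0 h00)
    set d := deriv φ 0 with hdeq
    have h1 : HasDerivAt (fun z => φ z - a) d 0 := hφat.hasDerivAt.sub_const a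
    have h2 : HasDerivAt (fun z => (1 : ℂ) - (starRingEnd ℂ) a * φ z)
        (-((starRingEnd ℂ) a * d)) 0 := by
      simpa using (hφat.hasDerivAt.const_mul ((starRingEnd ℂ) a)).const_sub 1
    have hdiv := h1.div h2 hden0
    have hval : deriv ψ 0 = d / (1 - (starRingEnd ℂ) a * a) := by
      rw [hψ]
      rw [show (fun z => (φ z - a) / (1 - (starRingEnd ℂ) a * φ z)) = ((fun z => φ z - a) / fun z => 1 - (starRingEnd ℂ) a * φ z) from rfl]
      rw [hdiv.deriv]
      rw [← haeq]
      have hden' : (1 : ℂ) - (starRingEnd ℂ) a * a ≠ 0 := hden0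
      rw [sub_self, zero_mul, sub_zero, pow_two, mul_div_mul_right _ _ hden']
    have hcast : (1 : ℂ) - (starRingEnd ℂ) a * a = ((1 - ‖a‖ ^ 2 : ℝ) : ℂ) := by
      have : (starRingEnd ℂ) a * a = ((Complex.normSq a : ℝ) : ℂ) := by
        rw [mul_comm, Complex.mul_conj]
      rw [this]
      have : Complex.normSq a = ‖a‖ ^ 2 := (Complex.sq_norm a).symm
      rw [this]
      push_cast
      ring
    have hnormden : ‖(1 : ℂ) - (starRingEnd ℂ) a * a‖ = 1 - ‖a‖ ^ 2 := by
      rw [hcast, Complex.norm_real, Real.norm_eq_abs, _root_.abs_of_nonneg]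
      nlinarith [norm_nonneg a]
    have : ‖deriv ψ 0‖ = ‖d‖ / (1 - ‖a‖ ^ 2) := by
      rw [hval, norm_div, hnormden]
    have hfin : ‖d‖ / (1 - ‖a‖ ^ 2) ≤ 1 := by rw [← this]; exact hbound
    have hpos : 0 < 1 - ‖a‖ ^ 2 := by nlinarith [norm_nonneg a]
    rw [← hφ0]
    calc ‖deriv φ 0‖ = ‖d‖ := rfl
    _ ≤ 1 - ‖a‖ ^ 2 := by rwa [div_le_one hpos] at hfin


lemma one_add_ne {F : ℝ} (hF : |F| ≤ 1) {w : ℂ} (hw : ‖w‖ < 1) : (1 : ℂ) + F * w ≠ 0 := by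
  intro hcon
  have h1 : (F : ℂ) * w = -1 := by linear_combination hcon
  have h2 : ‖(F : ℂ) * w‖ < 1 := by
    rw [norm_mul, Complex.norm_real, Real.norm_eq_abs]
    calc |F| * ‖w‖ ≤ 1 * ‖w‖ := mul_le_mul_of_nonneg_right hF (norm_nonneg w)
    _ = ‖w‖ := one_mul _
    _ < 1 := hw
  rw [h1] at h2; simp at h2

lemma key_coeffs (D E : ℝ) (hE : -1 ≤ E) (hED : E < D) (hD : D ≤ 1)
    (g : ℂ → ℂ) (b : ℕ → ℂ) (ω : ℂ → ℂ)
    (hb0 : b 0 = 0) (hb1 : b 1 = 1)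
    (hsum : ∀ z ∈ ball (0:ℂ) 1, HasSum (fun n => b n * z ^ n) (g z))
    (hωa : AnalyticOnNhd ℂ ω (ball 0 1)) (hω0 : ω 0 = 0)
    (hωm : ∀ z ∈ ball (0:ℂ) 1, ω z ∈ ball (0:ℂ) 1)
    (heq : ∀ z ∈ ball (0:ℂ) 1, z ≠ 0 →
      z * deriv g z / g z = (1 + (D : ℂ) * ω z) / (1 + (E : ℂ) * ω z)) :
    b 2 = ((D : ℂ) - E) * deriv ω 0 ∧
    2 * b 3 = ((D : ℂ) - E) * deriv (dslope ω 0) 0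
      + ((D : ℂ) - 2 * E) * ((D : ℂ) - E) * (deriv ω 0) ^ 2 := by
  have h1pos : (0 : NNReal) < 1 := one_pos
  have hsum' : ∀ z : ℂ, ‖z‖ < ((1 : NNReal) : ℝ) → HasSum (fun n => b n * z ^ n) (g z) := by
    intro z hz
    exact hsum z (mem_ball_zero_iff.mpr (by exact_mod_cast hz))
  have hP : HasFPowerSeriesOnBall g (ofScalars ℂ b) 0 1 := by
    exact_mod_cast hasSum_ofScalars h1pos hsum'
  -- g 0 = 0
  have hg0 : g 0 = 0 := by
    have h00 := hsum 0 (mem_ball_self one_pos)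
    have hzf : (fun n : ℕ => b n * (0 : ℂ) ^ n) = fun _ => 0 := by
      funext n; cases n <;> simp [hb0]
    rw [hzf] at h00
    exact (hasSum_zero.unique h00).symm
  -- power series of ω at 0
  obtain ⟨q, hq⟩ := hωa 0 (mem_ball_self one_pos)
  obtain ⟨R, hRball⟩ := id hq
  obtain ⟨ρ, hρ0, hρR, hρ1⟩ : ∃ ρ : NNReal, 0 < ρ ∧ (ρ : ENNReal) < R ∧ (ρ : ℝ) ≤ 1 := by
    obtain ⟨ρ, hρ1, hρ2⟩ := ENNReal.lt_iff_exists_nnreal_btwn.mp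
      (lt_min hRball.r_pos (by norm_num : (0:ENNReal) < 1))
    refine ⟨ρ, by exact_mod_cast hρ1, lt_of_lt_of_le hρ2 (min_le_left _ _), ?_⟩
    have := lt_of_lt_of_le hρ2 (min_le_right _ _)
    exact_mod_cast this.le
  have hc0 : q.coeff 0 = 0 := by
    have := hq.coeff_zero fun _ => 1
    rw [hω0] at this
    exact this
  have hcsum : ∀ z : ℂ, ‖z‖ < (ρ : ℝ) → HasSum (fun n => q.coeff n * z ^ n) (ω z) := by
    intro z hz
    have hmem : z ∈ Metric.eball (0 : ℂ) R := by
      rw [mem_emetric_ball_zero_iff]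
      calc (‖z‖₊ : ENNReal) < ρ := by exact_mod_cast hz
      _ < R := hρR
    have h1 := hRball.hasSum hmem
    rw [zero_add] at h1
    convert h1 using 1
    · rfl
    funext n
    rw [q.apply_eq_pow_smul_coeff, smul_eq_mul, mul_comm]
  -- series for z * deriv g z
  have hzd : ∀ z : ℂ, ‖z‖ < 1 → HasSum (fun n : ℕ => (n : ℂ) * b n * z ^ n) (z * deriv g z) := by
    intro z hz
    have hmem : z ∈ Metric.eball (0 : ℂ) ((1 : NNReal) : ENNReal) := by
      rw [mem_emetric_ball_zero_iff]
      exact_mod_cast hz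
    have h1 := (hP.fderiv).hasSum (by exact_mod_cast hmem)
    have h2 := (ContinuousLinearMap.apply ℂ ℂ z).hasSum h1
    have hterm : ∀ n : ℕ, (((ofScalars ℂ b).derivSeries n) (fun _ => z)) z
        = ((n : ℂ) + 1) * b (n + 1) * z ^ (n + 1) := by
      intro n
      rw [FormalMultilinearSeries.derivSeries_apply_diag, ofScalars_apply_eq]
      push_cast
      simp only [smul_eq_mul, nsmul_eq_mul]
      push_cast
      ring
    have hval : (fderiv ℂ g (0 + z)) z = z * deriv g z := by
      rw [zero_add]
      calc (fderiv ℂ g z) z = (fderiv ℂ g z) (z • 1) := by rw [smul_eq_mul, mul_one]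
      _ = z • ((fderiv ℂ g z) 1) := ContinuousLinearMap.map_smul _ _ _
      _ = z * deriv g z := by rw [smul_eq_mul]; rfl
    simp only [ContinuousLinearMap.apply_apply] at h2
    rw [hval] at h2
    simp only [hterm] at h2
    have h4 : HasSum (fun n : ℕ => (n : ℂ) * b n * z ^ n)
        (z * deriv g z + ∑ i ∈ Finset.range 1, (i : ℂ) * b i * z ^ i) :=
      (hasSum_nat_add_iff 1).mp (by push_cast; exact h2)
    simpa using h4
  -- series for 1 + F * ω z
  have hFsum : ∀ F : ℝ, ∀ z : ℂ, ‖z‖ < (ρ : ℝ) →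
      HasSum (fun n => (if n = 0 then 1 else (F : ℂ) * q.coeff n) * z ^ n) (1 + F * ω z) := by
    intro F z hz
    have h1 := (hcsum z hz).mul_left (F : ℂ)
    have h2 := h1.update 0 1
    have hfn : Function.update (fun n => (F : ℂ) * (q.coeff n * z ^ n)) 0 1
        = fun n => (if n = 0 then 1 else (F : ℂ) * q.coeff n) * z ^ n := by
      funext n
      cases n with
      | zero => simp
      | succ m => rw [Function.update_of_ne (Nat.succ_ne_zero m)]; simp; ring
    rw [hfn] at h2
    convert h2 using 1
    · rfl
    rw [hc0]
    ring
  -- the functional equation on the small ball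
  have hEabs : |E| ≤ 1 := abs_le.mpr ⟨hE, (hED.trans_le hD).le⟩
  have hDabs : |D| ≤ 1 := abs_le.mpr ⟨hE.trans hED.le, hD⟩
  have heq' : ∀ z : ℂ, ‖z‖ < (ρ : ℝ) →
      z * deriv g z * (1 + (E : ℂ) * ω z) = g z * (1 + (D : ℂ) * ω z) := by
    intro z hz
    rcases eq_or_ne z 0 with rfl | hne
    · rw [hg0]; ring
    · have hz1 : z ∈ ball (0 : ℂ) 1 := mem_ball_zero_iff.mpr (lt_of_lt_of_le hz hρ1)
      have hω1 : ‖ω z‖ < 1 := mem_ball_zero_iff.mp (hωm z hz1)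
      have hEne := one_add_ne hEabs hω1
      have hDne := one_add_ne hDabs hω1
      have hmain := heq z hz1 hne
      have hgne : g z ≠ 0 := by
        intro hg
        rw [hg, div_zero] at hmain
        exact (div_ne_zero hDne hEne) hmain.symm
      rw [div_eq_div_iff hgne hEne] at hmain
      linear_combination hmain
  -- Cauchy products
  set eE : ℕ → ℂ := fun j => if j = 0 then 1 else (E : ℂ) * q.coeff j with heE
  set eD : ℕ → ℂ := fun j => if j = 0 then 1 else (D : ℂ) * q.coeff j with heD
  set A : ℕ → ℂ := fun n => ∑ kl ∈ Finset.HasAntidiagonal.antidiagonal n,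
      ((kl.1 : ℂ) * b kl.1 * eE kl.2 - b kl.1 * eD kl.2) with hA
  have hAzero : ∀ n, A n = 0 := by
    apply coeffs_eq_zero hρ0
    intro z hz
    have hz1 : ‖z‖ < 1 := lt_of_lt_of_le hz hρ1
    have hu := hzd z hz1
    have hvE := hFsum E z hz
    have hvD := hFsum D z hz
    have hu' : Summable fun n : ℕ => ‖(n : ℂ) * b n * z ^ n‖ :=
      summable_norm_of_lt (b := fun n : ℕ => (n : ℂ) * b n)
        (fun w hw => (hzd w hw).summable) hz1
    have hvE' : Summable fun n => ‖eE n * z ^ n‖ :=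
      summable_norm_of_lt (b := eE) (fun w hw => (hFsum E w hw).summable) hz
    have hvD' : Summable fun n => ‖eD n * z ^ n‖ :=
      summable_norm_of_lt (b := eD) (fun w hw => (hFsum D w hw).summable) hz
    have hL := hasSum_cauchy (v := fun n => eE n * z ^ n) hu hvE hu' hvE'
    have hR := hasSum_cauchy (v := fun n => eD n * z ^ n) ((hsum z (mem_ball_zero_iff.mpr hz1))) hvD
      (summable_norm_of_lt (b := b) (fun w hw => (hsum w (mem_ball_zero_iff.mpr
        (lt_of_lt_of_le hw hρ1))).summable) hz) hvD'
    have hterm : ∀ n : ℕ, (∑ kl ∈ Finset.HasAntidiagonal.antidiagonal n,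
        ((kl.1 : ℂ) * b kl.1 * z ^ kl.1) * (eE kl.2 * z ^ kl.2))
        = (∑ kl ∈ Finset.HasAntidiagonal.antidiagonal n, (kl.1 : ℂ) * b kl.1 * eE kl.2) * z ^ n := by
      intro n
      rw [Finset.sum_mul]
      apply Finset.sum_congr rfl
      intro kl hkl
      have hkl' := Finset.HasAntidiagonal.mem_antidiagonal.mp hkl
      rw [← hkl', pow_add]
      ring
    have htermD : ∀ n : ℕ, (∑ kl ∈ Finset.HasAntidiagonal.antidiagonal n,
        (b kl.1 * z ^ kl.1) * (eD kl.2 * z ^ kl.2))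
        = (∑ kl ∈ Finset.HasAntidiagonal.antidiagonal n, b kl.1 * eD kl.2) * z ^ n := by
      intro n
      rw [Finset.sum_mul]
      apply Finset.sum_congr rfl
      intro kl hkl
      have hkl' := Finset.HasAntidiagonal.mem_antidiagonal.mp hkl
      rw [← hkl', pow_add]
      ring
    simp only [hterm] at hL
    simp only [htermD] at hR
    have hdiff := hL.sub hR
    rw [heq' z hz, sub_self] at hdiff
    convert hdiff using 1
    · rfl
    funext n
    rw [hA]
    simp only [Finset.sum_sub_distrib]
    ring
  -- coefficients of ω
  have hq1 : q.coeff 1 = deriv ω 0 := (hq.deriv).symm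
  have hq2 : q.coeff 2 = deriv (dslope ω 0) 0 := by
    have h := (hq.has_fpower_series_dslope_fslope).deriv
    have h2 : q.coeff 2 = q.fslope.coeff 1 := (FormalMultilinearSeries.coeff_fslope).symm
    rw [h2]
    exact h.symm
  -- extract equations
  have hA2 := hAzero 2
  have hA3 := hAzero 3
  simp only [hA, Finset.Nat.sum_antidiagonal_eq_sum_range_succ_mk, Finset.sum_range_succ,
    Finset.sum_range_zero, heE, heD] at hA2 hA3
  norm_num [hb0, hb1, hc0] at hA2 hA3
  constructor
  · rw [← hq1]
    linear_combination hA2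
  · rw [← hq1, ← hq2]
    linear_combination hA3 + ((D:ℂ) - 2*E) * q.coeff 1 * hA2



-- from differentiability on the unit ball, build coefficients valid on the whole ball
lemma exists_coeffs {g : ℂ → ℂ} (hdiff : DifferentiableOn ℂ g (ball 0 1)) :
    ∃ b : ℕ → ℂ, b 0 = g 0 ∧ b 1 = deriv g 0 ∧
      ∀ z ∈ ball (0 : ℂ) 1, HasSum (fun n => b n * z ^ n) (g z) := by
  have hhalf : HasFPowerSeriesOnBall g (cauchyPowerSeries g 0 (1/2 : ℝ≥0)) 0 (1/2 : ℝ≥0) := by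
    apply DifferentiableOn.hasFPowerSeriesOnBall
    · apply hdiff.mono
      intro x hx
      rw [mem_closedBall, dist_zero_right] at hx
      rw [mem_ball, dist_zero_right]
      calc ‖x‖ ≤ ((1/2 : ℝ≥0) : ℝ) := hx
      _ < 1 := by norm_num
    · norm_num
  set P := cauchyPowerSeries g 0 (1/2 : ℝ≥0) with hP
  refine ⟨fun n => P.coeff n, ?_, ?_, ?_⟩
  · exact hhalf.hasFPowerSeriesAt.coeff_zero fun _ => 1
  · exact (hhalf.hasFPowerSeriesAt.deriv).symm
  · intro z hz
    rw [mem_ball_zero_iff] at hz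
    set s : ℝ := (‖z‖ + 1) / 2 with hs
    have hs0 : 0 < s := by positivity
    have hzs : ‖z‖ < s := by rw [hs]; linarith
    have hs1 : s < 1 := by rw [hs]; linarith
    set r : ℝ≥0 := s.toNNReal with hr
    have hrs : (r : ℝ) = s := Real.coe_toNNReal s hs0.le
    have hrball : HasFPowerSeriesOnBall g (cauchyPowerSeries g 0 r) 0 r := by
      apply DifferentiableOn.hasFPowerSeriesOnBall
      · apply hdiff.mono
        intro x hx
        rw [mem_closedBall, dist_zero_right] at hx
        rw [mem_ball, dist_zero_right]
        calc ‖x‖ ≤ (r : ℝ) := hx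
        _ < 1 := by rw [hrs]; exact hs1
      · rw [← NNReal.coe_pos, hrs]; exact hs0
    have hPeq : cauchyPowerSeries g 0 r = P :=
      hrball.hasFPowerSeriesAt.eq_formalMultilinearSeries hhalf.hasFPowerSeriesAt
    have hmem : z ∈ Metric.eball (0 : ℂ) r := by
      rw [mem_emetric_ball_zero_iff, enorm_eq_nnnorm, ← ENNReal.coe_lt_coe.symm]
      exact_mod_cast (by rw [← coe_nnnorm] at hzs; exact lt_of_lt_of_le hzs (by rw [hrs]) : (‖z‖₊ : ℝ) < (r:ℝ))
    have h1 := hrball.hasSum hmem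
    rw [zero_add, hPeq] at h1
    convert h1 using 1
    · rfl
    funext n
    rw [P.apply_eq_pow_smul_coeff, smul_eq_mul, mul_comm]


-- ODE verification, case E ≠ 0
lemma ode_case_ne (D E : ℝ) (hE : -1 ≤ E) (hED : E < D) (hD : D ≤ 1) (hEne : E ≠ 0) :
    ∃ g : ℂ → ℂ, DifferentiableOn ℂ g (ball 0 1) ∧ g 0 = 0 ∧ deriv g 0 = 1 ∧
      ∀ z ∈ ball (0 : ℂ) 1, z ≠ 0 →
        z * deriv g z / g z = (1 + (D : ℂ) * (I * z)) / (1 + (E : ℂ) * (I * z)) := by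
  set γ : ℂ := ((D : ℂ) - E) / E with hγ
  have hEC : (E : ℂ) ≠ 0 := by exact_mod_cast hEne
  have hγE : γ * E = (D : ℂ) - E := by rw [hγ]; field_simp
  set u : ℂ → ℂ := fun z => 1 + I * E * z with hu
  set g : ℂ → ℂ := fun z => z * u z ^ γ with hg
  have habs : ∀ z ∈ ball (0 : ℂ) 1, ‖I * (E : ℂ) * z‖ < 1 := by
    intro z hz
    rw [mem_ball_zero_iff] at hz
    rw [norm_mul, norm_mul, Complex.norm_I, one_mul, Complex.norm_real, Real.norm_eq_abs]
    have hEabs : |E| ≤ 1 := abs_le.mpr ⟨hE, (hED.trans_le hD).le⟩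
    calc |E| * ‖z‖ ≤ 1 * ‖z‖ := mul_le_mul_of_nonneg_right hEabs (norm_nonneg z)
    _ = ‖z‖ := one_mul _
    _ < 1 := hz
  have hslit : ∀ z ∈ ball (0 : ℂ) 1, u z ∈ Complex.slitPlane := by
    intro z hz
    rw [Complex.mem_slitPlane_iff]
    left
    have h1 := habs z hz
    have h2 : |(I * (E : ℂ) * z).re| ≤ ‖I * (E : ℂ) * z‖ := Complex.abs_re_le_norm _
    rw [hu]
    simp only [Complex.add_re, Complex.one_re]
    have h3 := lt_of_le_of_lt h2 h1
    have := abs_lt.mp h3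
    linarith [this.1]
  have hu0 : ∀ z ∈ ball (0 : ℂ) 1, u z ≠ 0 := fun z hz =>
    Complex.slitPlane_ne_zero (hslit z hz)
  have hud : ∀ z : ℂ, HasDerivAt u (I * E) z := by
    intro z
    have h1 : HasDerivAt (fun w : ℂ => I * (E : ℂ) * w) (I * E) z := by
      simpa using (hasDerivAt_id z).const_mul (I * (E : ℂ))
    exact h1.const_add 1
  have hgd : ∀ z ∈ ball (0 : ℂ) 1,
      HasDerivAt g (u z ^ γ + z * (γ * u z ^ (γ - 1) * (I * E))) z := by
    intro z hz
    have hcp : HasDerivAt (fun w => u w ^ γ) (γ * u z ^ (γ - 1) * (I * E)) z :=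
      (hud z).cpow_const (hslit z hz)
    have := (hasDerivAt_id z).mul hcp
    exact this.congr_deriv (by rw [one_mul]; rfl)
  have hdiff : DifferentiableOn ℂ g (ball 0 1) := fun z hz =>
    ((hgd z hz).differentiableAt).differentiableWithinAt
  refine ⟨g, hdiff, by simp [hg], ?_, ?_⟩
  · have h0 := (hgd 0 (mem_ball_self one_pos)).deriv
    rw [h0]
    have : u 0 = 1 := by rw [hu]; simp
    rw [this, Complex.one_cpow]
    ring
  · intro z hz hzne
    have hder := (hgd z hz).deriv
    have hu0' := hu0 z hz
    have hcp0 : u z ^ γ ≠ 0 := by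
      rw [Complex.cpow_def_of_ne_zero hu0']
      exact Complex.exp_ne_zero _
    have hB : u z = 1 + I * (E : ℂ) * z := by rw [hu]
    have hden : (1 : ℂ) + (E : ℂ) * (I * z) ≠ 0 := by
      rw [show (1 : ℂ) + (E : ℂ) * (I * z) = u z by rw [hB]; ring]
      exact hu0'
    have hgne : g z ≠ 0 := mul_ne_zero hzne hcp0
    have hmul : u z ^ (γ - 1) * u z = u z ^ γ := by
      calc u z ^ (γ - 1) * u z = u z ^ (γ - 1) * u z ^ (1 : ℂ) := by rw [Complex.cpow_one]
      _ = u z ^ (γ - 1 + 1) := (Complex.cpow_add _ _ hu0').symm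
      _ = u z ^ γ := by rw [sub_add_cancel]
    rw [div_eq_div_iff hgne hden, hder]
    show z * (u z ^ γ + z * (γ * u z ^ (γ - 1) * (I * ↑E))) * (1 + (E : ℂ) * (I * z))
      = (1 + (D : ℂ) * (I * z)) * (z * u z ^ γ)
    linear_combination (z ^ 2 * I * u z ^ γ) * hγE + (z * u z ^ γ * (E : ℂ) * I * z) * hB
      + (z ^ 2 * γ * I * (E : ℂ)) * hmul + (z * u z ^ γ) * hB


lemma ode_case_zero (D : ℝ) :
    ∃ g : ℂ → ℂ, DifferentiableOn ℂ g (ball 0 1) ∧ g 0 = 0 ∧ deriv g 0 = 1 ∧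
      ∀ z ∈ ball (0 : ℂ) 1, z ≠ 0 →
        z * deriv g z / g z = (1 + (D : ℂ) * (I * z)) / (1 + (0 : ℝ) * (I * z)) := by
  set g : ℂ → ℂ := fun z => z * Complex.exp (I * D * z) with hg
  have hgd : ∀ z : ℂ, HasDerivAt g
      (Complex.exp (I * D * z) + z * (Complex.exp (I * D * z) * (I * D))) z := by
    intro z
    have h1 : HasDerivAt (fun w : ℂ => I * (D : ℂ) * w) (I * D) z := by
      simpa using (hasDerivAt_id z).const_mul (I * (D : ℂ))
    have h2 : HasDerivAt (fun w : ℂ => Complex.exp (I * D * w))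
        (Complex.exp (I * D * z) * (I * D)) z := by
      have := (Complex.hasDerivAt_exp (I * D * z)).comp z h1
      exact this
    have := (hasDerivAt_id z).mul h2
    exact this.congr_deriv (by rw [one_mul]; rfl)
  refine ⟨g, fun z _ => (hgd z).differentiableAt.differentiableWithinAt, by simp [hg], ?_, ?_⟩
  · have h0 := (hgd 0).deriv
    rw [h0]; simp
  · intro z hz hzne
    rw [(hgd z).deriv]
    have hexp := Complex.exp_ne_zero (I * D * z)
    rw [hg]
    push_cast
    field_simp
    ring




lemma part1_bound (D E : ℝ) (hED : E < D) (hcond : 1 ≤ |D - 2 * E|) {b2 b3 c1 c2 : ℂ}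
    (h2 : b2 = ((D : ℂ) - E) * c1)
    (h3 : 2 * b3 = ((D : ℂ) - E) * c2 + ((D : ℂ) - 2 * E) * ((D : ℂ) - E) * c1 ^ 2)
    (hc1 : ‖c1‖ ≤ 1) (hc2 : ‖c2‖ ≤ 1 - ‖c1‖ ^ 2) :
    ‖b2 ^ 2 - b3 ^ 2‖ ≤ (D - E) ^ 2 * (D ^ 2 + 4 * E ^ 2 - 4 * D * E + 4) / 4 := by
  have hd : (0 : ℝ) < D - E := sub_pos.mpr hED
  set x := ‖c1‖ with hx
  set y := ‖c2‖ with hy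
  set t := |D - 2 * E| with ht
  have hx0 : 0 ≤ x := norm_nonneg _
  have hy0 : 0 ≤ y := norm_nonneg _
  have ht1 : 1 ≤ t := hcond
  have hteq : t ^ 2 = (D - 2 * E) ^ 2 := sq_abs _
  have hDE : ((D : ℂ) - E) = (((D - E : ℝ)) : ℂ) := by push_cast; ring
  have hDE2 : ((D : ℂ) - 2 * E) = (((D - 2 * E : ℝ)) : ℂ) := by push_cast; ring
  have hb2n : ‖b2‖ = (D - E) * x := by
    rw [h2, norm_mul, hDE, Complex.norm_real, Real.norm_eq_abs, _root_.abs_of_pos hd]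
  have hb3n : 2 * ‖b3‖ ≤ (D - E) * (y + t * x ^ 2) := by
    have e1 : (2 : ℝ) * ‖b3‖ = ‖2 * b3‖ := by
      rw [norm_mul]; norm_num
    rw [e1, h3]
    calc ‖((D : ℂ) - E) * c2 + ((D : ℂ) - 2 * E) * ((D : ℂ) - E) * c1 ^ 2‖
        ≤ ‖((D : ℂ) - E) * c2‖ + ‖((D : ℂ) - 2 * E) * ((D : ℂ) - E) * c1 ^ 2‖ := norm_add_le _ _
    _ = (D - E) * y + t * ((D - E) * x ^ 2) := by
        rw [norm_mul, norm_mul, norm_mul, norm_pow, hDE, hDE2, Complex.norm_real,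
          Complex.norm_real, Real.norm_eq_abs, Real.norm_eq_abs, _root_.abs_of_pos hd]
        ring
    _ = (D - E) * (y + t * x ^ 2) := by ring
  have hb3n' : ‖b3‖ ≤ (D - E) * (y + t * x ^ 2) / 2 := by linarith
  have habs : ‖b2 ^ 2 - b3 ^ 2‖ ≤ ((D - E) * x) ^ 2
      + ((D - E) * (y + t * x ^ 2) / 2) ^ 2 := by
    calc ‖b2 ^ 2 - b3 ^ 2‖ ≤ ‖b2 ^ 2‖ + ‖b3 ^ 2‖ := norm_sub_le _ _
    _ = ‖b2‖ ^ 2 + ‖b3‖ ^ 2 := by rw [norm_pow, norm_pow]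
    _ ≤ ((D - E) * x) ^ 2 + ((D - E) * (y + t * x ^ 2) / 2) ^ 2 := by
        have h1 : ‖b3‖ ^ 2 ≤ ((D - E) * (y + t * x ^ 2) / 2) ^ 2 :=
          pow_le_pow_left₀ (norm_nonneg _) hb3n' 2
        rw [hb2n]
        linarith
  refine habs.trans ?_
  -- pure real algebra
  have hx1 : x ≤ 1 := hc1
  have hx2 : x ^ 2 ≤ 1 := by nlinarith
  have hu0 : 0 ≤ y + t * x ^ 2 := by positivity
  have hu1 : y + t * x ^ 2 ≤ 1 + (t - 1) * x ^ 2 := by nlinarith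
  have hu2 : (y + t * x ^ 2) ^ 2 ≤ (1 + (t - 1) * x ^ 2) ^ 2 := by
    apply pow_le_pow_left₀ hu0 hu1
  have hkey : 4 * x ^ 2 + (1 + (t - 1) * x ^ 2) ^ 2 ≤ t ^ 2 + 4 := by
    have hH : 0 ≤ (1 - x ^ 2) * (4 + (t - 1) * (t + 1 + (t - 1) * x ^ 2)) := by
      apply mul_nonneg (by linarith)
      nlinarith
    nlinarith [hH]
  have hmain : 4 * x ^ 2 + (y + t * x ^ 2) ^ 2 ≤ t ^ 2 + 4 := by linarith
  have hrhs : (D - E) ^ 2 * (D ^ 2 + 4 * E ^ 2 - 4 * D * E + 4) / 4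
      = (D - E) ^ 2 / 4 * (t ^ 2 + 4) := by rw [hteq]; ring
  rw [hrhs]
  have hfac : ((D - E) * x) ^ 2 + ((D - E) * (y + t * x ^ 2) / 2) ^ 2
      = (D - E) ^ 2 / 4 * (4 * x ^ 2 + (y + t * x ^ 2) ^ 2) := by ring
  rw [hfac]
  apply mul_le_mul_of_nonneg_left hmain (by positivity)

lemma part2_glue (D E : ℝ) (hE : -1 ≤ E) (hED : E < D) (hD : D ≤ 1)
    (g : ℂ → ℂ) (hdiff : DifferentiableOn ℂ g (ball 0 1)) (hg0 : g 0 = 0)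
    (hg1 : deriv g 0 = 1)
    (hode : ∀ z ∈ ball (0 : ℂ) 1, z ≠ 0 →
      z * deriv g z / g z = (1 + (D : ℂ) * (I * z)) / (1 + (E : ℂ) * (I * z))) :
    ∃ (g : ℂ → ℂ) (b : ℕ → ℂ),
        b 0 = 0 ∧
        b 1 = 1 ∧
        (∀ z ∈ Metric.ball (0:ℂ) 1, HasSum (fun n => b n * z ^ n) (g z)) ∧
        (∃ ω : ℂ → ℂ, AnalyticOn ℂ ω (Metric.ball (0:ℂ) 1) ∧ ω 0 = 0 ∧
          (∀ z ∈ Metric.ball (0:ℂ) 1, ω z ∈ Metric.ball (0:ℂ) 1) ∧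
          (∀ z ∈ Metric.ball (0:ℂ) 1, z ≠ 0 →
            z * deriv g z / g z = (1 + (D : ℂ) * ω z) / (1 + (E : ℂ) * ω z))) ∧
        ‖b 2 ^ 2 - b 3 ^ 2‖
          = (D - E) ^ 2 * (D ^ 2 + 4 * E ^ 2 - 4 * D * E + 4) / 4 := by
  obtain ⟨b, hb0, hb1, hbsum⟩ := exists_coeffs hdiff
  rw [hg0] at hb0
  rw [hg1] at hb1
  set ω : ℂ → ℂ := fun z => I * z with hω
  have hωa : AnalyticOnNhd ℂ ω (ball 0 1) := fun z _ => by
    exact (analyticAt_const.mul analyticAt_id)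
  have hω0 : ω 0 = 0 := by simp [hω]
  have hωm : ∀ z ∈ ball (0:ℂ) 1, ω z ∈ ball (0:ℂ) 1 := by
    intro z hz
    rw [mem_ball_zero_iff] at *
    simpa [hω] using hz
  have hode' : ∀ z ∈ ball (0:ℂ) 1, z ≠ 0 →
      z * deriv g z / g z = (1 + (D : ℂ) * ω z) / (1 + (E : ℂ) * ω z) := hode
  have hc1 : deriv ω 0 = I := by
    have := ((hasDerivAt_id (0 : ℂ)).const_mul I).deriv
    simpa [hω] using this
  have hdsl : dslope ω 0 = fun _ => I := by
    funext w
    rcases eq_or_ne w 0 with rfl | hw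
    · rw [dslope_same]; exact hc1
    · rw [dslope_of_ne _ hw, slope_def_field]
      field_simp [hω]
      simp only [hω]; ring
  have hc2 : deriv (dslope ω 0) 0 = 0 := by rw [hdsl]; simp
  obtain ⟨hb2, hb3⟩ := key_coeffs D E hE hED hD g b ω hb0 hb1 hbsum hωa hω0 hωm hode'
  rw [hc1] at hb2
  rw [hc1, hc2] at hb3
  have hb3' : b 3 = -(((D : ℂ) - 2 * E) * ((D : ℂ) - E)) / 2 := by
    linear_combination hb3 / 2 + (((D : ℂ) - 2 * E) * ((D : ℂ) - E) / 2) * Complex.I_sq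
  have hval : b 2 ^ 2 - b 3 ^ 2
      = ((-((D - E) ^ 2 * (D ^ 2 + 4 * E ^ 2 - 4 * D * E + 4) / 4) : ℝ) : ℂ) := by
    rw [hb2, hb3']
    push_cast
    linear_combination (((D : ℂ) - E) ^ 2) * Complex.I_sq
  have hpos : 0 ≤ (D - E) ^ 2 * (D ^ 2 + 4 * E ^ 2 - 4 * D * E + 4) / 4 := by
    nlinarith [sq_nonneg (D - 2 * E), sq_nonneg (D - E)]
  refine ⟨g, b, hb0, hb1, hbsum, ⟨ω, hωa.analyticOn, hω0, hωm, hode'⟩, ?_⟩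
  rw [hval, Complex.norm_real, Real.norm_eq_abs, abs_neg, _root_.abs_of_nonneg hpos]



end JanowskiHelpers


open Complex Metric Set

theorem stmt_4 (D E : ℝ) (hE : -1 ≤ E) (hED : E < D) (hD : D ≤ 1)
    (hcond : 1 ≤ |D - 2 * E|) :
    (∀ (g : ℂ → ℂ) (b : ℕ → ℂ),
        b 0 = 0 →
        b 1 = 1 →
        (∀ z ∈ Metric.ball (0:ℂ) 1, HasSum (fun n => b n * z ^ n) (g z)) →
        (∃ ω : ℂ → ℂ, AnalyticOn ℂ ω (Metric.ball (0:ℂ) 1) ∧ ω 0 = 0 ∧ (∀ z ∈ Metric.ball (0:ℂ) 1, ω z ∈ Metric.ball (0:ℂ) 1) ∧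
          (∀ z ∈ Metric.ball (0:ℂ) 1, z ≠ 0 → z * deriv g z / g z = (1 + (D : ℂ) * ω z) / (1 + (E : ℂ) * ω z))) →
        ‖b 2 ^ 2 - b 3 ^ 2‖ ≤ (D - E) ^ 2 * (D ^ 2 + 4 * E ^ 2 - 4 * D * E + 4) / 4) ∧
    (∃ (g : ℂ → ℂ) (b : ℕ → ℂ),
        b 0 = 0 ∧
        b 1 = 1 ∧
        (∀ z ∈ Metric.ball (0:ℂ) 1, HasSum (fun n => b n * z ^ n) (g z)) ∧
        (∃ ω : ℂ → ℂ, AnalyticOn ℂ ω (Metric.ball (0:ℂ) 1) ∧ ω 0 = 0 ∧ (∀ z ∈ Metric.ball (0:ℂ) 1, ω z ∈ Metric.ball (0:ℂ) 1) ∧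
          (∀ z ∈ Metric.ball (0:ℂ) 1, z ≠ 0 → z * deriv g z / g z = (1 + (D : ℂ) * ω z) / (1 + (E : ℂ) * ω z))) ∧
        ‖b 2 ^ 2 - b 3 ^ 2‖ = (D - E) ^ 2 * (D ^ 2 + 4 * E ^ 2 - 4 * D * E + 4) / 4) := by
  constructor
  · rintro g b hb0 hb1 hbsum ⟨ω, hωA, hω0, hωm, hode⟩
    have hωa : AnalyticOnNhd ℂ ω (ball 0 1) :=
      (isOpen_ball.analyticOn_iff_analyticOnNhd).mp hωA
    obtain ⟨hb2, hb3⟩ := key_coeffs D E hE hED hD g b ω hb0 hb1 hbsum hωa hω0 hωm hode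
    have hsch := schwarz_two hωa.differentiableOn hω0 (fun z hz => hωm z hz)
    exact part1_bound D E hED hcond hb2 hb3 hsch.1 hsch.2
  · rcases eq_or_ne E 0 with rfl | hEne
    · obtain ⟨g, hdiff, hg0, hg1, hode⟩ := ode_case_zero D
      exact part2_glue D 0 hE hED hD g hdiff hg0 hg1 hode
    · obtain ⟨g, hdiff, hg0, hg1, hode⟩ := ode_case_ne D E hE hED hD hEne
      exact part2_glue D E hE hED hD g hdiff hg0 hg1 hode
end

section
/- Let -1 ≤ E < D ≤ 1 with E ≤ min{(D-1)/2, (3D-1)/2}. If g(z) = z + b_2 z^2 + b_3 z^3 + ... belongs to the Janowski starlike class S*[D,E], then |2 b_2^2 b_3 - 2 b_2^2 - b_3^2 + 1| ≤ 1 + 2(D-E)^2 + (3D^2 - 5DE + 2E^2)(D^2 - 3DE + 2E^2)/4, and this bound is sharp. -/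
open Complex Metric Set Filter

noncomputable def mySeries (b : ℕ → ℂ) : FormalMultilinearSeries ℂ ℂ ℂ :=
  fun n => ContinuousMultilinearMap.mkPiRing ℂ (Fin n) (b n)

lemma mySeries_coeff (b : ℕ → ℂ) (n : ℕ) : (mySeries b).coeff n = b n := by
  simp [mySeries, FormalMultilinearSeries.coeff, ContinuousMultilinearMap.mkPiRing_apply]

lemma mySeries_apply (b : ℕ → ℂ) (n : ℕ) (z : ℂ) :
    (mySeries b n fun _ => z) = b n * z ^ n := by
  simp [mySeries, ContinuousMultilinearMap.mkPiRing_apply, smul_eq_mul]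
  ring

lemma hasFPowerSeriesOnBall_of_hasSum (g : ℂ → ℂ) (b : ℕ → ℂ)
    (h : ∀ z ∈ Metric.ball (0:ℂ) 1, HasSum (fun n => b n * z ^ n) (g z)) :
    HasFPowerSeriesOnBall g (mySeries b) 0 1 := by
  constructor
  · apply ENNReal.le_of_forall_nnreal_lt
    intro r hr
    have hrlt : (r : ℝ) < 1 := by exact_mod_cast hr
    have hmem : ((r : ℝ) : ℂ) ∈ Metric.ball (0:ℂ) 1 := by
      simp [Metric.mem_ball, _root_.abs_of_nonneg r.coe_nonneg, hrlt]
    have hs := (h _ hmem).summable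
    have htend : Tendsto (fun n => b n * ((r:ℝ):ℂ) ^ n) atTop (nhds 0) := hs.tendsto_atTop_zero
    apply (mySeries b).le_radius_of_isBigO
    have : (fun n => ‖mySeries b n‖ * (r:ℝ) ^ n) = fun n => ‖b n * ((r:ℝ):ℂ) ^ n‖ := by
      funext n
      simp [mySeries, ContinuousMultilinearMap.norm_mkPiRing, norm_mul, norm_pow,
        _root_.abs_of_nonneg r.coe_nonneg]
    rw [this]
    exact (htend.norm.congr (fun n => rfl)).isBigO_one ℝ
  · exact one_pos
  · intro y hy
    have hy' : y ∈ Metric.ball (0:ℂ) 1 := by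
      rw [← ENNReal.coe_one, Metric.emetric_ball_nnreal] at hy
      simpa using hy
    have := h y hy'
    simp only [zero_add]
    have hf : (fun n => (mySeries b n fun _ => y)) = fun n => b n * y ^ n := by
      funext n; exact mySeries_apply b n y
    rw [hf]; exact this

set_option maxHeartbeats 1000000

lemma coeff_relations (D E : ℝ) (hE : -1 ≤ E) (hED : E < D) (hD : D ≤ 1)
    (g : ℂ → ℂ) (b : ℕ → ℂ) (hb0 : b 0 = 0) (hb1 : b 1 = 1)
    (hsum : ∀ z ∈ Metric.ball (0:ℂ) 1, HasSum (fun n => b n * z ^ n) (g z))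
    (ω : ℂ → ℂ) (hω : AnalyticOnNhd ℂ ω (Metric.ball (0:ℂ) 1)) (hω0 : ω 0 = 0)
    (hmaps : ∀ z ∈ Metric.ball (0:ℂ) 1, ω z ∈ Metric.ball (0:ℂ) 1)
    (heq : ∀ z ∈ Metric.ball (0:ℂ) 1, z ≠ 0 →
      z * deriv g z / g z = (1 + (D : ℂ) * ω z) / (1 + (E : ℂ) * ω z)) :
    b 2 = ((D:ℂ) - E) * dslope ω 0 0 ∧
    2 * b 3 = ((D:ℂ) - E) * dslope (dslope ω 0) 0 0
      + ((D:ℂ) - 2*E) * b 2 * dslope ω 0 0 := by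
  have hP : HasFPowerSeriesOnBall g (mySeries b) 0 1 := hasFPowerSeriesOnBall_of_hasSum g b hsum
  have hPat : HasFPowerSeriesAt g (mySeries b) 0 := hP.hasFPowerSeriesAt
  have hg0 : g 0 = 0 := by
    have h1 := hsum 0 (mem_ball_self one_pos)
    have h2 : HasSum (fun n => b n * (0:ℂ) ^ n) (b 0) := by
      convert hasSum_single (f := fun n => b n * (0:ℂ) ^ n) 0 ?_ using 2
      · simp
      · intro n hn; simp [zero_pow hn]
    rw [h1.unique h2, hb0]
  have hgd0 : deriv g 0 = 1 := by
    rw [hPat.deriv]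
    rw [show ((mySeries b 1) fun _ => (1:ℂ)) = b 1 * 1 ^ 1 from mySeries_apply b 1 1, hb1]
    norm_num
  -- dslope towers for g
  set g1 : ℂ → ℂ := dslope g 0 with hg1def
  set g2 : ℂ → ℂ := dslope g1 0 with hg2def
  set g3 : ℂ → ℂ := dslope g2 0 with hg3def
  have hg1at : HasFPowerSeriesAt g1 (mySeries b).fslope 0 :=
    hPat.has_fpower_series_dslope_fslope
  have hg2at : HasFPowerSeriesAt g2 (mySeries b).fslope.fslope 0 :=
    hg1at.has_fpower_series_dslope_fslope
  have hg3at : HasFPowerSeriesAt g3 (mySeries b).fslope.fslope.fslope 0 :=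
    hg2at.has_fpower_series_dslope_fslope
  have hg1_0 : g1 0 = 1 := by rw [hg1def, dslope_same]; exact hgd0
  have hg2_0 : g2 0 = b 2 := by
    have : (mySeries b).fslope.fslope.coeff 0 = g2 0 := hg2at.coeff_zero 1
    rw [FormalMultilinearSeries.coeff_fslope, FormalMultilinearSeries.coeff_fslope,
      mySeries_coeff] at this
    exact this.symm
  have hg3_0 : g3 0 = b 3 := by
    have : (mySeries b).fslope.fslope.fslope.coeff 0 = g3 0 := hg3at.coeff_zero 1
    rw [FormalMultilinearSeries.coeff_fslope, FormalMultilinearSeries.coeff_fslope,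
      FormalMultilinearSeries.coeff_fslope, mySeries_coeff] at this
    exact this.symm
  -- derivative of g and its dslope tower
  set gd : ℂ → ℂ := deriv g with hgddef
  have hgan : AnalyticOnNhd ℂ g (EMetric.ball (0:ℂ) 1) := hP.analyticOnNhd
  have hgdat : AnalyticAt ℂ gd 0 := by
    refine hgan.deriv 0 ?_
    exact EMetric.mem_ball_self one_pos
  obtain ⟨q, hq⟩ := hgdat
  set h1 : ℂ → ℂ := dslope gd 0 with hh1def
  set h2 : ℂ → ℂ := dslope h1 0 with hh2def
  have hq1 : HasFPowerSeriesAt h1 q.fslope 0 := hq.has_fpower_series_dslope_fslope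
  have hq2 : HasFPowerSeriesAt h2 q.fslope.fslope 0 := hq1.has_fpower_series_dslope_fslope
  have hfact : ∀ n : ℕ, (n.factorial : ℂ) * b n = iteratedDeriv n g 0 := by
    intro n
    have := hP.factorial_smul (1 : ℂ) n
    rw [iteratedDeriv_eq_iteratedFDeriv]
    rw [← this, mySeries_apply]
    simp [nsmul_eq_mul]
  have hgd_0 : gd 0 = 1 := hgd0
  have hh1_0 : h1 0 = 2 * b 2 := by
    rw [hh1def, dslope_same]
    have h2' : iteratedDeriv 2 g 0 = deriv gd 0 := by
      rw [iteratedDeriv_succ, iteratedDeriv_one]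
    have := hfact 2
    rw [h2'] at this
    rw [← this]; norm_num
  have hh2_0 : h2 0 = 3 * b 3 := by
    have hval : q.fslope.fslope.coeff 0 = h2 0 := hq2.coeff_zero 1
    rw [FormalMultilinearSeries.coeff_fslope, FormalMultilinearSeries.coeff_fslope] at hval
    obtain ⟨r, hqb⟩ := hq
    have hf2 := hqb.factorial_smul (1 : ℂ) 2
    have hq2c : (q 2 fun _ => (1:ℂ)) = q.coeff 2 := rfl
    rw [hq2c] at hf2
    have h3' : iteratedFDeriv ℂ 2 gd 0 (fun _ => (1:ℂ)) = iteratedDeriv 3 g 0 := by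
      rw [← iteratedDeriv_eq_iteratedFDeriv, ← iteratedDeriv_succ']
    rw [h3'] at hf2
    rw [← hfact 3] at hf2
    rw [← hval]
    have hs2 : (Nat.factorial 2 : ℕ) • q.coeff 2 = (2 : ℂ) * q.coeff 2 := by
      simp [Nat.factorial, nsmul_eq_mul]
    rw [hs2] at hf2
    have h6 : (Nat.factorial 3 : ℂ) * b 3 = 6 * b 3 := by norm_num [Nat.factorial]
    rw [h6] at hf2
    linear_combination hf2 / 2
  -- omega tower
  have hωat : AnalyticAt ℂ ω 0 := hω 0 (mem_ball_self one_pos)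
  obtain ⟨sω, hsω⟩ := hωat
  set w1 : ℂ → ℂ := dslope ω 0 with hw1def
  set w2 : ℂ → ℂ := dslope w1 0 with hw2def
  have hs1 : HasFPowerSeriesAt w1 sω.fslope 0 := hsω.has_fpower_series_dslope_fslope
  have hs2 : HasFPowerSeriesAt w2 sω.fslope.fslope 0 := hs1.has_fpower_series_dslope_fslope
  set c1 : ℂ := w1 0 with hc1def
  set c2 : ℂ := w2 0 with hc2def
  -- continuity at 0
  have cg2 : ContinuousAt g2 0 := hg2at.analyticAt.continuousAt
  have cg3 : ContinuousAt g3 0 := hg3at.analyticAt.continuousAt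
  have ch1 : ContinuousAt h1 0 := hq1.analyticAt.continuousAt
  have ch2 : ContinuousAt h2 0 := hq2.analyticAt.continuousAt
  have cw1 : ContinuousAt w1 0 := hs1.analyticAt.continuousAt
  have cw2 : ContinuousAt w2 0 := hs2.analyticAt.continuousAt
  -- cross-multiplied equation
  have hcross : ∀ z ∈ Metric.ball (0:ℂ) 1, z ≠ 0 →
      z * gd z * (1 + (E:ℂ) * ω z) = g z * (1 + (D:ℂ) * ω z) := by
    intro z hz hz0
    have hωz : ‖ω z‖ < 1 := by
      simpa [Metric.mem_ball] using hmaps z hz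
    have hne : ∀ c : ℝ, -1 ≤ c → c ≤ 1 → (1 : ℂ) + (c:ℂ) * ω z ≠ 0 := by
      intro c hc1' hc2' h0
      have h1' : (c:ℂ) * ω z = -1 := by linear_combination h0
      have := congrArg norm h1'
      rw [norm_mul, Complex.norm_real, Real.norm_eq_abs] at this
      simp only [norm_neg, norm_one] at this
      have hcle : |c| ≤ 1 := abs_le.2 ⟨hc1', hc2'⟩
      nlinarith [norm_nonneg (ω z)]
    have hE1 : (1 : ℂ) + (E:ℂ) * ω z ≠ 0 := hne E hE (le_trans hED.le hD)
    have hD1 : (1 : ℂ) + (D:ℂ) * ω z ≠ 0 := hne D (le_trans hE hED.le) hD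
    have hgz : g z ≠ 0 := by
      intro h0
      have := heq z hz hz0
      rw [h0, div_zero] at this
      exact (div_ne_zero hD1 hE1) this.symm
    have := heq z hz hz0
    rw [div_eq_div_iff hgz hE1] at this
    linear_combination this
  -- eventual facts
  have hball : ∀ᶠ z in nhdsWithin (0:ℂ) {(0:ℂ)}ᶜ, z ∈ Metric.ball (0:ℂ) 1 :=
    Filter.Eventually.filter_mono nhdsWithin_le_nhds
      (eventually_of_mem (isOpen_ball.mem_nhds (mem_ball_self one_pos)) fun _ hx => hx)
  have hne0 : ∀ᶠ z in nhdsWithin (0:ℂ) {(0:ℂ)}ᶜ, z ≠ (0:ℂ) :=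
    eventually_mem_nhdsWithin
  have hdsl : ∀ (f : ℂ → ℂ) (z : ℂ), z ≠ 0 → f z = f 0 + z * dslope f 0 z := by
    intro f z hz
    rw [dslope_of_ne _ hz, slope_def_field]
    field_simp
    ring
  have hkey : ∀ᶠ z in nhdsWithin (0:ℂ) {(0:ℂ)}ᶜ,
      (b 2 + (E:ℂ)*c1 - (D:ℂ)*c1)
        + z * ((h2 z + (E:ℂ) * w2 z + (E:ℂ) * h1 z * w1 z)
          - (g3 z + (D:ℂ) * w2 z + (D:ℂ) * g2 z * w1 z)) = 0 := by
    filter_upwards [hball, hne0] with z hz hz0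
    have hc := hcross z hz hz0
    have e1 : g z = 0 + z * g1 z := by rw [← hg0]; exact hdsl g z hz0
    have e2 : g1 z = 1 + z * g2 z := by rw [← hg1_0]; exact hdsl g1 z hz0
    have e3 : g2 z = b 2 + z * g3 z := by rw [← hg2_0]; exact hdsl g2 z hz0
    have e4 : gd z = 1 + z * h1 z := by rw [← hgd_0]; exact hdsl gd z hz0
    have e5 : h1 z = 2 * b 2 + z * h2 z := by rw [← hh1_0]; exact hdsl h1 z hz0
    have e6 : ω z = 0 + z * w1 z := by rw [← hω0]; exact hdsl ω z hz0
    have e7 : w1 z = c1 + z * w2 z := by rw [hc1def]; exact hdsl w1 z hz0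
    rw [e1, e2, e3, e4, e5, e6, e7] at hc
    have hz2 : z ^ 2 ≠ 0 := pow_ne_zero _ hz0
    apply mul_left_cancel₀ hz2
    rw [mul_zero]
    rw [e3, e5, e7]
    linear_combination hc
  haveI : (nhdsWithin (0:ℂ) {(0:ℂ)}ᶜ).NeBot := by
    exact Module.punctured_nhds_neBot ℝ ℂ 0
  have cQ : ContinuousAt (fun z : ℂ => (h2 z + (E:ℂ) * w2 z + (E:ℂ) * h1 z * w1 z)
      - (g3 z + (D:ℂ) * w2 z + (D:ℂ) * g2 z * w1 z)) 0 := by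
    exact ((ch2.add (continuousAt_const.mul cw2)).add
      ((continuousAt_const.mul ch1).mul cw1)).sub
      ((cg3.add (continuousAt_const.mul cw2)).add
      ((continuousAt_const.mul cg2).mul cw1))
  have hlim1 : Filter.Tendsto (fun z : ℂ => (b 2 + (E:ℂ)*c1 - (D:ℂ)*c1)
        + z * ((h2 z + (E:ℂ) * w2 z + (E:ℂ) * h1 z * w1 z)
          - (g3 z + (D:ℂ) * w2 z + (D:ℂ) * g2 z * w1 z)))
      (nhdsWithin (0:ℂ) {(0:ℂ)}ᶜ)
      (nhds ((b 2 + (E:ℂ)*c1 - (D:ℂ)*c1) + 0 * ((h2 0 + (E:ℂ) * w2 0 + (E:ℂ) * h1 0 * w1 0)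
          - (g3 0 + (D:ℂ) * w2 0 + (D:ℂ) * g2 0 * w1 0)))) := by
    exact ((continuousAt_const.add (continuousAt_id.mul cQ)).tendsto).mono_left
      nhdsWithin_le_nhds
  have hzero1 : Filter.Tendsto (fun z : ℂ => (b 2 + (E:ℂ)*c1 - (D:ℂ)*c1)
        + z * ((h2 z + (E:ℂ) * w2 z + (E:ℂ) * h1 z * w1 z)
          - (g3 z + (D:ℂ) * w2 z + (D:ℂ) * g2 z * w1 z)))
      (nhdsWithin (0:ℂ) {(0:ℂ)}ᶜ) (nhds 0) :=
    Filter.Tendsto.congr' (Filter.EventuallyEq.symm (hkey : _ =ᶠ[_] fun _ => (0:ℂ)))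
      tendsto_const_nhds
  have hR1 : b 2 + (E:ℂ)*c1 - (D:ℂ)*c1 = 0 := by
    have := tendsto_nhds_unique hlim1 hzero1
    rw [zero_mul, add_zero] at this
    exact this
  have hb2 : b 2 = ((D:ℂ) - E) * c1 := by linear_combination hR1
  refine ⟨hb2, ?_⟩
  -- second relation
  have hkey2 : ∀ᶠ z in nhdsWithin (0:ℂ) {(0:ℂ)}ᶜ,
      (h2 z + (E:ℂ) * w2 z + (E:ℂ) * h1 z * w1 z)
        - (g3 z + (D:ℂ) * w2 z + (D:ℂ) * g2 z * w1 z) = 0 := by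
    filter_upwards [hkey, hne0] with z hk hz0
    rw [hR1, zero_add] at hk
    rcases mul_eq_zero.1 hk with h | h
    · exact absurd h hz0
    · exact h
  have hlim2 : Filter.Tendsto (fun z : ℂ => (h2 z + (E:ℂ) * w2 z + (E:ℂ) * h1 z * w1 z)
        - (g3 z + (D:ℂ) * w2 z + (D:ℂ) * g2 z * w1 z))
      (nhdsWithin (0:ℂ) {(0:ℂ)}ᶜ)
      (nhds ((h2 0 + (E:ℂ) * w2 0 + (E:ℂ) * h1 0 * w1 0)
          - (g3 0 + (D:ℂ) * w2 0 + (D:ℂ) * g2 0 * w1 0))) :=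
    cQ.tendsto.mono_left nhdsWithin_le_nhds
  have hzero2 : Filter.Tendsto (fun z : ℂ => (h2 z + (E:ℂ) * w2 z + (E:ℂ) * h1 z * w1 z)
        - (g3 z + (D:ℂ) * w2 z + (D:ℂ) * g2 z * w1 z))
      (nhdsWithin (0:ℂ) {(0:ℂ)}ᶜ) (nhds 0) :=
    Filter.Tendsto.congr' (Filter.EventuallyEq.symm (hkey2 : _ =ᶠ[_] fun _ => (0:ℂ)))
      tendsto_const_nhds
  have hR2 : (h2 0 + (E:ℂ) * w2 0 + (E:ℂ) * h1 0 * w1 0)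
      - (g3 0 + (D:ℂ) * w2 0 + (D:ℂ) * g2 0 * w1 0) = 0 :=
    tendsto_nhds_unique hlim2 hzero2
  rw [hh2_0, hh1_0, hg3_0, hg2_0, ← hc1def, ← hc2def] at hR2
  linear_combination hR2


lemma schwarz_bounds (ω : ℂ → ℂ) (hω : AnalyticOnNhd ℂ ω (Metric.ball (0:ℂ) 1))
    (hω0 : ω 0 = 0) (hmaps : ∀ z ∈ Metric.ball (0:ℂ) 1, ω z ∈ Metric.ball (0:ℂ) 1) :
    ‖dslope ω 0 0‖ ≤ 1 ∧
    ‖dslope (dslope ω 0) 0 0‖ ≤ 1 - ‖dslope ω 0 0‖ ^ 2 := by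
  set φ : ℂ → ℂ := dslope ω 0 with hφdef
  have hωd : DifferentiableOn ℂ ω (Metric.ball (0:ℂ) 1) := hω.differentiableOn
  have hmapsTo : MapsTo ω (Metric.ball (0:ℂ) 1) (Metric.ball (ω 0) 1) := by
    intro z hz; rw [hω0]; exact hmaps z hz
  have hφle : ∀ z ∈ Metric.ball (0:ℂ) 1, ‖φ z‖ ≤ 1 := by
    intro z hz
    have := Complex.norm_dslope_le_div_of_mapsTo_ball hωd (hmapsTo.mono_right ball_subset_closedBall) hz
    simpa using this
  have hφd : DifferentiableOn ℂ φ (Metric.ball (0:ℂ) 1) := by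
    rw [hφdef]
    exact (differentiableOn_dslope (isOpen_ball.mem_nhds (mem_ball_self one_pos))).2 hωd
  set c1 : ℂ := φ 0 with hc1def
  have hc1le : ‖c1‖ ≤ 1 := by
    simpa using hφle 0 (mem_ball_self one_pos)
  refine ⟨hc1le, ?_⟩
  have hds : dslope φ 0 0 = deriv φ 0 := dslope_same φ 0
  rcases eq_or_lt_of_le hc1le with hcase | hcase
  · -- |c1| = 1 : maximum modulus forces φ constant
    have hmax : IsMaxOn (norm ∘ φ) (Metric.ball (0:ℂ) 1) 0 := by
      intro z hz
      simp only [Function.comp_apply, Set.mem_setOf_eq]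
      rw [← hc1def] at *
      calc ‖φ z‖ ≤ 1 := hφle z hz
        _ = ‖c1‖ := by rw [← hcase]
    have heq := Complex.eqOn_of_isPreconnected_of_isMaxOn_norm
      (convex_ball (0:ℂ) 1).isPreconnected isOpen_ball hφd (mem_ball_self one_pos) hmax
    have hev : φ =ᶠ[nhds (0:ℂ)] fun _ => φ 0 := by
      filter_upwards [isOpen_ball.mem_nhds (mem_ball_self one_pos)] with z hz
      exact heq hz
    have : deriv φ 0 = 0 := by
      rw [hev.deriv_eq]
      simp
    rw [hds, this, norm_zero]
    nlinarith [hcase]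
  · -- |c1| < 1
    set B : ℂ → ℂ := fun z => (φ z - c1) / (1 - (starRingEnd ℂ) c1 * φ z) with hBdef
    have hden : ∀ z ∈ Metric.ball (0:ℂ) 1, (1 : ℂ) - (starRingEnd ℂ) c1 * φ z ≠ 0 := by
      intro z hz h0
      have h1 : (starRingEnd ℂ) c1 * φ z = 1 := by linear_combination -h0
      have := congrArg norm h1
      rw [norm_mul, norm_one, Complex.norm_conj] at this
      nlinarith [hφle z hz, norm_nonneg (φ z), norm_nonneg c1,
        hφle z hz]
    have hBd : DifferentiableOn ℂ B (Metric.ball (0:ℂ) 1) := by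
      apply DifferentiableOn.div
      · exact hφd.sub_const c1
      · exact (differentiableOn_const _).sub ((differentiableOn_const _).mul hφd)
      · exact hden
    have hB0 : B 0 = 0 := by simp [hBdef, ← hc1def]
    have hBle : ∀ z ∈ Metric.ball (0:ℂ) 1, ‖B z‖ ≤ 1 := by
      intro z hz
      rw [hBdef]
      simp only [norm_div]
      rw [div_le_one_iff]
      left
      constructor
      · rw [norm_pos_iff]; exact hden z hz
      · -- ‖φ z - c1‖ ≤ ‖1 - conj c1 * φ z‖
        have h1 : ‖φ z‖ ≤ 1 := hφle z hz
        have hn1 : Complex.normSq (φ z) ≤ 1 := by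
          rw [← Complex.sq_norm]
          nlinarith [norm_nonneg (φ z)]
        have hn2 : Complex.normSq c1 ≤ 1 := by
          rw [← Complex.sq_norm]
          nlinarith [norm_nonneg c1]
        have key : ‖φ z - c1‖ ^ 2 ≤ ‖1 - (starRingEnd ℂ) c1 * φ z‖ ^ 2 := by
          rw [Complex.sq_norm, Complex.sq_norm]
          rw [Complex.normSq_sub, Complex.normSq_sub]
          rw [Complex.normSq_mul, Complex.normSq_conj, Complex.normSq_one]
          have hre : ((1:ℂ) * (starRingEnd ℂ) ((starRingEnd ℂ) c1 * φ z)).re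
              = (φ z * (starRingEnd ℂ) c1).re := by
            simp [Complex.mul_re, Complex.conj_re, Complex.conj_im]
            ring
          rw [hre]
          nlinarith [Complex.normSq_nonneg (φ z), Complex.normSq_nonneg c1]
        nlinarith [norm_nonneg (φ z - c1), norm_nonneg (1 - (starRingEnd ℂ) c1 * φ z)]
    have hderivB : ‖deriv B 0‖ ≤ 1 := by
      have hεbound : ∀ ε : ℝ, 0 < ε → ‖deriv B 0‖ ≤ 1 + ε := by
        intro ε hε
        have hmapsB : MapsTo B (Metric.ball (0:ℂ) 1) (Metric.ball (B 0) (1 + ε)) := by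
          intro z hz
          rw [hB0, Metric.mem_ball, dist_zero_right]
          exact lt_of_le_of_lt (hBle z hz) (by linarith)
        have := Complex.norm_dslope_le_div_of_mapsTo_ball hBd (hmapsB.mono_right ball_subset_closedBall) (mem_ball_self one_pos)
        rw [dslope_same] at this
        simpa using this
      linarith [le_of_forall_pos_le_add hεbound]
    -- compute deriv B 0
    have hφ0d : DifferentiableAt ℂ φ 0 :=
      hφd.differentiableAt (isOpen_ball.mem_nhds (mem_ball_self one_pos))
    have hnum : HasDerivAt (fun z => φ z - c1) (deriv φ 0) 0 :=
      (hφ0d.hasDerivAt).sub_const c1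
    have hdenAt : HasDerivAt (fun z => (1:ℂ) - (starRingEnd ℂ) c1 * φ z)
        (-((starRingEnd ℂ) c1 * deriv φ 0)) 0 :=
      (HasDerivAt.const_mul _ hφ0d.hasDerivAt).const_sub 1
    have hden0 : (1:ℂ) - (starRingEnd ℂ) c1 * φ 0 ≠ 0 := hden 0 (mem_ball_self one_pos)
    have hBderiv : HasDerivAt B
        ((deriv φ 0 * (1 - (starRingEnd ℂ) c1 * φ 0) -
          (φ 0 - c1) * -((starRingEnd ℂ) c1 * deriv φ 0)) /
          (1 - (starRingEnd ℂ) c1 * φ 0) ^ 2) 0 := hnum.div hdenAt hden0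
    have hφ0 : φ 0 = c1 := rfl
    have hval : deriv B 0 = deriv φ 0 / (1 - (starRingEnd ℂ) c1 * c1) := by
      rw [hBderiv.deriv, hφ0]
      rw [hφ0] at hden0
      field_simp
      ring
    rw [hds]
    have hKnorm : ‖(1:ℂ) - (starRingEnd ℂ) c1 * c1‖ = 1 - ‖c1‖ ^ 2 := by
      have : (starRingEnd ℂ) c1 * c1 = ((Complex.normSq c1 : ℝ) : ℂ) := by
        rw [mul_comm, Complex.mul_conj]
      rw [this]
      rw [← Complex.ofReal_one, ← Complex.ofReal_sub, Complex.norm_real, Real.norm_eq_abs]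
      rw [_root_.abs_of_nonneg]
      · rw [Complex.normSq_eq_norm_sq]
      · rw [Complex.normSq_eq_norm_sq]; nlinarith [hcase, norm_nonneg c1]
    have := hderivB
    rw [hval] at this
    rw [norm_div, hKnorm] at this
    rw [div_le_one (by nlinarith [hcase, norm_nonneg c1])] at this
    simpa using this


lemma real_bound (τ A a r α : ℝ) (hτ : 0 < τ) (hA0 : 0 ≤ A) (h4 : (1+A)^2 ≤ 4*τ)
    (hαval : 4*α = τ*(4*τ - A^2)) (ha0 : 0 ≤ a) (ha1 : a ≤ 1) (hr0 : 0 ≤ r)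
    (hr : r ≤ 1 - a^2) :
    α*a^4 + 2*τ*a^2 + 1 + τ/4*r^2 + τ*A/2*(a^2*r) ≤ 1 + 2*τ + α := by
  have hα : 0 ≤ α := by nlinarith
  have hG0 : 0 ≤ α + 2*τ - τ/4 := by nlinarith
  have hG1 : 0 ≤ 2*α + 2*τ - τ*A/2 := by nlinarith
  have hm : 0 ≤ 1 - a^2 := by nlinarith
  have T1 : 0 ≤ (1-a^2)^2 * (α + 2*τ - τ/4) := mul_nonneg (sq_nonneg _) hG0
  have T2 : 0 ≤ ((1-a^2)*a^2) * (2*α + 2*τ - τ*A/2) :=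
    mul_nonneg (mul_nonneg hm (sq_nonneg a)) hG1
  have T3 : 0 ≤ (τ/4) * ((1 - a^2 - r) * (1 - a^2 + r)) :=
    mul_nonneg (by linarith) (mul_nonneg (by linarith) (by linarith))
  have T4 : 0 ≤ (τ*A/2) * (a^2 * (1 - a^2 - r)) :=
    mul_nonneg (by positivity) (mul_nonneg (sq_nonneg a) (by linarith))
  nlinarith [T1, T2, T3, T4]

lemma abs_bound (D E : ℝ) (hE : -1 ≤ E) (hED : E < D) (hD : D ≤ 1)
    (hcond : E ≤ min ((D - 1) / 2) ((3 * D - 1) / 2))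
    (b2 b3 c1 c2 : ℂ)
    (h2 : b2 = ((D:ℂ) - E) * c1)
    (h3 : 2 * b3 = ((D:ℂ) - E) * c2 + ((D:ℂ) - 2*E) * b2 * c1)
    (hc1 : ‖c1‖ ≤ 1) (hc2 : ‖c2‖ ≤ 1 - ‖c1‖ ^ 2) :
    ‖2 * b2 ^ 2 * b3 - 2 * b2 ^ 2 - b3 ^ 2 + 1‖ ≤
      1 + 2 * (D - E) ^ 2 +
        (3 * D ^ 2 - 5 * D * E + 2 * E ^ 2) * (D ^ 2 - 3 * D * E + 2 * E ^ 2) / 4 := by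
  set t : ℝ := D - E with htdef
  have ht : 0 < t := by simp [htdef]; linarith
  have hu1 : 1 ≤ 2*t - D := by
    have := le_trans hcond (min_le_left _ _); simp [htdef]; linarith
  have hu2 : 1 ≤ 2*t + D := by
    have := le_trans hcond (min_le_right _ _); simp [htdef]; linarith
  have hAle : |D| ≤ 2*t - 1 := abs_le.2 ⟨by linarith, by linarith⟩
  have hb3 : b3 = (((D:ℂ) - E) * c2 + ((D:ℂ) - 2*E) * (((D:ℂ) - E) * c1) * c1)/2 := by
    rw [h2] at h3
    linear_combination h3 / 2
  have hΦ : 2 * b2 ^ 2 * b3 - 2 * b2 ^ 2 - b3 ^ 2 + 1 =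
      ((t^4 - t^2*D^2/4 : ℝ) : ℂ) * c1^4 + (-(2*t^2 : ℝ) : ℂ) * c1^2 + 1
        + (-(t^2/4 : ℝ) : ℂ) * c2^2 + ((t^2*D/2 : ℝ) : ℂ) * (c1^2*c2) := by
    rw [h2, hb3, htdef]
    push_cast
    ring
  rw [hΦ]
  set a : ℝ := ‖c1‖ with hadef
  set r : ℝ := ‖c2‖ with hrdef
  have ha0 : 0 ≤ a := norm_nonneg c1
  have hr0 : 0 ≤ r := norm_nonneg c2
  have tri : ‖((t^4 - t^2*D^2/4 : ℝ) : ℂ) * c1^4 + (-(2*t^2 : ℝ) : ℂ) * c1^2 + 1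
        + (-(t^2/4 : ℝ) : ℂ) * c2^2 + ((t^2*D/2 : ℝ) : ℂ) * (c1^2*c2)‖ ≤
      |t^4 - t^2*D^2/4| * a^4 + (2*t^2) * a^2 + 1 + (t^2/4) * r^2 + (t^2*|D|/2) * (a^2*r) := by
    calc ‖((t^4 - t^2*D^2/4 : ℝ) : ℂ) * c1^4 + (-(2*t^2 : ℝ) : ℂ) * c1^2 + 1
        + (-(t^2/4 : ℝ) : ℂ) * c2^2 + ((t^2*D/2 : ℝ) : ℂ) * (c1^2*c2)‖
        ≤ ‖((t^4 - t^2*D^2/4 : ℝ) : ℂ) * c1^4 + (-(2*t^2 : ℝ) : ℂ) * c1^2 + 1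
            + (-(t^2/4 : ℝ) : ℂ) * c2^2‖ + ‖((t^2*D/2 : ℝ) : ℂ) * (c1^2*c2)‖ :=
          norm_add_le _ _
      _ ≤ (‖((t^4 - t^2*D^2/4 : ℝ) : ℂ) * c1^4 + (-(2*t^2 : ℝ) : ℂ) * c1^2 + 1‖
            + ‖(-(t^2/4 : ℝ) : ℂ) * c2^2‖)
            + ‖((t^2*D/2 : ℝ) : ℂ) * (c1^2*c2)‖ := by
          gcongr
          exact norm_add_le _ _
      _ ≤ ((‖((t^4 - t^2*D^2/4 : ℝ) : ℂ) * c1^4 + (-(2*t^2 : ℝ) : ℂ) * c1^2‖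
            + ‖(1:ℂ)‖) + ‖(-(t^2/4 : ℝ) : ℂ) * c2^2‖)
            + ‖((t^2*D/2 : ℝ) : ℂ) * (c1^2*c2)‖ := by
          gcongr
          exact norm_add_le _ _
      _ ≤ (((‖((t^4 - t^2*D^2/4 : ℝ) : ℂ) * c1^4‖
            + ‖(-(2*t^2 : ℝ) : ℂ) * c1^2‖)
            + ‖(1:ℂ)‖) + ‖(-(t^2/4 : ℝ) : ℂ) * c2^2‖)
            + ‖((t^2*D/2 : ℝ) : ℂ) * (c1^2*c2)‖ := by
          gcongr
          exact norm_add_le _ _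
      _ = |t^4 - t^2*D^2/4| * a^4 + (2*t^2) * a^2 + 1 + (t^2/4) * r^2
            + (t^2*|D|/2) * (a^2*r) := by
          simp only [norm_mul, Complex.norm_real, norm_pow, norm_one]
          rw [← hadef, ← hrdef]
          simp only [norm_neg, Complex.norm_real, Real.norm_eq_abs]
          rw [_root_.abs_of_nonneg (by positivity : (0:ℝ) ≤ 2*t^2),
              _root_.abs_of_nonneg (by positivity : (0:ℝ) ≤ t^2/4)]
          have habsD : |t^2*D/2| = t^2*|D|/2 := by
            rw [abs_div, abs_mul, _root_.abs_of_nonneg (sq_nonneg t)]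
            norm_num
          rw [habsD]
  refine le_trans tri ?_
  have hD2 : D^2 ≤ (2*t-1)^2 := by
    nlinarith [abs_nonneg D, hAle, _root_.sq_abs D]
  have hαabs : |t^4 - t^2*D^2/4| = t^4 - t^2*D^2/4 := by
    rw [_root_.abs_of_nonneg]
    nlinarith [hD2, mul_le_mul_of_nonneg_left hD2 (by positivity : (0:ℝ) ≤ t^2/4),
      mul_nonneg (mul_nonneg ht.le ht.le) (by linarith : (0:ℝ) ≤ 4*t - 1)]
  rw [hαabs]
  have hM : 1 + 2 * (D - E) ^ 2 +
      (3 * D ^ 2 - 5 * D * E + 2 * E ^ 2) * (D ^ 2 - 3 * D * E + 2 * E ^ 2) / 4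
      = 1 + 2*(t^2) + (t^4 - t^2*D^2/4) := by
    rw [htdef]; ring
  rw [hM]
  have := real_bound (t^2) |D| a r (t^4 - t^2*D^2/4) (by positivity) (abs_nonneg D)
    (by nlinarith [abs_nonneg D, hAle]) (by rw [← _root_.sq_abs D]; ring) ha0 hc1 hr0 hc2
  nlinarith [this]


lemma sharp_of (D E : ℝ) (hE : -1 ≤ E) (hED : E < D) (hD : D ≤ 1)
    (hcond : E ≤ min ((D - 1) / 2) ((3 * D - 1) / 2))
    (L : ℂ → ℂ) (hL0 : L 0 = 0)
    (hLd : ∀ z ∈ Metric.ball (0:ℂ) 1,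
      HasDerivAt L (Complex.I * ((D:ℂ) - E) / (1 + Complex.I * E * z)) z) :
    ∃ (g : ℂ → ℂ) (b : ℕ → ℂ),
        b 0 = 0 ∧
        b 1 = 1 ∧
        (∀ z ∈ Metric.ball (0:ℂ) 1, HasSum (fun n => b n * z ^ n) (g z)) ∧
        (∃ ω : ℂ → ℂ, AnalyticOn ℂ ω (Metric.ball (0:ℂ) 1) ∧ ω 0 = 0 ∧
          (∀ z ∈ Metric.ball (0:ℂ) 1, ω z ∈ Metric.ball (0:ℂ) 1) ∧
          (∀ z ∈ Metric.ball (0:ℂ) 1, z ≠ 0 →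
            z * deriv g z / g z = (1 + (D : ℂ) * ω z) / (1 + (E : ℂ) * ω z))) ∧
        ‖2 * b 2 ^ 2 * b 3 - 2 * b 2 ^ 2 - b 3 ^ 2 + 1‖ =
          1 + 2 * (D - E) ^ 2 +
            (3 * D ^ 2 - 5 * D * E + 2 * E ^ 2) * (D ^ 2 - 3 * D * E + 2 * E ^ 2) / 4 := by
  have ht : (0:ℝ) < D - E := by linarith
  have hu1 : (1:ℝ) ≤ D - 2*E := by
    have := le_trans hcond (min_le_left _ _); linarith
  have hu2 : (1:ℝ) ≤ 3*D - 2*E := by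
    have := le_trans hcond (min_le_right _ _); linarith
  set g : ℂ → ℂ := fun z => z * Complex.exp (L z) with hgdef
  have hne : ∀ z ∈ Metric.ball (0:ℂ) 1, (1:ℂ) + Complex.I * E * z ≠ 0 := by
    intro z hz h0
    have hre := congrArg Complex.re h0
    simp [Complex.add_re, Complex.mul_re, Complex.mul_im, Complex.I_re, Complex.I_im] at hre
    have haz : ‖z‖ < 1 := by simpa [Metric.mem_ball] using hz
    have him : |z.im| ≤ ‖z‖ := Complex.abs_im_le_norm z
    have hEabs : |E| ≤ 1 := abs_le.2 ⟨hE, by linarith⟩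
    have : |E * z.im| < 1 := by
      rw [abs_mul]
      calc |E| * |z.im| ≤ 1 * ‖z‖ := by
            apply mul_le_mul hEabs him (abs_nonneg _) zero_le_one
        _ < 1 := by linarith
    rw [abs_lt] at this
    -- hre should say 1 - E * z.im = 0
    nlinarith [this.1, this.2]
  have hgd : ∀ z ∈ Metric.ball (0:ℂ) 1, HasDerivAt g
      (Complex.exp (L z) + z * (Complex.I * ((D:ℂ) - E) / (1 + Complex.I * E * z))
        * Complex.exp (L z)) z := by
    intro z hz
    have h1 : HasDerivAt (fun w => Complex.exp (L w))
        (Complex.exp (L z) * (Complex.I * ((D:ℂ) - E) / (1 + Complex.I * E * z))) z :=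
      HasDerivAt.cexp (hLd z hz)
    have h2 : HasDerivAt (fun w => w * Complex.exp (L w)) _ z := (hasDerivAt_id' z).mul h1
    simpa [hgdef, mul_comm, mul_assoc, mul_left_comm] using h2
  have hgdiff : DifferentiableOn ℂ g (Metric.ball (0:ℂ) 1) := fun z hz =>
    ((hgd z hz).differentiableAt).differentiableWithinAt
  have hhalf : Metric.closedBall (0:ℂ) (((1/2 : NNReal)):ℝ) ⊆ Metric.ball (0:ℂ) 1 := by
    intro x hx
    simp only [Metric.mem_closedBall, Metric.mem_ball] at hx ⊢
    push_cast at hx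
    linarith
  have hP0 : HasFPowerSeriesOnBall g (cauchyPowerSeries g 0 ((1/2 : NNReal):ℝ)) 0
      ((1/2 : NNReal) : ENNReal) :=
    (hgdiff.mono hhalf).hasFPowerSeriesOnBall (by norm_num)
  set b : ℕ → ℂ := fun n => (cauchyPowerSeries g 0 ((1/2 : NNReal):ℝ)).coeff n with hbdef
  have hPat : HasFPowerSeriesAt g (cauchyPowerSeries g 0 ((1/2 : NNReal):ℝ)) 0 :=
    hP0.hasFPowerSeriesAt
  have hg00 : g 0 = 0 := by simp [hgdef]
  have hb0 : b 0 = 0 := by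
    have := hPat.coeff_zero 1
    rw [hbdef]
    simpa [hg00] using this
  have hb1 : b 1 = 1 := by
    have hd := hPat.deriv
    have hd0 : deriv g 0 = 1 := by
      rw [(hgd 0 (mem_ball_self one_pos)).deriv]
      simp [hL0]
    rw [hbdef]
    have h1 : (cauchyPowerSeries g 0 ((1/2 : NNReal):ℝ)).coeff 1
        = (cauchyPowerSeries g 0 ((1/2 : NNReal):ℝ)) 1 fun _ => 1 := rfl
    simp only [h1, ← hd, hd0]
  have hsum : ∀ z ∈ Metric.ball (0:ℂ) 1, HasSum (fun n => b n * z ^ n) (g z) := by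
    intro z hz
    have haz : ‖z‖ < 1 := by simpa [Metric.mem_ball] using hz
    set r : ℝ := (1 + ‖z‖)/2 with hrdef
    have hr0 : 0 ≤ r := by positivity
    have hrlt : r < 1 := by simp only [hrdef]; linarith
    have hzr : ‖z‖ < r := by simp only [hrdef]; nlinarith [norm_nonneg z]
    set R : NNReal := Real.toNNReal r with hRdef
    have hRr : (R : ℝ) = r := Real.coe_toNNReal r hr0
    have hsub : Metric.closedBall (0:ℂ) (R:ℝ) ⊆ Metric.ball (0:ℂ) 1 := by
      intro x hx
      simp only [Metric.mem_closedBall, Metric.mem_ball] at hx ⊢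
      rw [hRr] at hx
      linarith [hx]
    have hR0 : (0:NNReal) < R := by
      rw [← NNReal.coe_lt_coe, hRr]
      push_cast
      positivity
    have hPR : HasFPowerSeriesOnBall g (cauchyPowerSeries g 0 (R:ℝ)) 0 (R : ENNReal) :=
      (hgdiff.mono hsub).hasFPowerSeriesOnBall hR0
    have hEq : cauchyPowerSeries g 0 (R:ℝ) = cauchyPowerSeries g 0 ((1/2 : NNReal):ℝ) :=
      hPR.hasFPowerSeriesAt.eq_formalMultilinearSeries hPat
    have hzmem : z ∈ EMetric.ball (0:ℂ) (R : ENNReal) := by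
      rw [EMetric.ball, Metric.emetric_ball_nnreal]
      simp only [Metric.mem_ball, dist_zero_right]
      rw [hRr]
      exact hzr
    have := hPR.hasSum hzmem
    rw [zero_add, hEq] at this
    have happ : ∀ n : ℕ, ((cauchyPowerSeries g 0 ((1/2 : NNReal):ℝ)) n fun _ => z)
        = b n * z ^ n := by
      intro n
      rw [FormalMultilinearSeries.apply_eq_pow_smul_coeff, hbdef, smul_eq_mul]
      ring
    exact HasSum.congr_fun this (fun n => (happ n).symm)
  -- the omega function
  set ω : ℂ → ℂ := fun z => Complex.I * z with hωdef
  have hωan : AnalyticOnNhd ℂ ω (Metric.ball (0:ℂ) 1) :=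
    (differentiable_id.const_mul Complex.I).differentiableOn.analyticOnNhd isOpen_ball
  have hω0 : ω 0 = 0 := by simp [hωdef]
  have hωmaps : ∀ z ∈ Metric.ball (0:ℂ) 1, ω z ∈ Metric.ball (0:ℂ) 1 := by
    intro z hz
    simpa [hωdef, Metric.mem_ball] using hz
  have heq : ∀ z ∈ Metric.ball (0:ℂ) 1, z ≠ 0 →
      z * deriv g z / g z = (1 + (D : ℂ) * ω z) / (1 + (E : ℂ) * ω z) := by
    intro z hz hz0
    rw [(hgd z hz).deriv]
    have hexp : Complex.exp (L z) ≠ 0 := Complex.exp_ne_zero _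
    have hden := hne z hz
    have hωE : (1:ℂ) + (E:ℂ) * ω z = 1 + Complex.I * E * z := by rw [hωdef]; ring
    have hωD : (1:ℂ) + (D:ℂ) * ω z = 1 + Complex.I * D * z := by rw [hωdef]; ring
    rw [hωE, hωD, hgdef]
    have hdenD : (1:ℂ) + Complex.I * E * z ≠ 0 := hden
    have hdenD' : (1:ℂ) + z * Complex.I * E ≠ 0 := by
      rw [show z * Complex.I * (E:ℂ) = Complex.I * E * z by ring]; exact hden
    field_simp
    ring
  -- coefficient values via coeff_relations
  obtain ⟨hb2, hb3⟩ := coeff_relations D E hE hED hD g b hb0 hb1 hsum ω hωan hω0 hωmaps heq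
  have hw1 : dslope ω 0 = fun _ : ℂ => Complex.I := by
    funext z
    rcases eq_or_ne z 0 with rfl | hz
    · rw [dslope_same]
      have : HasDerivAt ω (Complex.I * 1) 0 := (hasDerivAt_id (0:ℂ)).const_mul Complex.I
      rw [this.deriv]
      simp
    · rw [dslope_of_ne _ hz, slope_def_field, hωdef]
      field_simp
  have hc1 : dslope ω 0 0 = Complex.I := by rw [hw1]
  have hc2 : dslope (dslope ω 0) 0 0 = 0 := by
    rw [hw1, dslope_same]
    simp
  rw [hc1] at hb2
  rw [hc2, hc1] at hb3
  have hb2v : b 2 = ((D:ℂ) - E) * Complex.I := hb2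
  have hb3v : b 3 = -(((D:ℂ) - 2*E) * ((D:ℂ) - E)) / 2 := by
    rw [hb2v] at hb3
    have hI2 : Complex.I^2 = -1 := Complex.I_sq
    field_simp
    linear_combination hb3 + ((D:ℂ) - 2*E) * ((D:ℂ) - E) * hI2
  -- final value computation
  have hval : 2 * b 2 ^ 2 * b 3 - 2 * b 2 ^ 2 - b 3 ^ 2 + 1 =
      (((1 + 2*(D-E)^2 + (D-E)^3*(D-2*E) - (D-E)^2*(D-2*E)^2/4 : ℝ)) : ℂ) := by
    rw [hb2v, hb3v]
    have hI2 : Complex.I^2 = -1 := Complex.I_sq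
    push_cast
    linear_combination (-((((D:ℂ))-E)^3*(((D:ℂ))-2*E) + 2*(((D:ℂ))-E)^2)) * hI2
  have hnonneg : (0:ℝ) ≤ 1 + 2*(D-E)^2 + (D-E)^3*(D-2*E) - (D-E)^2*(D-2*E)^2/4 := by
    nlinarith [sq_nonneg (D-E), mul_nonneg (mul_nonneg (sq_nonneg (D-E))
      (by linarith : (0:ℝ) ≤ D - 2*E)) (by linarith : (0:ℝ) ≤ 3*D - 2*E)]
  refine ⟨g, b, hb0, hb1, hsum, ⟨ω, (isOpen_ball.analyticOn_iff_analyticOnNhd).2 hωan,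
    hω0, hωmaps, heq⟩, ?_⟩
  rw [hval, Complex.norm_real, Real.norm_eq_abs, _root_.abs_of_nonneg hnonneg]
  ring


theorem stmt_5 (D E : ℝ) (hE : -1 ≤ E) (hED : E < D) (hD : D ≤ 1)
    (hcond : E ≤ min ((D - 1) / 2) ((3 * D - 1) / 2)) :
    (∀ (g : ℂ → ℂ) (b : ℕ → ℂ),
        b 0 = 0 →
        b 1 = 1 →
        (∀ z ∈ Metric.ball (0:ℂ) 1, HasSum (fun n => b n * z ^ n) (g z)) →
        (∃ ω : ℂ → ℂ, AnalyticOn ℂ ω (Metric.ball (0:ℂ) 1) ∧ ω 0 = 0 ∧ (∀ z ∈ Metric.ball (0:ℂ) 1, ω z ∈ Metric.ball (0:ℂ) 1) ∧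
          (∀ z ∈ Metric.ball (0:ℂ) 1, z ≠ 0 → z * deriv g z / g z = (1 + (D : ℂ) * ω z) / (1 + (E : ℂ) * ω z))) →
        ‖(2 * b 2 ^ 2 * b 3 - 2 * b 2 ^ 2 - b 3 ^ 2 + 1)‖ ≤ 1 + 2 * (D - E) ^ 2 + (3 * D ^ 2 - 5 * D * E + 2 * E ^ 2) * (D ^ 2 - 3 * D * E + 2 * E ^ 2) / 4) ∧
    (∃ (g : ℂ → ℂ) (b : ℕ → ℂ),
        b 0 = 0 ∧
        b 1 = 1 ∧
        (∀ z ∈ Metric.ball (0:ℂ) 1, HasSum (fun n => b n * z ^ n) (g z)) ∧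
        (∃ ω : ℂ → ℂ, AnalyticOn ℂ ω (Metric.ball (0:ℂ) 1) ∧ ω 0 = 0 ∧ (∀ z ∈ Metric.ball (0:ℂ) 1, ω z ∈ Metric.ball (0:ℂ) 1) ∧
          (∀ z ∈ Metric.ball (0:ℂ) 1, z ≠ 0 → z * deriv g z / g z = (1 + (D : ℂ) * ω z) / (1 + (E : ℂ) * ω z))) ∧
        ‖(2 * b 2 ^ 2 * b 3 - 2 * b 2 ^ 2 - b 3 ^ 2 + 1)‖ = 1 + 2 * (D - E) ^ 2 + (3 * D ^ 2 - 5 * D * E + 2 * E ^ 2) * (D ^ 2 - 3 * D * E + 2 * E ^ 2) / 4) := by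
  constructor
  · intro g b hb0 hb1 hsum hex
    obtain ⟨ω, hωan, hω0, hωmaps, heq⟩ := hex
    have hωan' : AnalyticOnNhd ℂ ω (Metric.ball (0:ℂ) 1) :=
      (isOpen_ball.analyticOn_iff_analyticOnNhd).1 hωan
    obtain ⟨hb2, hb3⟩ := coeff_relations D E hE hED hD g b hb0 hb1 hsum ω hωan' hω0 hωmaps heq
    obtain ⟨hs1, hs2⟩ := schwarz_bounds ω hωan' hω0 hωmaps
    exact abs_bound D E hE hED hD hcond (b 2) (b 3) (dslope ω 0 0)
      (dslope (dslope ω 0) 0 0) hb2 hb3 hs1 hs2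
  · have hslit : ∀ z ∈ Metric.ball (0:ℂ) 1, (1 + Complex.I * E * z) ∈ Complex.slitPlane := by
      intro z hz
      apply Complex.mem_slitPlane_iff.2
      left
      have haz : ‖z‖ < 1 := by simpa [Metric.mem_ball] using hz
      have him : |z.im| ≤ ‖z‖ := Complex.abs_im_le_norm z
      have hEabs : |E| ≤ 1 := abs_le.2 ⟨hE, by linarith⟩
      have hlt : |E * z.im| < 1 := by
        rw [abs_mul]
        calc |E| * |z.im| ≤ 1 * ‖z‖ :=
              mul_le_mul hEabs him (abs_nonneg _) zero_le_one
          _ < 1 := by linarith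
      rw [abs_lt] at hlt
      have hre : (1 + Complex.I * (E:ℂ) * z).re = 1 - E * z.im := by
        simp [Complex.add_re, Complex.mul_re, Complex.mul_im]
        ring
      rw [hre]
      linarith [hlt.2]
    rcases eq_or_ne E 0 with hE0 | hE0
    · apply sharp_of D E hE hED hD hcond (fun z => Complex.I * ((D:ℂ) - E) * z) (by simp)
      intro z hz
      have h1 : HasDerivAt (fun z : ℂ => Complex.I * ((D:ℂ) - E) * z)
          (Complex.I * ((D:ℂ) - E) * 1) z := (hasDerivAt_id z).const_mul _
      convert h1 using 1
      rw [hE0]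
      push_cast
      simp
    · apply sharp_of D E hE hED hD hcond
        (fun z => (((D:ℂ) - E)/(E:ℂ)) * Complex.log (1 + Complex.I * E * z)) (by simp)
      intro z hz
      have hw : HasDerivAt (fun w : ℂ => 1 + Complex.I * E * w) (Complex.I * E) z := by
        simpa using ((hasDerivAt_id z).const_mul (Complex.I * (E:ℂ))).const_add 1
      have hlog := hw.clog (hslit z hz)
      have := hlog.const_mul (((D:ℂ) - E)/(E:ℂ))
      refine HasDerivAt.congr_deriv this ?_
      have hEc : (E:ℂ) ≠ 0 := by exact_mod_cast hE0
      have hden : (1 : ℂ) + Complex.I * E * z ≠ 0 :=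
        Complex.slitPlane_ne_zero (hslit z hz)
      field_simp
end

section
/- Let Φ be a biholomorphic function on the unit disk with Φ(0) = 1, Re Φ > 0, Φ'(0) > 0, Φ''(0) ∈ ℝ, and 2Φ'(0) - 2Φ'(0)^2 ≤ Φ''(0) ≤ 6Φ'(0)^2 - 2Φ'(0). If g(z) = z + b_2 z^2 + b_3 z^3 + ... is analytic on U and z g'(z)/g(z) is subordinate to Φ, then |2 b_2^2 b_3 - 2 b_2^2 - b_3^2 + 1| ≤ 1 + 2Φ'(0)^2 + (Φ'(0)^2/4)(3Φ'(0) - Φ''(0)/(2Φ'(0)))(Φ''(0)/(2Φ'(0)) + Φ'(0)). -/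
open Complex Metric Set

open Filter Topology FormalMultilinearSeries
open scoped ENNReal NNReal
set_option maxHeartbeats 1000000

private lemma coeff_eq_aux {f : ℂ → ℂ} {p : FormalMultilinearSeries ℂ ℂ ℂ} {x : ℂ} {r : ℝ≥0∞}
    (h : HasFPowerSeriesOnBall f p x r) (n : ℕ) :
    iteratedDeriv n f x = (Nat.factorial n : ℂ) * p.coeff n := by
  have h1 := h.factorial_smul (1 : ℂ) n
  rw [iteratedDeriv_eq_iteratedFDeriv, ← h1, nsmul_eq_mul]
  rfl

private lemma coeff_eq_aux' {f : ℂ → ℂ} {p : FormalMultilinearSeries ℂ ℂ ℂ} {x : ℂ}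
    (h : HasFPowerSeriesAt f p x) (n : ℕ) :
    iteratedDeriv n f x = (Nat.factorial n : ℂ) * p.coeff n := by
  obtain ⟨r, hr⟩ := h
  exact coeff_eq_aux hr n

private lemma analyticAt_deriv_aux {u : ℂ → ℂ} {x : ℂ} (hu : AnalyticAt ℂ u x) :
    AnalyticAt ℂ (deriv u) x := by
  obtain ⟨s, hs, ho, hx⟩ := _root_.eventually_nhds_iff.mp hu.eventually_analyticAt
  exact (AnalyticOnNhd.deriv (fun z hz => hs z hz)) x hx

private lemma ev_deriv_mul_aux {u v : ℂ → ℂ} {x : ℂ} (hu : AnalyticAt ℂ u x)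
    (hv : AnalyticAt ℂ v x) :
    deriv (fun z => u z * v z) =ᶠ[𝓝 x] fun z => deriv u z * v z + u z * deriv v z := by
  filter_upwards [hu.eventually_analyticAt, hv.eventually_analyticAt] with z hz1 hz2
  exact deriv_mul hz1.differentiableAt hz2.differentiableAt

private lemma deriv2_mul_aux {u v : ℂ → ℂ} {x : ℂ} (hu : AnalyticAt ℂ u x)
    (hv : AnalyticAt ℂ v x) :
    iteratedDeriv 2 (fun z => u z * v z) x
      = iteratedDeriv 2 u x * v x + 2 * deriv u x * deriv v x + u x * iteratedDeriv 2 v x := by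
  have e0 : iteratedDeriv 2 (fun z => u z * v z) x = deriv (deriv (fun z => u z * v z)) x := by
    rw [iteratedDeriv_succ, iteratedDeriv_one]
  rw [e0, (ev_deriv_mul_aux hu hv).deriv_eq]
  have h1 : HasDerivAt (fun z => deriv u z * v z)
      (deriv (deriv u) x * v x + deriv u x * deriv v x) x :=
    ((analyticAt_deriv_aux hu).differentiableAt.hasDerivAt).mul hv.differentiableAt.hasDerivAt
  have h2 : HasDerivAt (fun z => u z * deriv v z)
      (deriv u x * deriv v x + u x * deriv (deriv v) x) x :=
    (hu.differentiableAt.hasDerivAt).mul (analyticAt_deriv_aux hv).differentiableAt.hasDerivAt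
  have := (h1.add h2).deriv
  rw [show (fun z => deriv u z * v z + u z * deriv v z) = ((fun z => deriv u z * v z) + fun z => u z * deriv v z) from rfl, this]
  rw [show iteratedDeriv 2 u x = deriv (deriv u) x by rw [iteratedDeriv_succ, iteratedDeriv_one],
    show iteratedDeriv 2 v x = deriv (deriv v) x by rw [iteratedDeriv_succ, iteratedDeriv_one]]
  ring

/-- Schwarz–Pick type bounds for the first two Taylor coefficients of a self-map of the
unit disk fixing the origin. -/
private lemma schwarz_pick_aux {ω : ℂ → ℂ} (hd : DifferentiableOn ℂ ω (ball (0:ℂ) 1))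
    (h0 : ω 0 = 0) (hm : Set.MapsTo ω (ball (0:ℂ) 1) (ball (0:ℂ) 1)) :
    ‖deriv ω 0‖ ≤ 1 ∧
      ‖iteratedDeriv 2 ω 0 / 2‖ ≤ 1 - ‖deriv ω 0‖ ^ 2 := by
  have hB0 : ball (0:ℂ) 1 ∈ 𝓝 (0:ℂ) := ball_mem_nhds _ one_pos
  have h0B : (0:ℂ) ∈ ball (0:ℂ) 1 := mem_ball_self one_pos
  set h : ℂ → ℂ := dslope ω 0 with hhdef
  have hhd : DifferentiableOn ℂ h (ball (0:ℂ) 1) :=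
    (Complex.differentiableOn_dslope hB0).mpr hd
  have hm' : Set.MapsTo ω (ball (0:ℂ) 1) (ball (ω 0) 1) := by rwa [h0]
  have hle : ∀ z ∈ ball (0:ℂ) 1, ‖h z‖ ≤ 1 := by
    intro z hz
    have := Complex.norm_dslope_le_div_of_mapsTo_ball hd (hm'.mono_right ball_subset_closedBall) hz
    simpa using this
  have h00 : h 0 = deriv ω 0 := dslope_same ω 0
  -- relate deriv h 0 to the second iterated derivative of ω
  have hωa : AnalyticAt ℂ ω 0 := hd.analyticAt hB0
  obtain ⟨p, hp⟩ := hωa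
  have hh : HasFPowerSeriesAt h p.fslope 0 := hp.has_fpower_series_dslope_fslope
  have hdh0 : deriv h 0 = iteratedDeriv 2 ω 0 / 2 := by
    have e1 := coeff_eq_aux' hh 1
    have e2 := coeff_eq_aux' hp 2
    rw [iteratedDeriv_one, coeff_fslope] at e1
    rw [e1, e2]
    norm_num [Nat.factorial]
  rw [← h00, ← hdh0]
  constructor
  · exact hle 0 h0B
  by_cases hex : ∃ z ∈ ball (0:ℂ) 1, ‖h z‖ = 1
  · obtain ⟨z0, hz0, hz0e⟩ := hex
    have hmax : IsMaxOn (norm ∘ h) (ball (0:ℂ) 1) z0 := by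
      intro z hz
      simp only [Function.comp_apply, Set.mem_setOf_eq, hz0e]
      exact hle z hz
    have hconst := Complex.eqOn_of_isPreconnected_of_isMaxOn_norm
      (convex_ball (0:ℂ) 1).isPreconnected isOpen_ball hhd hz0 hmax
    have hev : h =ᶠ[𝓝 (0:ℂ)] fun _ => h z0 := by
      filter_upwards [hB0] with z hz
      exact hconst hz
    have hd0 : deriv h 0 = 0 := by rw [hev.deriv_eq]; simp
    have haone : ‖h 0‖ = 1 := by
      rw [hconst h0B]; exact hz0e
    rw [hd0, haone]
    simp
  · push_neg at hex
    have hlt : ∀ z ∈ ball (0:ℂ) 1, ‖h z‖ < 1 :=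
      fun z hz => lt_of_le_of_ne (hle z hz) (hex z hz)
    set a : ℂ := h 0 with hadef
    have ha : ‖a‖ < 1 := hlt 0 h0B
    have hden : ∀ z ∈ ball (0:ℂ) 1, (1 : ℂ) - (starRingEnd ℂ) a * h z ≠ 0 := by
      intro z hz heq
      have h1 : ‖(starRingEnd ℂ) a * h z‖ < 1 := by
        rw [norm_mul, Complex.norm_conj]
        have := hlt z hz
        nlinarith [norm_nonneg a, norm_nonneg (h z)]
      have h2 : (starRingEnd ℂ) a * h z = 1 := by
        exact (sub_eq_zero.mp heq).symm
      rw [h2] at h1; simp at h1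
    set ψ : ℂ → ℂ := fun z => (h z - a) / (1 - (starRingEnd ℂ) a * h z) with hψdef
    have hψd : DifferentiableOn ℂ ψ (ball (0:ℂ) 1) := by
      apply DifferentiableOn.div
      · exact hhd.sub (differentiableOn_const a)
      · exact (differentiableOn_const 1).sub ((differentiableOn_const _).mul hhd)
      · exact hden
    have hψ0 : ψ 0 = 0 := by simp [hψdef, ← hadef]
    have hψm : Set.MapsTo ψ (ball (0:ℂ) 1) (ball (0:ℂ) 1) := by
      intro z hz
      rw [mem_ball_zero_iff]
      have hkey : Complex.normSq (1 - (starRingEnd ℂ) a * h z) - Complex.normSq (h z - a)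
          = (1 - Complex.normSq a) * (1 - Complex.normSq (h z)) := by
        simp only [Complex.normSq_apply, Complex.sub_re, Complex.sub_im, Complex.mul_re,
          Complex.mul_im, Complex.one_re, Complex.one_im, Complex.conj_re, Complex.conj_im]
        ring
      have hsa : Complex.normSq a < 1 := by rw [← Complex.sq_norm]; nlinarith [norm_nonneg a]
      have hsh : Complex.normSq (h z) < 1 := by
        rw [← Complex.sq_norm]; nlinarith [norm_nonneg (h z), hlt z hz]
      have hpos : 0 < Complex.normSq (1 - (starRingEnd ℂ) a * h z) - Complex.normSq (h z - a) := by
        rw [hkey]; nlinarith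
      have habs : ‖h z - a‖ < ‖1 - (starRingEnd ℂ) a * h z‖ := by
        have e1 : ‖h z - a‖ ^ 2 < ‖1 - (starRingEnd ℂ) a * h z‖ ^ 2 := by
          rw [Complex.sq_norm, Complex.sq_norm]; linarith
        nlinarith [norm_nonneg (h z - a), norm_nonneg (1 - (starRingEnd ℂ) a * h z)]
      rw [hψdef]
      simp only [norm_div]
      rw [div_lt_one]
      · exact habs
      · exact norm_pos_iff.mpr (hden z hz)
    have hschwarz := Complex.norm_deriv_le_one_of_mapsTo_ball hψd (by rw [hψ0]; exact hψm.mono_right ball_subset_closedBall) one_pos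
    -- compute deriv ψ 0
    have hh0d : DifferentiableAt ℂ h 0 := hhd.differentiableAt hB0
    have hu : HasDerivAt (fun z => h z - a) (deriv h 0) 0 := hh0d.hasDerivAt.sub_const a
    have hv : HasDerivAt (fun z => (1:ℂ) - (starRingEnd ℂ) a * h z)
        (-((starRingEnd ℂ) a * deriv h 0)) 0 := by
      have := (hh0d.hasDerivAt.const_mul ((starRingEnd ℂ) a)).const_sub (1:ℂ)
      simpa using this
    have hv0 : (1:ℂ) - (starRingEnd ℂ) a * h 0 ≠ 0 := hden 0 h0B
    have hdψ : deriv ψ 0 = deriv h 0 / (1 - (starRingEnd ℂ) a * a) := by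
      have := (hu.div hv hv0).deriv
      rw [hψdef]
      rw [show (fun z => (h z - a) / (1 - (starRingEnd ℂ) a * h z)) = ((fun z => h z - a) / fun z => 1 - (starRingEnd ℂ) a * h z) from rfl, this, ← hadef]
      have hne : (1:ℂ) - (starRingEnd ℂ) a * a ≠ 0 := by rw [hadef] at *; exact hv0
      field_simp
      ring
    have hca : (1:ℂ) - (starRingEnd ℂ) a * a = ((1 - Complex.normSq a : ℝ) : ℂ) := by
      rw [mul_comm, Complex.mul_conj]
      push_cast
      ring
    have hnsa : Complex.normSq a < 1 := by rw [← Complex.sq_norm]; nlinarith [norm_nonneg a]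
    have habsden : ‖1 - (starRingEnd ℂ) a * a‖ = 1 - Complex.normSq a := by
      rw [hca, Complex.norm_real, Real.norm_eq_abs, abs_of_pos (by linarith)]
    rw [hdψ, norm_div, habsden, div_le_one (by linarith)] at hschwarz
    rw [← Complex.sq_norm] at hschwarz
    exact hschwarz

theorem stmt_9 (Φ : ℂ → ℂ)
    (hΦa : AnalyticOn ℂ Φ (Metric.ball (0:ℂ) 1)) (hΦi : Set.InjOn Φ (Metric.ball (0:ℂ) 1)) (hΦ0 : Φ 0 = 1) (hΦre : ∀ z ∈ Metric.ball (0:ℂ) 1, 0 < (Φ z).re) (hd1re : 0 < (deriv Φ 0).re) (hd1im : (deriv Φ 0).im = 0)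
    (hd2im : (iteratedDeriv 2 Φ 0).im = 0)
    (hcond1 : 2 * (deriv Φ 0).re - 2 * (deriv Φ 0).re ^ 2 ≤ (iteratedDeriv 2 Φ 0).re)
    (hcond2 : (iteratedDeriv 2 Φ 0).re ≤ 6 * (deriv Φ 0).re ^ 2 - 2 * (deriv Φ 0).re)
    (g : ℂ → ℂ) (b : ℕ → ℂ)
    (hb0 : b 0 = 0) (hb1 : b 1 = 1)
    (hb : ∀ z ∈ Metric.ball (0:ℂ) 1, HasSum (fun n => b n * z ^ n) (g z))
    (hsub : (∃ ω : ℂ → ℂ, AnalyticOn ℂ ω (Metric.ball (0:ℂ) 1) ∧ ω 0 = 0 ∧ (∀ z ∈ Metric.ball (0:ℂ) 1, ω z ∈ Metric.ball (0:ℂ) 1) ∧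
          (∀ z ∈ Metric.ball (0:ℂ) 1, z ≠ 0 → z * deriv g z / g z = Φ (ω z)))) :
    ‖(2 * b 2 ^ 2 * b 3 - 2 * b 2 ^ 2 - b 3 ^ 2 + 1 : ℂ)‖ ≤
      1 + 2 * (deriv Φ 0).re ^ 2 +
        (deriv Φ 0).re ^ 2 / 4 * (3 * (deriv Φ 0).re - (iteratedDeriv 2 Φ 0).re / (2 * (deriv Φ 0).re)) * ((iteratedDeriv 2 Φ 0).re / (2 * (deriv Φ 0).re) + (deriv Φ 0).re) := by
  obtain ⟨ω, hωa, hω0, hωm, hωeq⟩ := hsub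
  have hBo : IsOpen (ball (0:ℂ) 1) := isOpen_ball
  have hB0 : ball (0:ℂ) 1 ∈ 𝓝 (0:ℂ) := ball_mem_nhds _ one_pos
  have h0B : (0:ℂ) ∈ ball (0:ℂ) 1 := mem_ball_self one_pos
  -- power series for g
  set q : FormalMultilinearSeries ℂ ℂ ℂ := FormalMultilinearSeries.ofScalars ℂ b with hqdef
  have hqc : ∀ n, q.coeff n = b n := by
    intro n
    rw [hqdef]
    have h1 := FormalMultilinearSeries.ofScalars_apply_eq (𝕜 := ℂ) (E := ℂ) b 1 n
    simp only [smul_eq_mul, one_pow, mul_one] at h1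
    exact h1
  have hq : HasFPowerSeriesOnBall g q 0 1 := by
    refine ⟨?_, one_pos, ?_⟩
    · refine ENNReal.le_of_forall_nnreal_lt fun r hr => ?_
      have hr1 : (r : ℝ) < 1 := by exact_mod_cast hr
      have hrc : ((r : ℝ) : ℂ) ∈ ball (0:ℂ) 1 := by
        rw [mem_ball_zero_iff, Complex.norm_real, Real.norm_eq_abs,
          _root_.abs_of_nonneg r.coe_nonneg]
        exact hr1
      have hsum := (hb _ hrc).summable
      rw [← summable_norm_iff] at hsum
      apply q.le_radius_of_summable
      refine hsum.congr fun n => ?_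
      rw [norm_mul, norm_pow, Complex.norm_real, Real.norm_eq_abs,
        _root_.abs_of_nonneg r.coe_nonneg, hqdef, FormalMultilinearSeries.ofScalars_norm]
    · intro y hy
      have hy' : y ∈ ball (0:ℂ) 1 := by
        rwa [show (1 : ℝ≥0∞) = ((1:ℝ≥0) : ℝ≥0∞) by norm_num, Metric.emetric_ball_nnreal] at hy
      have := hb y hy'
      rw [zero_add]
      refine HasSum.congr_fun this fun n => ?_
      rw [hqdef, FormalMultilinearSeries.ofScalars_apply_eq]
      simp [smul_eq_mul, mul_comm]
  have hco : ∀ n, iteratedDeriv n g 0 = (Nat.factorial n : ℂ) * b n := fun n => by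
    rw [coeff_eq_aux hq n, hqc n]
  have hg0 : g 0 = 0 := by
    have := hco 0; rw [iteratedDeriv_zero] at this; simpa [hb0] using this
  have hg1 : deriv g 0 = 1 := by
    have := hco 1; rw [iteratedDeriv_one] at this; simpa [hb1] using this
  have hg2 : iteratedDeriv 2 g 0 = 2 * b 2 := by
    have := hco 2; norm_num [Nat.factorial] at this; exact this
  have hg3 : iteratedDeriv 3 g 0 = 6 * b 3 := by
    have := hco 3; norm_num [Nat.factorial] at this; exact this
  -- analyticity
  have hgA : AnalyticAt ℂ g 0 := hq.analyticAt
  have hωd : DifferentiableOn ℂ ω (ball (0:ℂ) 1) := hωa.differentiableOn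
  have hΦd : DifferentiableOn ℂ Φ (ball (0:ℂ) 1) := hΦa.differentiableOn
  have hωN : AnalyticOnNhd ℂ ω (ball (0:ℂ) 1) := hωd.analyticOnNhd hBo
  have hΦN : AnalyticOnNhd ℂ Φ (ball (0:ℂ) 1) := hΦd.analyticOnNhd hBo
  have hωA : AnalyticAt ℂ ω 0 := hωN 0 h0B
  have hΦA0 : AnalyticAt ℂ Φ 0 := hΦN 0 h0B
  set F : ℂ → ℂ := fun z => Φ (ω z) with hFdef
  have hFA : AnalyticAt ℂ F 0 := by
    have h1 : AnalyticAt ℂ Φ (ω 0) := by rw [hω0]; exact hΦA0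
    exact h1.comp hωA
  have hF0 : F 0 = 1 := by rw [hFdef]; simp only; rw [hω0, hΦ0]
  set c1 : ℂ := deriv ω 0 with hc1def
  set c2 : ℂ := iteratedDeriv 2 ω 0 with hc2def
  -- chain rule values
  have hΦdA : AnalyticAt ℂ (deriv Φ) 0 := (hΦN.deriv) 0 h0B
  have hF1 : deriv F 0 = deriv Φ 0 * c1 := by
    have h1 : HasDerivAt ω c1 0 := hωA.differentiableAt.hasDerivAt
    have h2 : HasDerivAt Φ (deriv Φ 0) (ω 0) := by
      rw [hω0]; exact hΦA0.differentiableAt.hasDerivAt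
    exact (h2.comp 0 h1).deriv
  have hEcomp : deriv F =ᶠ[𝓝 (0:ℂ)] fun z => deriv Φ (ω z) * deriv ω z := by
    filter_upwards [hB0] with z hz
    have h1 : HasDerivAt ω (deriv ω z) z := (hωN z hz).differentiableAt.hasDerivAt
    have h2 : HasDerivAt Φ (deriv Φ (ω z)) (ω z) :=
      (hΦN (ω z) (hωm z hz)).differentiableAt.hasDerivAt
    exact (h2.comp z h1).deriv
  have hF2 : iteratedDeriv 2 F 0 = iteratedDeriv 2 Φ 0 * c1 ^ 2 + deriv Φ 0 * c2 := by
    have e0 : iteratedDeriv 2 F 0 = deriv (deriv F) 0 := by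
      rw [iteratedDeriv_succ, iteratedDeriv_one]
    rw [e0, hEcomp.deriv_eq]
    have h1 : HasDerivAt (fun z => deriv Φ (ω z)) (deriv (deriv Φ) 0 * c1) 0 := by
      have ha : HasDerivAt (deriv Φ) (deriv (deriv Φ) 0) (ω 0) := by
        rw [hω0]; exact hΦdA.differentiableAt.hasDerivAt
      exact ha.comp 0 hωA.differentiableAt.hasDerivAt
    have h2 : HasDerivAt (fun z => deriv ω z) c2 0 := by
      have h3 := (analyticAt_deriv_aux hωA).differentiableAt.hasDerivAt
      have h4 : deriv (deriv ω) 0 = c2 := by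
        rw [hc2def, iteratedDeriv_succ, iteratedDeriv_one]
      rwa [h4] at h3
    have := (h1.mul h2).deriv
    rw [show (fun z => deriv Φ (ω z) * deriv ω z) = ((fun z => deriv Φ (ω z)) * fun z => deriv ω z) from rfl, this, hω0]
    rw [show deriv (deriv Φ) 0 = iteratedDeriv 2 Φ 0 by rw [iteratedDeriv_succ, iteratedDeriv_one]]
    ring
  -- the function k = g z / z
  set k : ℂ → ℂ := dslope g 0 with hkdef
  have hpq : HasFPowerSeriesAt g q 0 := hq.hasFPowerSeriesAt
  have hkps : HasFPowerSeriesAt k q.fslope 0 := hpq.has_fpower_series_dslope_fslope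
  have hkA : AnalyticAt ℂ k 0 := hkps.analyticAt
  have hk0 : k 0 = 1 := by rw [hkdef, dslope_same, hg1]
  have hk1 : deriv k 0 = b 2 := by
    have := coeff_eq_aux' hkps 1
    rw [iteratedDeriv_one, coeff_fslope, hqc] at this
    simpa using this
  have hk2 : iteratedDeriv 2 k 0 = 2 * b 3 := by
    have := coeff_eq_aux' hkps 2
    rw [coeff_fslope, hqc] at this
    norm_num [Nat.factorial] at this
    exact this
  -- g z ≠ 0 near 0
  have hne : ∀ᶠ z in 𝓝[≠] (0:ℂ), g z ≠ 0 := by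
    rcases hgA.eventually_eq_zero_or_eventually_ne_zero with h | h
    · exfalso
      have hzero : deriv g 0 = 0 := by
        have hev : g =ᶠ[𝓝 (0:ℂ)] fun _ => 0 := h
        rw [hev.deriv_eq]; simp
      rw [hg1] at hzero; exact one_ne_zero hzero
    · exact h
  -- the fundamental identity deriv g = F * k near 0
  have hEq : (fun z => deriv g z) =ᶠ[𝓝 (0:ℂ)] fun z => F z * k z := by
    have h1 : ∀ᶠ z in 𝓝[≠] (0:ℂ), deriv g z = F z * k z := by
      have h2 : ∀ᶠ z in 𝓝[≠] (0:ℂ), z ∈ ball (0:ℂ) 1 :=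
        eventually_nhdsWithin_of_eventually_nhds (by filter_upwards [hB0] with z hz; exact hz)
      filter_upwards [hne, h2, self_mem_nhdsWithin] with z hgne hzB hz0
      have hz0' : z ≠ 0 := hz0
      have hdiv := hωeq z hzB hz0'
      have hgz : g z = z * k z := by
        have h3 := sub_smul_dslope g 0 z
        rw [hg0, sub_zero, sub_zero, smul_eq_mul] at h3
        rw [← h3, hkdef]
      have h4 : z * deriv g z = F z * g z := by
        rw [div_eq_iff hgne] at hdiv
        rw [hdiv, hFdef]
      rw [hgz] at h4
      apply mul_left_cancel₀ hz0'
      rw [h4]; ring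
    have h0 : deriv g 0 = F 0 * k 0 := by rw [hg1, hF0, hk0]; ring
    have h5 := eventually_nhdsWithin_iff.mp h1
    filter_upwards [h5] with z hz
    by_cases hz0 : z = 0
    · rw [hz0]; exact h0
    · exact hz (Set.mem_compl_singleton_iff.mpr hz0)
  -- coefficient equations
  have e1 : iteratedDeriv 2 g 0 = deriv F 0 * k 0 + F 0 * deriv k 0 := by
    have h1 : deriv (deriv g) 0 = deriv (fun z => F z * k z) 0 := hEq.deriv_eq
    rw [iteratedDeriv_succ, iteratedDeriv_one, h1,
      deriv_fun_mul hFA.differentiableAt hkA.differentiableAt]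
  have e2 : iteratedDeriv 3 g 0 = iteratedDeriv 2 F 0 * k 0 + 2 * deriv F 0 * deriv k 0
      + F 0 * iteratedDeriv 2 k 0 := by
    have h3 : iteratedDeriv 3 g 0 = iteratedDeriv 2 (deriv g) 0 := by
      rw [iteratedDeriv_succ']
    rw [h3, Filter.EventuallyEq.iteratedDeriv_eq 2 hEq, deriv2_mul_aux hFA hkA]
  -- solve for b2, b3
  have hb2 : b 2 = deriv Φ 0 * c1 := by
    rw [hg2, hk0, hF0, hk1] at e1
    have : b 2 = deriv F 0 := by linear_combination e1
    rw [this, hF1]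
  have hb3 : (4 : ℂ) * b 3 = iteratedDeriv 2 Φ 0 * c1 ^ 2 + deriv Φ 0 * c2
      + 2 * (deriv Φ 0 * c1) ^ 2 := by
    rw [hg3, hk0, hF0, hk1, hk2, hF1, hF2, hb2] at e2
    linear_combination e2
  -- real coefficients
  set β1 : ℝ := (deriv Φ 0).re with hβ1def
  set β2 : ℝ := (iteratedDeriv 2 Φ 0).re with hβ2def
  have hB1 : deriv Φ 0 = (β1 : ℂ) := Complex.ext (by simp [hβ1def]) (by simp [hd1im])
  have hB2 : iteratedDeriv 2 Φ 0 = (β2 : ℂ) := Complex.ext (by simp [hβ2def]) (by simp [hd2im])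
  set t : ℝ := β2 / (2 * β1) with htdef
  have hβ1pos : 0 < β1 := hd1re
  have ht : β2 = 2 * β1 * t := by rw [htdef]; field_simp
  have hlam : 1 ≤ t + β1 := by nlinarith [hcond1]
  have hmu : 1 ≤ 3 * β1 - t := by nlinarith [hcond2]
  -- Schwarz-Pick bounds
  obtain ⟨hc1b, hc2b⟩ := schwarz_pick_aux hωd hω0 (fun z hz => hωm z hz)
  rw [← hc1def] at hc1b
  rw [← hc2def, ← hc1def] at hc2b
  set w : ℂ := c2 / 2 with hwdef
  -- key coefficient bound
  have hkey : ∀ r : ℝ, 1 ≤ |r| → ‖w + (r : ℂ) * c1 ^ 2‖ ≤ |r| := by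
    intro r hr
    have h1 : ‖w + (r : ℂ) * c1 ^ 2‖
        ≤ ‖w‖ + |r| * ‖c1‖ ^ 2 := by
      refine (norm_add_le _ _).trans ?_
      rw [norm_mul, norm_pow, Complex.norm_real, Real.norm_eq_abs]
    have h2 : ‖c1‖ ^ 2 ≤ 1 := by
      nlinarith [norm_nonneg c1, hc1b]
    nlinarith [h1, hc2b, mul_nonneg (sub_nonneg.mpr hr) (sub_nonneg.mpr h2)]
  -- expressions for b3 and b3 - 2 b2^2
  have hb3w : b 3 = ((β1 / 2 : ℝ) : ℂ) * (w + ((t + β1 : ℝ) : ℂ) * c1 ^ 2) := by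
    have h6 : (4 : ℂ) * b 3 = (β2 : ℂ) * c1 ^ 2 + (β1 : ℂ) * c2 + 2 * ((β1 : ℂ) * c1) ^ 2 := by
      rw [hb3, hB1, hB2]
    rw [hwdef]
    have hβ2c : (β2 : ℂ) = 2 * (β1 : ℂ) * (t : ℂ) := by exact_mod_cast congrArg Complex.ofReal ht
    push_cast
    push_cast at h6
    linear_combination (1/4 : ℂ) * h6 + (1/4 : ℂ) * c1 ^ 2 * hβ2c
  have hb3w2 : b 3 - 2 * b 2 ^ 2 = ((β1 / 2 : ℝ) : ℂ) * (w + ((t - 3 * β1 : ℝ) : ℂ) * c1 ^ 2) := by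
    have h6 : (4 : ℂ) * b 3 = (β2 : ℂ) * c1 ^ 2 + (β1 : ℂ) * c2 + 2 * ((β1 : ℂ) * c1) ^ 2 := by
      rw [hb3, hB1, hB2]
    have h7 : b 2 = (β1 : ℂ) * c1 := by rw [hb2, hB1]
    rw [hwdef]
    have hβ2c : (β2 : ℂ) = 2 * (β1 : ℂ) * (t : ℂ) := by exact_mod_cast congrArg Complex.ofReal ht
    push_cast
    push_cast at h6 h7
    linear_combination (1/4 : ℂ) * h6 + (1/4 : ℂ) * c1 ^ 2 * hβ2c
      - (2 * b 2 + 2 * (β1:ℂ) * c1) * h7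
  -- bounds on |b3| and |b3 - 2 b2^2|
  have habs3 : ‖b 3‖ ≤ β1 / 2 * (t + β1) := by
    rw [hb3w, norm_mul, Complex.norm_real, Real.norm_eq_abs, abs_of_pos (by linarith : (0:ℝ) < β1 / 2)]
    have h8 := hkey (t + β1) (by rw [abs_of_pos (by linarith)]; exact hlam)
    rw [abs_of_pos (by linarith : (0:ℝ) < t + β1)] at h8
    have h9 : (0:ℝ) < β1 / 2 := by linarith
    nlinarith [norm_nonneg (w + ((t + β1 : ℝ) : ℂ) * c1 ^ 2)]
  have habs32 : ‖b 3 - 2 * b 2 ^ 2‖ ≤ β1 / 2 * (3 * β1 - t) := by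
    rw [hb3w2, norm_mul, Complex.norm_real, Real.norm_eq_abs, abs_of_pos (by linarith : (0:ℝ) < β1 / 2)]
    have h8 := hkey (t - 3 * β1) (by rw [abs_of_neg (by linarith)]; linarith)
    rw [abs_of_neg (by linarith : t - 3 * β1 < 0)] at h8
    nlinarith [norm_nonneg (w + ((t - 3 * β1 : ℝ) : ℂ) * c1 ^ 2)]
  -- final assembly
  have hfactor : 2 * b 2 ^ 2 * b 3 - 2 * b 2 ^ 2 - b 3 ^ 2 + 1
      = (1 - b 3) * (1 + (b 3 - 2 * b 2 ^ 2)) := by ring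
  rw [hfactor, norm_mul]
  have hA : ‖1 - b 3‖ ≤ 1 + β1 / 2 * (t + β1) := by
    have h10 : ‖1 - b 3‖ ≤ 1 + ‖b 3‖ := by
      simpa using norm_sub_le (1 : ℂ) (b 3)
    linarith
  have hB : ‖1 + (b 3 - 2 * b 2 ^ 2)‖ ≤ 1 + β1 / 2 * (3 * β1 - t) := by
    have h10 : ‖1 + (b 3 - 2 * b 2 ^ 2)‖ ≤ 1 + ‖b 3 - 2 * b 2 ^ 2‖ := by
      simpa using norm_add_le (1 : ℂ) (b 3 - 2 * b 2 ^ 2)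
    linarith
  have hApos : (0:ℝ) ≤ 1 + β1 / 2 * (t + β1) := by nlinarith
  have hfin : ‖1 - b 3‖ * ‖1 + (b 3 - 2 * b 2 ^ 2)‖
      ≤ (1 + β1 / 2 * (t + β1)) * (1 + β1 / 2 * (3 * β1 - t)) := by
    apply mul_le_mul hA hB (norm_nonneg _) hApos
  refine hfin.trans ?_
  have : (1 + β1 / 2 * (t + β1)) * (1 + β1 / 2 * (3 * β1 - t))
      = 1 + 2 * β1 ^ 2 + β1 ^ 2 / 4 * (3 * β1 - t) * (t + β1) := by ring
  rw [this]
end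

section
/- Let Φ be a biholomorphic function on the unit disk with Φ(0)=1, Φ'(0) > 0, Φ''(0) ∈ ℝ, and 6Φ'(0)^2 - Φ''(0) ≥ 2Φ'(0). If g(z) = z + b_2 z^2 + b_3 z^3 + ... satisfies z g'(z)/g(z) ≺ Φ, then |b_3 - 2b_2^2| ≤ (Φ'(0)/2)(3Φ'(0) - Φ''(0)/(2Φ'(0))). -/
open Complex Metric Set Filter Topology Function

private lemma analyticAt_deriv' {f : ℂ → ℂ} {x : ℂ} (h : AnalyticAt ℂ f x) :
    AnalyticAt ℂ (deriv f) x := by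
  obtain ⟨s, hs, h⟩ := h.exists_mem_nhds_analyticOnNhd
  exact h.deriv x (mem_of_mem_nhds hs)

private lemma iteratedDeriv_coeff {f : ℂ → ℂ} {p : FormalMultilinearSeries ℂ ℂ ℂ}
    (h : HasFPowerSeriesAt f p 0) (n : ℕ) :
    iteratedDeriv n f 0 = (n.factorial : ℂ) * p.coeff n := by
  obtain ⟨r, hr⟩ := h
  have h2 := hr.factorial_smul (1 : ℂ) n
  rw [iteratedDeriv_eq_iteratedFDeriv, ← h2]
  have : p n (fun _ => (1:ℂ)) = p.coeff n := rfl
  rw [this, nsmul_eq_mul]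

private lemma hasFPS_ofScalars {g : ℂ → ℂ} {b : ℕ → ℂ}
    (hb : ∀ z ∈ Metric.ball (0:ℂ) 1, HasSum (fun n => b n * z ^ n) (g z)) :
    HasFPowerSeriesAt g (FormalMultilinearSeries.ofScalars ℂ b) 0 := by
  rw [hasFPowerSeriesAt_iff]
  filter_upwards [ball_mem_nhds (0:ℂ) one_pos] with z hz
  have : (fun n => z ^ n • (FormalMultilinearSeries.ofScalars ℂ b).coeff n)
      = fun n => b n * z ^ n := by
    funext n
    simp [FormalMultilinearSeries.coeff, FormalMultilinearSeries.ofScalars, smul_eq_mul, Pi.one_def]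
    ring
  rw [this, zero_add]
  exact hb z hz


private lemma schwarzPick_zero {φ : ℂ → ℂ} (hd : DifferentiableOn ℂ φ (ball 0 1))
    (hm : ∀ z ∈ Metric.ball (0:ℂ) 1, ‖φ z‖ ≤ 1) :
    ‖deriv φ 0‖ ≤ 1 - ‖φ 0‖ ^ 2 := by
  have h0 : (0:ℂ) ∈ ball (0:ℂ) 1 := mem_ball_self one_pos
  set a := φ 0 with ha
  have ha1 : ‖a‖ ≤ 1 := hm 0 h0
  rcases eq_or_lt_of_le ha1 with heq | hlt
  · -- |φ 0| = 1 : maximum modulus ⇒ constant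
    have hmax : IsMaxOn (norm ∘ φ) (ball (0:ℂ) 1) 0 := by
      intro z hz
      simpa [← heq] using hm z hz
    have hconst : EqOn φ (const ℂ a) (ball (0:ℂ) 1) :=
      Complex.eqOn_of_isPreconnected_of_isMaxOn_norm (convex_ball _ _).isPreconnected
        isOpen_ball hd h0 hmax
    have : deriv φ 0 = 0 := by
      have h1 : φ =ᶠ[𝓝 (0:ℂ)] const ℂ a :=
        Filter.eventuallyEq_of_mem (ball_mem_nhds _ one_pos) hconst
      rw [h1.deriv_eq]
      exact deriv_const _ _
    rw [this, norm_zero, heq]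
    norm_num
  · -- |φ 0| < 1 : Möbius trick
    set ψ := fun z => (φ z - a) / (1 - (starRingEnd ℂ) a * φ z) with hψ
    have hden : ∀ z ∈ ball (0:ℂ) 1, 1 - (starRingEnd ℂ) a * φ z ≠ 0 := by
      intro z hz h
      have h1 : (1:ℂ) = (starRingEnd ℂ) a * φ z := by linear_combination h
      have := congrArg (fun w : ℂ => ‖w‖) h1
      simp only [norm_one, norm_mul, Complex.norm_conj] at this
      have h2 : ‖a‖ * ‖φ z‖ ≤ ‖a‖ * 1 := by
        apply mul_le_mul_of_nonneg_left (hm z hz) (norm_nonneg a)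
      rw [← this] at h2
      simp only [mul_one] at h2
      exact absurd h2 (not_le.mpr hlt)
    have hψd : DifferentiableOn ℂ ψ (ball (0:ℂ) 1) := by
      apply DifferentiableOn.div (hd.sub_const a)
      · exact (differentiableOn_const _).sub ((differentiableOn_const _).mul hd)
      · exact hden
    have hψ0 : ψ 0 = 0 := by simp [hψ, ← ha]
    have hψm : ∀ z ∈ ball (0:ℂ) 1, ‖ψ z‖ ≤ 1 := by
      intro z hz
      have key : ‖φ z - a‖ ≤ ‖1 - (starRingEnd ℂ) a * φ z‖ := by
        set u := φ z
        have hu : ‖u‖ ≤ 1 := hm z hz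
        have h1 : Complex.normSq (1 - (starRingEnd ℂ) a * u) - Complex.normSq (u - a)
            = (1 - Complex.normSq a) * (1 - Complex.normSq u) := by
          simp only [Complex.normSq_apply, Complex.sub_re, Complex.sub_im, Complex.mul_re,
            Complex.mul_im, Complex.conj_re, Complex.conj_im, Complex.one_re, Complex.one_im]
          ring
        have hna : Complex.normSq a = ‖a‖ ^ 2 := by rw [Complex.normSq_eq_norm_sq]
        have hnu : Complex.normSq u = ‖u‖ ^ 2 := by rw [Complex.normSq_eq_norm_sq]
        rw [hna, hnu] at h1
        have ha2 : ‖a‖ ^ 2 ≤ 1 := by nlinarith [norm_nonneg a]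
        have hu2 : ‖u‖ ^ 2 ≤ 1 := by nlinarith [norm_nonneg u]
        have h2 : Complex.normSq (u - a) ≤ Complex.normSq (1 - (starRingEnd ℂ) a * u) := by
          nlinarith [h1, ha2, hu2]
        calc ‖u - a‖ = Real.sqrt (Complex.normSq (u - a)) := by
              rw [Complex.norm_def]
          _ ≤ Real.sqrt (Complex.normSq (1 - (starRingEnd ℂ) a * u)) := Real.sqrt_le_sqrt h2
          _ = ‖1 - (starRingEnd ℂ) a * u‖ := by rw [Complex.norm_def]
      rw [hψ]
      simp only [norm_div]
      rw [div_le_one (norm_pos_iff.mpr (hden z hz))]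
      exact key
    have hψderiv : ‖deriv ψ 0‖ ≤ 1 := by
      have h1 : ∀ ε : ℝ, 0 < ε → ‖deriv ψ 0‖ ≤ 1 + ε := by
        intro ε hε
        have hmaps : MapsTo ψ (ball (0:ℂ) 1) (ball (ψ 0) (1 + ε)) := by
          intro z hz
          rw [mem_ball, dist_eq_norm, hψ0, sub_zero]
          exact lt_of_le_of_lt (hψm z hz) (by linarith)
        have := Complex.norm_deriv_le_div_of_mapsTo_ball hψd (hmaps.mono_right ball_subset_closedBall) one_pos
        simpa using this
      linarith [le_of_forall_pos_le_add (fun ε hε => h1 ε hε)]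
    -- product rule identity
    have hφ0d : DifferentiableAt ℂ φ 0 := hd.differentiableAt (ball_mem_nhds _ one_pos)
    have hψ0d : DifferentiableAt ℂ ψ 0 := hψd.differentiableAt (ball_mem_nhds _ one_pos)
    have hEq : (fun z => ψ z * (1 - (starRingEnd ℂ) a * φ z)) =ᶠ[𝓝 (0:ℂ)]
        (fun z => φ z - a) := by
      filter_upwards [ball_mem_nhds (0:ℂ) one_pos] with z hz
      rw [hψ]
      exact div_mul_cancel₀ _ (hden z hz)
    have hD1 : deriv (fun z => ψ z * (1 - (starRingEnd ℂ) a * φ z)) 0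
        = deriv φ 0 := by
      rw [hEq.deriv_eq]
      simp [deriv_sub_const]
    have hd2 : DifferentiableAt ℂ (fun z => 1 - (starRingEnd ℂ) a * φ z) 0 :=
      (differentiableAt_const _).sub ((differentiableAt_const _).mul hφ0d)
    rw [deriv_fun_mul hψ0d hd2, hψ0] at hD1
    simp only [mul_zero, zero_mul, add_zero] at hD1
    -- hD1 : deriv ψ 0 * (1 - conj a * φ 0) = deriv φ 0
    have hval : ‖(1:ℂ) - (starRingEnd ℂ) a * a‖ = 1 - ‖a‖ ^ 2 := by
      have : (1:ℂ) - (starRingEnd ℂ) a * a = ((1 - Complex.normSq a : ℝ) : ℂ) := by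
        rw [mul_comm, Complex.mul_conj]
        push_cast
        ring
      have hna : Complex.normSq a = ‖a‖ ^ 2 := by rw [Complex.normSq_eq_norm_sq]
      have ha2 : (0:ℝ) ≤ 1 - ‖a‖ ^ 2 := by nlinarith [norm_nonneg a, ha1]
      rw [this, hna, Complex.norm_real, Real.norm_eq_abs, _root_.abs_of_nonneg ha2]
    have ha2 : (0:ℝ) ≤ 1 - ‖a‖ ^ 2 := by nlinarith [norm_nonneg a, ha1]
    rw [← hD1, norm_mul, ← ha, hval]
    nlinarith [hψderiv, ha2, norm_nonneg (deriv ψ 0)]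


private lemma final_bound {x y : ℝ} (hx : 0 < x) (hcond : 2*x ≤ 6*x^2 - y)
    {w1 w2 : ℂ} (hw1 : ‖w1‖ ≤ 1) (hw2 : ‖w2‖ ≤ 1 - ‖w1‖^2) :
    ‖(x:ℂ)/2 * w2 + ((y:ℂ)/4 - 3*(x:ℂ)^2/2) * w1^2‖ ≤ x/2 * (3*x - y/(2*x)) := by
  have hyle : y/4 - 3*x^2/2 ≤ 0 := by nlinarith
  have e1 : ‖(x:ℂ)/2 * w2‖ = x/2 * ‖w2‖ := by
    rw [norm_mul]
    congr 1
    rw [show ((x:ℂ)/2) = ((x/2 : ℝ):ℂ) by push_cast; ring, Complex.norm_real,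
      Real.norm_eq_abs, _root_.abs_of_nonneg (by positivity)]
  have e2 : ‖((y:ℂ)/4 - 3*(x:ℂ)^2/2) * w1^2‖ = (3*x^2/2 - y/4) * ‖w1‖^2 := by
    rw [norm_mul, norm_pow]
    congr 1
    rw [show ((y:ℂ)/4 - 3*(x:ℂ)^2/2) = ((y/4 - 3*x^2/2 : ℝ):ℂ) by push_cast; ring,
      Complex.norm_real, Real.norm_eq_abs, _root_.abs_of_nonpos hyle]
    ring
  have ht1 : ‖w1‖^2 ≤ 1 := by nlinarith [norm_nonneg w1]
  have hrhs : x/2 * (3*x - y/(2*x)) = 3*x^2/2 - y/4 := by field_simp; ring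
  rw [hrhs]
  calc ‖(x:ℂ)/2 * w2 + ((y:ℂ)/4 - 3*(x:ℂ)^2/2) * w1^2‖
      ≤ ‖(x:ℂ)/2 * w2‖ + ‖((y:ℂ)/4 - 3*(x:ℂ)^2/2) * w1^2‖ := norm_add_le _ _
    _ = x/2 * ‖w2‖ + (3*x^2/2 - y/4) * ‖w1‖^2 := by rw [e1, e2]
    _ ≤ 3*x^2/2 - y/4 := by
        nlinarith [mul_nonneg (by nlinarith : (0:ℝ) ≤ 3*x^2/2 - y/4 - x/2)
            (by linarith : (0:ℝ) ≤ 1 - ‖w1‖^2),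
          mul_nonneg (by linarith : (0:ℝ) ≤ x/2)
            (by linarith : (0:ℝ) ≤ 1 - ‖w1‖^2 - ‖w2‖)]


theorem stmt_12 (Φ : ℂ → ℂ)
    (hΦa : AnalyticOn ℂ Φ (Metric.ball (0:ℂ) 1)) (hΦi : Set.InjOn Φ (Metric.ball (0:ℂ) 1)) (hΦ0 : Φ 0 = 1) (hd1re : 0 < (deriv Φ 0).re) (hd1im : (deriv Φ 0).im = 0)
    (hd2im : (iteratedDeriv 2 Φ 0).im = 0)
    (hcond : 2 * (deriv Φ 0).re ≤ 6 * (deriv Φ 0).re ^ 2 - (iteratedDeriv 2 Φ 0).re)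
    (g : ℂ → ℂ) (b : ℕ → ℂ)
    (hb0 : b 0 = 0) (hb1 : b 1 = 1)
    (hb : ∀ z ∈ Metric.ball (0:ℂ) 1, HasSum (fun n => b n * z ^ n) (g z))
    (hsub : (∃ ω : ℂ → ℂ, AnalyticOn ℂ ω (Metric.ball (0:ℂ) 1) ∧ ω 0 = 0 ∧ (∀ z ∈ Metric.ball (0:ℂ) 1, ω z ∈ Metric.ball (0:ℂ) 1) ∧
          (∀ z ∈ Metric.ball (0:ℂ) 1, z ≠ 0 → z * deriv g z / g z = Φ (ω z)))) :
    ‖b 3 - 2 * b 2 ^ 2‖ ≤ (deriv Φ 0).re / 2 * (3 * (deriv Φ 0).re - (iteratedDeriv 2 Φ 0).re / (2 * (deriv Φ 0).re)) := by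
  obtain ⟨ω, hωa, hω0, hωm, heqn⟩ := hsub
  have hball : Metric.ball (0:ℂ) 1 ∈ 𝓝 (0:ℂ) := ball_mem_nhds _ one_pos
  have h01 : (0:ℂ) ∈ ball (0:ℂ) 1 := mem_ball_self one_pos
  have hΦa' : AnalyticOnNhd ℂ Φ (ball (0:ℂ) 1) := isOpen_ball.analyticOn_iff_analyticOnNhd.mp hΦa
  have hωa' : AnalyticOnNhd ℂ ω (ball (0:ℂ) 1) := isOpen_ball.analyticOn_iff_analyticOnNhd.mp hωa
  -- power series of g
  have hg_series : HasFPowerSeriesAt g (FormalMultilinearSeries.ofScalars ℂ b) 0 :=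
    hasFPS_ofScalars hb
  set p := FormalMultilinearSeries.ofScalars ℂ b with hpdef
  have hpc : ∀ n, p.coeff n = b n := fun n => by
    simp [hpdef, FormalMultilinearSeries.coeff, FormalMultilinearSeries.ofScalars,
      smul_eq_mul, Pi.one_def]
  have hg0 : g 0 = 0 := by
    have h := hg_series.coeff_zero (fun _ => (1:ℂ))
    have h2 : p 0 (fun _ => (1:ℂ)) = p.coeff 0 := rfl
    rw [h2, hpc 0, hb0] at h
    exact h.symm
  have hdg0 : deriv g 0 = 1 := by
    have h := hg_series.deriv
    have h2 : p 1 (fun _ => (1:ℂ)) = p.coeff 1 := rfl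
    rw [h2, hpc 1, hb1] at h
    exact h
  have e2fun : ∀ f : ℂ → ℂ, iteratedDeriv 2 f = deriv (deriv f) := by
    intro f
    rw [show (2:ℕ) = 1 + 1 from rfl, iteratedDeriv_succ, iteratedDeriv_one]
  have e3fun : ∀ f : ℂ → ℂ, iteratedDeriv 3 f = deriv (deriv (deriv f)) := by
    intro f
    rw [show (3:ℕ) = 2 + 1 from rfl, iteratedDeriv_succ, e2fun]
  have hd2g0 : deriv (deriv g) 0 = 2 * b 2 := by
    have h := iteratedDeriv_coeff hg_series 2
    rw [e2fun, hpc 2] at h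
    rw [h]
    norm_num [Nat.factorial]
  have hd3g0 : deriv (deriv (deriv g)) 0 = 6 * b 3 := by
    have h := iteratedDeriv_coeff hg_series 3
    rw [e3fun, hpc 3] at h
    rw [h]
    norm_num [Nat.factorial]
  -- power series of ω ; Schwarz--Pick
  obtain ⟨q, hq⟩ := hωa' 0 h01
  have hqz : q.coeff 0 = 0 := by
    have h := hq.coeff_zero (fun _ => (1:ℂ))
    have h2 : q 0 (fun _ => (1:ℂ)) = q.coeff 0 := rfl
    rw [h2, hω0] at h
    exact h
  have hu1 : deriv ω 0 = q.coeff 1 := hq.deriv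
  have hu2 : deriv (deriv ω) 0 = 2 * q.coeff 2 := by
    have h := iteratedDeriv_coeff hq 2
    rw [e2fun] at h
    rw [h]
    norm_num [Nat.factorial]
  have hωdiff : DifferentiableOn ℂ ω (ball (0:ℂ) 1) :=
    fun z hz => ((hωa' z hz).differentiableAt).differentiableWithinAt
  have hφd : DifferentiableOn ℂ (dslope ω 0) (ball (0:ℂ) 1) :=
    (differentiableOn_dslope hball).mpr hωdiff
  have hφbound : ∀ z ∈ ball (0:ℂ) 1, ‖dslope ω 0 z‖ ≤ 1 := by
    intro z hz
    have hmaps : MapsTo ω (ball (0:ℂ) 1) (ball (ω 0) 1) := by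
      rw [hω0]; exact fun w hw => hωm w hw
    have h := Complex.norm_dslope_le_div_of_mapsTo_ball hωdiff (hmaps.mono_right ball_subset_closedBall) hz
    simpa using h
  have hφ0 : dslope ω 0 0 = q.coeff 1 := by rw [dslope_same]; exact hq.deriv
  have hφq : HasFPowerSeriesAt (dslope ω 0) q.fslope 0 := hq.has_fpower_series_dslope_fslope
  have hdφ0 : deriv (dslope ω 0) 0 = q.coeff 2 := by
    have h := hφq.deriv
    have h2 : q.fslope 1 (fun _ => (1:ℂ)) = q.fslope.coeff 1 := rfl
    rw [h2, FormalMultilinearSeries.coeff_fslope] at h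
    exact h
  have hw1 : ‖q.coeff 1‖ ≤ 1 := by rw [← hφ0]; exact hφbound 0 h01
  have hw2 : ‖q.coeff 2‖ ≤ 1 - ‖q.coeff 1‖^2 := by
    have h := schwarzPick_zero hφd hφbound
    rwa [hdφ0, hφ0] at h
  -- the composed function F
  set F := fun z => Φ (ω z) with hFdef
  have hFa : ∀ z ∈ ball (0:ℂ) 1, AnalyticAt ℂ F z :=
    fun z hz => (hΦa' _ (hωm z hz)).comp (hωa' z hz)
  have hF0 : F 0 = 1 := by rw [hFdef]; simp only [hω0, hΦ0]
  have hΦd0 : DifferentiableAt ℂ Φ 0 := (hΦa' 0 h01).differentiableAt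
  have hωd0 : DifferentiableAt ℂ ω 0 := (hωa' 0 h01).differentiableAt
  have hcompF : F = Φ ∘ ω := rfl
  have hΦdω : DifferentiableAt ℂ Φ (ω 0) := by rwa [hω0]
  have hdF0 : deriv F 0 = deriv Φ 0 * q.coeff 1 := by
    rw [hcompF, deriv_comp 0 hΦdω hωd0, hω0, hu1]
  have hDF : deriv F =ᶠ[𝓝 (0:ℂ)] fun z => deriv Φ (ω z) * deriv ω z := by
    filter_upwards [hball] with z hz
    rw [hcompF]
    exact deriv_comp z ((hΦa' _ (hωm z hz)).differentiableAt) ((hωa' z hz)).differentiableAt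
  have hΦ1a : AnalyticAt ℂ (deriv Φ) 0 := analyticAt_deriv' (hΦa' 0 h01)
  have hAd : DifferentiableAt ℂ (fun z => deriv Φ (ω z)) 0 := by
    have hΦ1dω : DifferentiableAt ℂ (deriv Φ) (ω 0) := by rw [hω0]; exact hΦ1a.differentiableAt
    exact DifferentiableAt.comp 0 hΦ1dω hωd0
  have hωda : AnalyticAt ℂ ω 0 := hωa' 0 h01
  have hω1a : AnalyticAt ℂ (deriv ω) 0 := analyticAt_deriv' hωda
  have hd2F0 : deriv (deriv F) 0
      = iteratedDeriv 2 Φ 0 * q.coeff 1 ^ 2 + deriv Φ 0 * (2 * q.coeff 2) := by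
    rw [hDF.deriv_eq, deriv_fun_mul hAd hω1a.differentiableAt]
    have hΦ1dω : DifferentiableAt ℂ (deriv Φ) (ω 0) := by rw [hω0]; exact hΦ1a.differentiableAt
    have h1 : deriv (fun z => deriv Φ (ω z)) 0 = deriv (deriv Φ) (ω 0) * deriv ω 0 :=
      deriv_comp 0 hΦ1dω hωd0
    rw [h1, hω0, hu1, hu2, e2fun]
    ring
  -- the functional equation
  have hga : AnalyticAt ℂ g 0 := hg_series.analyticAt
  have hgE : ∀ᶠ z in 𝓝 (0:ℂ), AnalyticAt ℂ g z := hga.eventually_analyticAt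
  have hFE : ∀ᶠ z in 𝓝 (0:ℂ), AnalyticAt ℂ F z := eventually_of_mem hball hFa
  have hne : ∀ᶠ z in 𝓝[≠] (0:ℂ), g z ≠ 0 := by
    rcases hga.eventually_eq_zero_or_eventually_ne_zero with h | h
    · exfalso
      have h' : g =ᶠ[𝓝 (0:ℂ)] (fun _ : ℂ => (0:ℂ)) := h
      have h2 : deriv g 0 = deriv (fun _ : ℂ => (0:ℂ)) 0 := h'.deriv.eq_of_nhds
      rw [deriv_const] at h2
      rw [hdg0] at h2
      exact one_ne_zero h2
    · exact h
  have E1 : (fun z => z * deriv g z) =ᶠ[𝓝 (0:ℂ)] fun z => g z * F z := by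
    have h1 : ∀ᶠ z in 𝓝[≠] (0:ℂ), z * deriv g z = g z * F z := by
      have hb' : ∀ᶠ z in 𝓝[≠] (0:ℂ), z ∈ ball (0:ℂ) 1 :=
        Filter.Eventually.filter_mono nhdsWithin_le_nhds (eventually_of_mem hball fun z h => h)
      filter_upwards [hne, hb', self_mem_nhdsWithin] with z hgz hzb hz0
      have h := heqn z hzb hz0
      rw [div_eq_iff hgz] at h
      rw [h]; ring
    have h2 := eventually_nhdsWithin_iff.mp h1
    filter_upwards [h2] with z hz
    by_cases h : z = 0
    · subst h; simp [hg0]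
    · exact hz h
  have E5 : (fun z => deriv g z + z * deriv (deriv g) z) =ᶠ[𝓝 (0:ℂ)]
      (fun z => deriv g z * F z + g z * deriv F z) := by
    filter_upwards [E1.deriv, hgE, hFE] with z hdz hgz hFz
    rw [deriv_fun_mul differentiableAt_fun_id ((analyticAt_deriv' hgz).differentiableAt),
      deriv_fun_mul hgz.differentiableAt hFz.differentiableAt, deriv_id'', one_mul] at hdz
    exact hdz
  have E7 : (fun z => 2 * deriv (deriv g) z + z * deriv (deriv (deriv g)) z) =ᶠ[𝓝 (0:ℂ)]
      (fun z => deriv (deriv g) z * F z + deriv g z * deriv F z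
        + (deriv g z * deriv F z + g z * deriv (deriv F) z)) := by
    filter_upwards [E5.deriv, hgE, hFE] with z hdz hgz hFz
    have hg1 := analyticAt_deriv' hgz
    have hg2 := analyticAt_deriv' hg1
    have hF1 := analyticAt_deriv' hFz
    rw [deriv_fun_add hg1.differentiableAt (differentiableAt_fun_id.fun_mul hg2.differentiableAt),
      deriv_fun_mul differentiableAt_fun_id hg2.differentiableAt, deriv_id'', one_mul,
      deriv_fun_add (hg1.differentiableAt.fun_mul hFz.differentiableAt)
        (hgz.differentiableAt.fun_mul hF1.differentiableAt),
      deriv_fun_mul hg1.differentiableAt hFz.differentiableAt,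
      deriv_fun_mul hgz.differentiableAt hF1.differentiableAt] at hdz
    rw [show (2:ℂ) * deriv (deriv g) z + z * deriv (deriv (deriv g)) z
        = deriv (deriv g) z + (deriv (deriv g) z + z * deriv (deriv (deriv g)) z) by ring]
    rw [hdz]
  -- second-order coefficient identity
  have eq2 := E7.eq_of_nhds
  simp only [hg0, hdg0, hd2g0, hF0, hdF0, zero_mul, mul_zero, mul_one, one_mul, add_zero] at eq2
  -- eq2 : 2*(2*b 2) + 0*... = 2*b 2 + dΦ*w1 + (dΦ*w1 + 0)
  have hb2 : b 2 = deriv Φ 0 * q.coeff 1 := by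
    have : (2:ℂ) * (2 * b 2) = 2 * b 2 + deriv Φ 0 * q.coeff 1
        + (deriv Φ 0 * q.coeff 1) := by linear_combination eq2
    linear_combination this / 2
  -- third-order coefficient identity
  have hg1a := analyticAt_deriv' hga
  have hg2a := analyticAt_deriv' hg1a
  have hg3a := analyticAt_deriv' hg2a
  have hF0a : AnalyticAt ℂ F 0 := hFa 0 h01
  have hF1a := analyticAt_deriv' hF0a
  have hF2a := analyticAt_deriv' hF1a
  have eq3 := E7.deriv.eq_of_nhds
  have hL : deriv (fun z => 2 * deriv (deriv g) z + z * deriv (deriv (deriv g)) z) 0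
      = 3 * deriv (deriv (deriv g)) 0 := by
    rw [deriv_fun_add (hg2a.differentiableAt.const_mul 2)
        (differentiableAt_fun_id.fun_mul hg3a.differentiableAt),
      deriv_const_mul 2 hg2a.differentiableAt,
      deriv_fun_mul differentiableAt_fun_id hg3a.differentiableAt, deriv_id'', one_mul]
    simp only [mul_zero, zero_mul, add_zero]
    try ring
  have hR : deriv (fun z => deriv (deriv g) z * F z + deriv g z * deriv F z
        + (deriv g z * deriv F z + g z * deriv (deriv F) z)) 0
      = deriv (deriv (deriv g)) 0 * F 0 + deriv (deriv g) 0 * deriv F 0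
        + (deriv (deriv g) 0 * deriv F 0 + deriv g 0 * deriv (deriv F) 0)
        + (deriv (deriv g) 0 * deriv F 0 + deriv g 0 * deriv (deriv F) 0
          + (deriv g 0 * deriv (deriv F) 0 + g 0 * deriv (deriv (deriv F)) 0)) := by
    rw [deriv_fun_add
        ((hg2a.differentiableAt.fun_mul hF0a.differentiableAt).fun_add
          (hg1a.differentiableAt.fun_mul hF1a.differentiableAt))
        ((hg1a.differentiableAt.fun_mul hF1a.differentiableAt).fun_add
          (hga.differentiableAt.fun_mul hF2a.differentiableAt)),
      deriv_fun_add (hg2a.differentiableAt.fun_mul hF0a.differentiableAt)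
        (hg1a.differentiableAt.fun_mul hF1a.differentiableAt),
      deriv_fun_add (hg1a.differentiableAt.fun_mul hF1a.differentiableAt)
        (hga.differentiableAt.fun_mul hF2a.differentiableAt),
      deriv_fun_mul hg2a.differentiableAt hF0a.differentiableAt,
      deriv_fun_mul hg1a.differentiableAt hF1a.differentiableAt,
      deriv_fun_mul hga.differentiableAt hF2a.differentiableAt]
    try ring
  rw [hL, hR] at eq3
  rw [hg0, hdg0, hd2g0, hd3g0, hF0, hdF0, hd2F0] at eq3
  -- eq3 : 3*(6*b 3) = 6*b 3 * 1 + 2*b 2*(dΦ*w1) + (2*b2*(dΦ*w1) + 1*(d2Φ w1² + dΦ*2w2)) + ...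
  -- final computation
  set x := (deriv Φ 0).re with hxdef
  set y := (iteratedDeriv 2 Φ 0).re with hydef
  have hd1 : deriv Φ 0 = (x:ℂ) := Complex.ext (by simp [hxdef]) (by simp [hd1im])
  have hd2 : iteratedDeriv 2 Φ 0 = (y:ℂ) := Complex.ext (by simp [hydef]) (by simp [hd2im])
  have hkey : b 3 - 2 * b 2 ^ 2
      = (x:ℂ)/2 * q.coeff 2 + ((y:ℂ)/4 - 3*(x:ℂ)^2/2) * (q.coeff 1)^2 := by
    rw [hd1] at hb2
    rw [hd1, hd2] at eq3
    rw [hb2] at eq3 ⊢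
    linear_combination (1/12 : ℂ) * eq3
  rw [hkey]
  exact final_bound hd1re hcond hw1 hw2
end
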